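/- arXiv:1109.4860 — 10 statements merged into one kernel-verified Lean document; each statement's English description precedes it below -/
import Mathlib

section
/- If the component lifetimes X_1,…,X_n are exchangeable (the joint law of (X_{σ(1)},…,X_{σ(n)}) equals that of (X_1,…,X_n) for every permutation σ of [n]) and have no ties, then for every j ∈ [n] and every A ⊆ [n]\{j} one has q_j(A) = 1/(n·C(n−1,|A|)), where C denotes the binomial coefficient. -/
open MeasureTheory ProbabilityTheory Finset
open scoped ENNReal

namespace BPaux

variable {n : ℕ}

/-- The rank-pattern set in path space. -/
def S (j : Fin n) (A : Finset (Fin n)) : Set (Fin n → ℝ) :=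
  {f | (∀ i, i ∉ A → i ≠ j → f i < f j) ∧ ∀ i ∈ A, f j < f i}

lemma measurableSet_S (j : Fin n) (A : Finset (Fin n)) : MeasurableSet (S j A) := by
  have h1 : S j A = (⋂ i, ⋂ (_ : i ∉ A ∧ i ≠ j), {f : Fin n → ℝ | f i < f j}) ∩
      (⋂ i, ⋂ (_ : i ∈ A), {f : Fin n → ℝ | f j < f i}) := by
    ext f
    simp only [S, Set.mem_setOf_eq, Set.mem_inter_iff, Set.mem_iInter, and_imp]
  rw [h1]
  refine MeasurableSet.inter ?_ ?_ <;>
  · refine MeasurableSet.iInter fun i => ?_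
    refine MeasurableSet.iInter fun _ => ?_
    exact measurableSet_lt (measurable_pi_apply _) (measurable_pi_apply _)

lemma comp_mem_S_iff (σ : Equiv.Perm (Fin n)) (j : Fin n) (A : Finset (Fin n))
    (f : Fin n → ℝ) : (f ∘ σ ∈ S j A) ↔ f ∈ S (σ j) (A.image σ) := by
  simp only [S, Set.mem_setOf_eq, Function.comp_apply]
  constructor
  · rintro ⟨h1, h2⟩
    constructor
    · intro i' hi' hne
      obtain ⟨i, rfl⟩ := σ.surjective i'
      exact h1 i (fun hi => hi' (Finset.mem_image_of_mem σ hi))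
        (fun h => hne (by rw [h]))
    · intro i' hi'
      obtain ⟨i, hi, rfl⟩ := Finset.mem_image.1 hi'
      exact h2 i hi
  · rintro ⟨h1, h2⟩
    constructor
    · intro i hi hne
      exact h1 (σ i) (fun h => by
          obtain ⟨i₂, hi₂, he⟩ := Finset.mem_image.1 h
          exact hi (σ.injective he ▸ hi₂))
        (fun h => hne (σ.injective h))
    · intro i hi
      exact h2 (σ i) (Finset.mem_image_of_mem σ hi)

lemma lt_case {f : Fin n → ℝ} {j₁ j₂ : Fin n} {A₁ A₂ : Finset (Fin n)}
    (h1 : f ∈ S j₁ A₁) (h2 : f ∈ S j₂ A₂) (hj2 : j₂ ∉ A₂)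
    (hcard : A₁.card = A₂.card) (hlt : f j₁ < f j₂) : False := by
  have hsub : insert j₂ A₂ ⊆ A₁ := by
    intro i hi
    have hfi : f j₁ < f i := by
      rcases Finset.mem_insert.1 hi with rfl | hi
      · exact hlt
      · exact hlt.trans (h2.2 i hi)
    by_contra hiA
    have hne : i ≠ j₁ := by rintro rfl; exact lt_irrefl _ hfi
    exact absurd (h1.1 i hiA hne) (not_lt.2 hfi.le)
  have := Finset.card_le_card hsub
  rw [Finset.card_insert_of_notMem hj2] at this
  omega

lemma disj_of_mem {f : Fin n → ℝ} {j₁ j₂ : Fin n} {A₁ A₂ : Finset (Fin n)}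
    (h1 : f ∈ S j₁ A₁) (h2 : f ∈ S j₂ A₂) (hj1 : j₁ ∉ A₁) (hj2 : j₂ ∉ A₂)
    (hcard : A₁.card = A₂.card) : j₁ = j₂ ∧ A₁ = A₂ := by
  have hj : j₁ = j₂ := by
    by_contra hne
    by_cases h : j₂ ∈ A₁
    · exact lt_case h1 h2 hj2 hcard (h1.2 j₂ h)
    · exact lt_case h2 h1 hj1 hcard.symm (h1.1 j₂ h (Ne.symm hne))
  subst hj
  refine ⟨rfl, Finset.eq_of_subset_of_card_le (fun i hi => ?_) (le_of_eq hcard.symm)⟩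
  by_contra hiA
  have hne : i ≠ j₁ := by rintro rfl; exact hj1 hi
  exact absurd (h2.1 i hiA hne) (not_lt.2 (h1.2 i hi).le)

lemma coverage {f : Fin n → ℝ} (hf : Function.Injective f) {k : ℕ} (hk : k + 1 ≤ n) :
    ∃ j' : Fin n, ∃ A' : Finset (Fin n), j' ∉ A' ∧ A'.card = k ∧ f ∈ S j' A' := by
  classical
  set σ := Tuple.sort f with hσ
  have hmono : StrictMono (f ∘ σ) :=
    (Tuple.monotone_sort f).strictMono_of_injective (hf.comp σ.injective)
  set i₀ : Fin n := ⟨n - 1 - k, by omega⟩ with hi₀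
  set j' := σ i₀ with hj'
  set A' : Finset (Fin n) := Finset.univ.filter (fun i => f j' < f i) with hA'
  have hAeq : A' = (Finset.Ioi i₀).image σ := by
    ext i
    simp only [hA', Finset.mem_filter, Finset.mem_univ, true_and, Finset.mem_image,
      Finset.mem_Ioi]
    constructor
    · intro h
      refine ⟨σ.symm i, ?_, by simp⟩
      have : f (σ i₀) < f (σ (σ.symm i)) := by simpa using h
      exact hmono.lt_iff_lt.1 this
    · rintro ⟨m, hm, rfl⟩
      exact hmono hm
  refine ⟨j', A', ?_, ?_, ?_, ?_⟩
  · simp [hA']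
  · rw [hAeq, Finset.card_image_of_injective _ σ.injective, Fin.card_Ioi]
    simp [hi₀]; omega
  · intro i hiA hne
    have h1 : ¬ f j' < f i := by simpa [hA'] using hiA
    exact lt_of_le_of_ne (not_lt.1 h1) (fun h => hne (hf h))
  · intro i hi
    simpa [hA'] using hi

lemma image_swap_self {α : Type*} [DecidableEq α] {s : Finset α} {a b : α}
    (ha : a ∈ s) (hb : b ∈ s) : s.image (Equiv.swap a b) = s := by
  apply Finset.eq_of_subset_of_card_le
  · intro x hx
    obtain ⟨y, hy, rfl⟩ := Finset.mem_image.1 hx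
    rcases eq_or_ne y a with rfl | hya
    · simpa [Equiv.swap_apply_left] using hb
    rcases eq_or_ne y b with rfl | hyb
    · simpa [Equiv.swap_apply_right] using ha
    · rwa [Equiv.swap_apply_of_ne_of_ne hya hyb]
  · rw [Finset.card_image_of_injective _ (Equiv.swap a b).injective]

lemma exists_perm {j j' : Fin n} {A A' : Finset (Fin n)} (hjA : j ∉ A) (hjA' : j' ∉ A')
    (hc : A.card = A'.card) :
    ∃ σ : Equiv.Perm (Fin n), σ j = j' ∧ A.image σ = A' := by
  classical
  have hcard : Fintype.card {x // x ∈ insert j A} = Fintype.card {x // x ∈ insert j' A'} := by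
    simp only [Fintype.card_coe]
    rw [Finset.card_insert_of_notMem hjA, Finset.card_insert_of_notMem hjA', hc]
  let e : {x // x ∈ insert j A} ≃ {x // x ∈ insert j' A'} := Fintype.equivOfCardEq hcard
  let τ : Equiv.Perm (Fin n) := e.extendSubtype
  have hτ : ∀ x ∈ insert j A, τ x ∈ insert j' A' := fun x hx => e.extendSubtype_mem x hx
  have himg : (insert j A).image τ = insert j' A' := by
    apply Finset.eq_of_subset_of_card_le
    · intro x hx
      obtain ⟨y, hy, rfl⟩ := Finset.mem_image.1 hx
      exact hτ y hy
    · rw [Finset.card_image_of_injective _ τ.injective,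
        Finset.card_insert_of_notMem hjA, Finset.card_insert_of_notMem hjA', hc]
  have hτj : τ j ∈ insert j' A' := hτ j (Finset.mem_insert_self j A)
  refine ⟨τ.trans (Equiv.swap (τ j) j'), by simp [Equiv.swap_apply_left], ?_⟩
  have himg2 : (insert j A).image (τ.trans (Equiv.swap (τ j) j')) = insert j' A' := by
    rw [show ⇑(τ.trans (Equiv.swap (τ j) j')) = (Equiv.swap (τ j) j') ∘ ⇑τ from rfl,
      ← Finset.image_image, himg, image_swap_self hτj (Finset.mem_insert_self j' A')]
  set σ := τ.trans (Equiv.swap (τ j) j') with hσdef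
  have hσj : σ j = j' := by simp [hσdef, Equiv.swap_apply_left]
  rw [Finset.image_insert, hσj] at himg2
  have hnotmem : j' ∉ A.image σ := by
    intro h
    obtain ⟨i, hi, he⟩ := Finset.mem_image.1 h
    rw [← hσj] at he
    exact hjA (σ.injective he ▸ hi)
  have := congrArg (fun s => Finset.erase s j') himg2
  simpa [Finset.erase_insert hnotmem, Finset.erase_insert hjA'] using this

lemma card_pairs (k : ℕ) :
    (Finset.univ.filter (fun p : Fin n × Finset (Fin n) => p.1 ∉ p.2 ∧ p.2.card = k)).card
      = n * (n - 1).choose k := by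
  classical
  have heq : Finset.univ.filter (fun p : Fin n × Finset (Fin n) => p.1 ∉ p.2 ∧ p.2.card = k)
      = Finset.univ.biUnion
        (fun j' : Fin n => ((Finset.univ.erase j').powersetCard k).image (fun B => (j', B))) := by
    ext p
    simp only [Finset.mem_filter, Finset.mem_univ, true_and, Finset.mem_biUnion,
      Finset.mem_image, Finset.mem_powersetCard]
    constructor
    · rintro ⟨h1, h2⟩
      exact ⟨p.1, ⟨p.2, ⟨fun i hi => Finset.mem_erase.2
        ⟨fun he => h1 (he ▸ hi), Finset.mem_univ i⟩, h2⟩, rfl⟩⟩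
    · rintro ⟨j', ⟨B, ⟨hBsub, hBc⟩, rfl⟩⟩
      exact ⟨fun h => (Finset.mem_erase.1 (hBsub h)).1 rfl, hBc⟩
  rw [heq, Finset.card_biUnion]
  · have : ∀ j' : Fin n,
        (((Finset.univ.erase j').powersetCard k).image (fun B => (j', B))).card
          = (n - 1).choose k := by
      intro j'
      rw [Finset.card_image_of_injective _ (fun a b h => congrArg Prod.snd h),
        Finset.card_powersetCard, Finset.card_erase_of_mem (Finset.mem_univ j')]
      simp
    rw [Finset.sum_congr rfl (fun j' _ => this j'), Finset.sum_const, Finset.card_univ,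
      Fintype.card_fin, smul_eq_mul]
  · intro a _ b _ hab
    simp only [Finset.disjoint_left, Finset.mem_image]
    rintro p ⟨B, _, rfl⟩ ⟨B', _, h⟩
    exact hab (congrArg Prod.fst h).symm

end BPaux

theorem barlow_proschan_stmt_0
    {Ω : Type*} [MeasureSpace Ω] [IsProbabilityMeasure (ℙ : Measure Ω)]
    {n : ℕ} (X : Fin n → Ω → ℝ) (hX : ∀ i, Measurable (X i))
    (hexch : ∀ σ : Equiv.Perm (Fin n),
      Measure.map (fun ω i => X (σ i) ω) (ℙ : Measure Ω)
        = Measure.map (fun ω i => X i ω) (ℙ : Measure Ω))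
    (hties : ∀ i j : Fin n, i ≠ j → (ℙ : Measure Ω) {ω | X i ω = X j ω} = 0)
    (j : Fin n) (A : Finset (Fin n)) (hA : j ∉ A) :
    ((ℙ : Measure Ω) {ω | (∀ i, i ∉ A → i ≠ j → X i ω < X j ω) ∧
        ∀ i ∈ A, X j ω < X i ω}).toReal
      = 1 / (n * (n - 1).choose A.card) := by
  classical
  set μ : Measure Ω := ℙ with hμ
  have hn : 0 < n := j.pos
  set k := A.card with hk
  set E : Fin n → Finset (Fin n) → Set Ω :=
    fun j' A' => (fun ω i => X i ω) ⁻¹' (BPaux.S j' A') with hE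
  have hXm : Measurable (fun ω i => X i ω) := measurable_pi_lambda _ hX
  have hEmeas : ∀ j' A', MeasurableSet (E j' A') :=
    fun j' A' => hXm (BPaux.measurableSet_S j' A')
  have hset : {ω | (∀ i, i ∉ A → i ≠ j → X i ω < X j ω) ∧
      ∀ i ∈ A, X j ω < X i ω} = E j A := rfl
  -- exchangeability
  have hperm : ∀ σ : Equiv.Perm (Fin n), μ (E (σ j) (A.image σ)) = μ (E j A) := by
    intro σ
    have hm2 : Measurable (fun ω i => X (σ i) ω) := measurable_pi_lambda _ (fun i => hX (σ i))
    have h1 := congrArg (fun m : Measure (Fin n → ℝ) => m (BPaux.S j A)) (hexch σ)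
    simp only [Measure.map_apply hm2 (BPaux.measurableSet_S j A),
      Measure.map_apply hXm (BPaux.measurableSet_S j A)] at h1
    have hpre : (fun ω i => X (σ i) ω) ⁻¹' (BPaux.S j A) = E (σ j) (A.image σ) := by
      ext ω
      exact BPaux.comp_mem_S_iff σ j A (fun i => X i ω)
    rwa [hpre] at h1
  have hsame : ∀ j' : Fin n, ∀ A' : Finset (Fin n), j' ∉ A' → A'.card = k →
      μ (E j' A') = μ (E j A) := by
    intro j' A' hj' hc
    obtain ⟨σ, hσj, hσA⟩ := BPaux.exists_perm hA hj' hc.symm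
    rw [← hσj, ← hσA]
    exact hperm σ
  -- the pairs
  set pairs : Finset (Fin n × Finset (Fin n)) :=
    Finset.univ.filter (fun p => p.1 ∉ p.2 ∧ p.2.card = k) with hpairs
  have hkn : k + 1 ≤ n := by
    have hsub : A ⊆ Finset.univ.erase j :=
      fun i hi => Finset.mem_erase.2 ⟨fun h => hA (h ▸ hi), Finset.mem_univ i⟩
    have := Finset.card_le_card hsub
    rw [Finset.card_erase_of_mem (Finset.mem_univ j), Finset.card_univ, Fintype.card_fin] at this
    omega
  -- disjointness
  have hdisj : (pairs : Set (Fin n × Finset (Fin n))).PairwiseDisjoint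
      (fun p => E p.1 p.2) := by
    intro p hp q hq hpq
    simp only [Finset.coe_filter, Set.mem_setOf_eq, Finset.mem_univ, true_and, hpairs] at hp hq
    rw [Function.onFun, Set.disjoint_left]
    intro ω h1 h2
    obtain ⟨hj, hAeq⟩ := BPaux.disj_of_mem h1 h2 hp.1 hq.1 (hp.2.trans hq.2.symm)
    exact hpq (Prod.ext hj hAeq)
  -- coverage
  set N : Set Ω := ⋃ (i : Fin n) (i' : Fin n) (_ : i ≠ i'), {ω | X i ω = X i' ω} with hNdef
  have hN : μ N = 0 := by
    refine measure_iUnion_null fun i => measure_iUnion_null fun i' => measure_iUnion_null ?_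
    intro h
    exact hties i i' h
  have hcover : Nᶜ ⊆ ⋃ p ∈ pairs, E p.1 p.2 := by
    intro ω hω
    have hf : Function.Injective (fun i => X i ω) := by
      intro a b hab
      by_contra hne
      exact hω (Set.mem_iUnion.2 ⟨a, Set.mem_iUnion.2 ⟨b, Set.mem_iUnion.2 ⟨hne, hab⟩⟩⟩)
    obtain ⟨j', A', hj', hc, hmem⟩ := BPaux.coverage hf hkn
    exact Set.mem_biUnion (Finset.mem_filter.2 ⟨Finset.mem_univ (j', A'), hj', hc⟩) hmem
  have hsum : ∑ p ∈ pairs, μ (E p.1 p.2) = 1 := by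
    rw [← measure_biUnion_finset hdisj (fun p _ => hEmeas p.1 p.2)]
    apply le_antisymm prob_le_one
    calc (1 : ℝ≥0∞) = μ Set.univ := (measure_univ).symm
      _ ≤ μ (N ∪ ⋃ p ∈ pairs, E p.1 p.2) := by
          apply measure_mono
          intro ω _
          by_cases h : ω ∈ N
          · exact Or.inl h
          · exact Or.inr (hcover h)
      _ ≤ μ N + μ (⋃ p ∈ pairs, E p.1 p.2) := measure_union_le _ _
      _ = μ (⋃ p ∈ pairs, E p.1 p.2) := by rw [hN, zero_add]
  have hconst : (pairs.card : ℝ≥0∞) * μ (E j A) = 1 := by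
    rw [← hsum, Finset.sum_congr rfl
      (fun p hp => by
        have := Finset.mem_filter.1 hp
        exact hsame p.1 p.2 this.2.1 this.2.2),
      Finset.sum_const, nsmul_eq_mul]
  have hcardp : pairs.card = n * (n - 1).choose k := BPaux.card_pairs k
  have hne0 : (n * (n - 1).choose k : ℕ) ≠ 0 := by
    have : 0 < (n - 1).choose k := Nat.choose_pos (by omega)
    positivity
  have hμE : μ (E j A) = ((n * (n - 1).choose k : ℕ) : ℝ≥0∞)⁻¹ := by
    rw [hcardp] at hconst
    have h2 : ((n * (n - 1).choose k : ℕ) : ℝ≥0∞) ≠ 0 := Nat.cast_ne_zero.2 hne0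
    have h3 : ((n * (n - 1).choose k : ℕ) : ℝ≥0∞) ≠ ⊤ := ENNReal.natCast_ne_top _
    rw [← one_mul (μ (E j A)), ← ENNReal.inv_mul_cancel h2 h3, mul_assoc, hconst, mul_one]
  rw [hset, hμE, ENNReal.toReal_inv, ENNReal.toReal_natCast, one_div]
  push_cast
  ring
end

section
/- For every semicoherent structure function φ and every j ∈ [n], the Barlow–Proschan index satisfies ℙ(T = X_j) = Σ_{A ⊆ [n]\{j}} q_j(A)·(φ(A∪{j}) − φ(A)) = Σ_{A ⊆ [n]} (−1)^{|{j}\A|} q_j(A\{j}) φ(A). -/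
open MeasureTheory ProbabilityTheory Finset

lemma bp_key {n : ℕ} (x : Fin n → ℝ) (φ : Finset (Fin n) → ℕ) (hφ01 : ∀ A, φ A ≤ 1)
    (hmono : ∀ ⦃A B : Finset (Fin n)⦄, A ⊆ B → φ A ≤ φ B) (hempty : φ ∅ = 0)
    (j : Fin n) (A : Finset (Fin n)) (hAj : j ∉ A)
    (h1 : ∀ i, i ∉ A → i ≠ j → x i < x j) (h2 : ∀ i ∈ A, x j < x i) :
    ((⨆ (B : Finset (Fin n)) (_ : φ B = 1), ⨅ i ∈ B, (x i : EReal)) = (x j : EReal))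
      ↔ (φ (insert j A) = 1 ∧ φ A = 0) := by
  classical
  have h01 : ∀ B, φ B = 0 ∨ φ B = 1 := fun B => Nat.le_one_iff_eq_zero_or_eq_one.mp (hφ01 B)
  set g : Finset (Fin n) → EReal := fun B => B.inf (fun i => (x i : EReal)) with hg
  have hinf : ∀ B : Finset (Fin n), (⨅ i ∈ B, (x i : EReal)) = g B := by
    intro B; rw [hg]; exact (Finset.inf_eq_iInf B _).symm
  have hsup : (⨆ (B : Finset (Fin n)) (_ : φ B = 1), ⨅ i ∈ B, (x i : EReal))
      = (univ.filter fun B => φ B = 1).sup g := by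
    rw [Finset.sup_eq_iSup]
    simp only [mem_filter, mem_univ, true_and, hinf]
  rw [hsup]
  constructor
  · intro hT
    have hA0 : φ A = 0 := by
      by_contra h
      have hA1 : φ A = 1 := (h01 A).resolve_left h
      have hlt : (x j : EReal) < g A := by
        rw [hg]
        rw [Finset.lt_inf_iff (EReal.coe_lt_top (x j))]
        intro i hi
        exact EReal.coe_lt_coe_iff.mpr (h2 i hi)
      have hle : g A ≤ (univ.filter fun B => φ B = 1).sup g :=
        Finset.le_sup (by simp [hA1])
      rw [hT] at hle
      exact absurd (lt_of_lt_of_le hlt hle) (lt_irrefl _)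
    refine ⟨?_, hA0⟩
    by_contra h
    have hS0 : φ (insert j A) = 0 := (h01 _).resolve_right h
    have : (univ.filter fun B => φ B = 1).sup g < (x j : EReal) := by
      rw [Finset.sup_lt_iff (EReal.bot_lt_coe (x j))]
      intro B hB
      rw [mem_filter] at hB
      have hnsub : ¬ B ⊆ insert j A := by
        intro hsub
        have := hmono hsub
        omega
      obtain ⟨i, hiB, hiS⟩ := not_subset.mp hnsub
      have hij : i ≠ j := fun h => hiS (h ▸ mem_insert_self j A)
      have hiA : i ∉ A := fun h => hiS (mem_insert_of_mem h)
      calc g B ≤ (x i : EReal) := Finset.inf_le hiB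
        _ < (x j : EReal) := EReal.coe_lt_coe_iff.mpr (h1 i hiA hij)
    rw [hT] at this
    exact absurd this (lt_irrefl _)
  · rintro ⟨hS1, hA0⟩
    have hgS : g (insert j A) = (x j : EReal) := by
      apply le_antisymm
      · exact Finset.inf_le (mem_insert_self j A)
      · apply Finset.le_inf
        intro i hi
        rcases mem_insert.mp hi with rfl | hi
        · exact le_refl _
        · exact EReal.coe_le_coe_iff.mpr (le_of_lt (h2 i hi))
    apply le_antisymm
    · apply Finset.sup_le
      intro B hB
      rw [mem_filter] at hB
      have hnsub : ¬ B ⊆ A := by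
        intro hsub; have := hmono hsub; omega
      obtain ⟨i, hiB, hiA⟩ := not_subset.mp hnsub
      by_cases hij : i = j
      · subst hij; exact Finset.inf_le hiB
      · calc g B ≤ (x i : EReal) := Finset.inf_le hiB
          _ ≤ (x j : EReal) := EReal.coe_le_coe_iff.mpr (le_of_lt (h1 i hiA hij))
    · rw [← hgS]
      exact Finset.le_sup (by simp [hS1])

theorem barlow_proschan_stmt_1
    {Ω : Type*} [MeasureSpace Ω] [IsProbabilityMeasure (ℙ : Measure Ω)]
    {n : ℕ} (X : Fin n → Ω → ℝ) (hX : ∀ i, Measurable (X i))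
    (hties : ∀ i j : Fin n, i ≠ j → (ℙ : Measure Ω) {ω | X i ω = X j ω} = 0)
    (φ : Finset (Fin n) → ℕ) (hφ01 : ∀ A, φ A ≤ 1)
    (hmono : ∀ ⦃A B : Finset (Fin n)⦄, A ⊆ B → φ A ≤ φ B)
    (hempty : φ ∅ = 0) (hfull : φ Finset.univ = 1)
    (j : Fin n) :
    ((ℙ : Measure Ω) {ω |
        (⨆ (A : Finset (Fin n)) (_ : φ A = 1), ⨅ i ∈ A, (X i ω : EReal))
          = (X j ω : EReal)}).toReal
      = ∑ A ∈ (Finset.univ.erase j).powerset,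
          ((ℙ : Measure Ω) {ω | (∀ i, i ∉ A → i ≠ j → X i ω < X j ω) ∧
              ∀ i ∈ A, X j ω < X i ω}).toReal
            * ((φ (insert j A) : ℝ) - (φ A : ℝ))
    ∧ ((ℙ : Measure Ω) {ω |
        (⨆ (A : Finset (Fin n)) (_ : φ A = 1), ⨅ i ∈ A, (X i ω : EReal))
          = (X j ω : EReal)}).toReal
      = ∑ A ∈ (Finset.univ : Finset (Fin n)).powerset,
          (-1 : ℝ) ^ (({j} \ A : Finset (Fin n)).card)
            * ((ℙ : Measure Ω) {ω | (∀ i, i ∉ A.erase j → i ≠ j → X i ω < X j ω) ∧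
                ∀ i ∈ A.erase j, X j ω < X i ω}).toReal
            * (φ A : ℝ) := by
  classical
  set E : Finset (Fin n) → Set Ω := fun A =>
    {ω | (∀ i, i ∉ A → i ≠ j → X i ω < X j ω) ∧ ∀ i ∈ A, X j ω < X i ω} with hEdef
  have hEapp : ∀ B : Finset (Fin n),
      {ω | (∀ i, i ∉ B → i ≠ j → X i ω < X j ω) ∧ ∀ i ∈ B, X j ω < X i ω} = E B := by
    intro B; rw [hEdef]
  set TS : Set Ω := {ω |
      (⨆ (A : Finset (Fin n)) (_ : φ A = 1), ⨅ i ∈ A, (X i ω : EReal))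
        = (X j ω : EReal)} with hTSdef
  have h01 : ∀ B, φ B = 0 ∨ φ B = 1 := fun B => Nat.le_one_iff_eq_zero_or_eq_one.mp (hφ01 B)
  -- measurability
  have hEmeas : ∀ A : Finset (Fin n), MeasurableSet (E A) := by
    intro A
    have : E A = (⋂ i, ⋂ (_ : i ∉ A), ⋂ (_ : i ≠ j), {ω | X i ω < X j ω})
        ∩ (⋂ i, ⋂ (_ : i ∈ A), {ω | X j ω < X i ω}) := by
      rw [hEdef]; ext ω; simp [Set.mem_iInter]
    rw [this]
    exact (MeasurableSet.iInter fun i => MeasurableSet.iInter fun _ =>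
        MeasurableSet.iInter fun _ => measurableSet_lt (hX i) (hX j)).inter
      (MeasurableSet.iInter fun i => MeasurableSet.iInter fun _ =>
        measurableSet_lt (hX j) (hX i))
  -- disjointness
  have hdisj : (↑((Finset.univ.erase j).powerset) : Set (Finset (Fin n))).PairwiseDisjoint E := by
    intro A hA B hB hne
    rw [Finset.mem_coe, Finset.mem_powerset] at hA hB
    rw [Function.onFun, Set.disjoint_left]
    intro ω hωA hωB
    rw [hEdef] at hωA hωB
    obtain ⟨i, hi⟩ : ∃ i, ¬(i ∈ A ↔ i ∈ B) := by
      by_contra h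
      push_neg at h
      exact hne (Finset.ext h)
    by_cases hiA : i ∈ A
    · have hiB : i ∉ B := fun h => hi ⟨fun _ => h, fun _ => hiA⟩
      have hij : i ≠ j := (Finset.mem_erase.mp (hA hiA)).1
      exact lt_asymm (hωA.2 i hiA) (hωB.1 i hiB hij)
    · have hiB : i ∈ B := by
        by_contra h
        exact hi ⟨fun h' => absurd h' hiA, fun h' => absurd h' h⟩
      have hij : i ≠ j := (Finset.mem_erase.mp (hB hiB)).1
      exact lt_asymm (hωB.2 i hiB) (hωA.1 i hiA hij)
  -- the "good" index set
  set P1 : Finset (Finset (Fin n)) :=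
    (Finset.univ.erase j).powerset.filter (fun A => φ (insert j A) = 1 ∧ φ A = 0) with hP1def
  set G : Set Ω := ⋃ A ∈ P1, E A with hGdef
  -- G ⊆ TS
  have hGsub : G ⊆ TS := by
    rw [hGdef]
    refine Set.iUnion₂_subset fun A hA => ?_
    rw [hP1def, Finset.mem_filter, Finset.mem_powerset] at hA
    obtain ⟨hAsub, hc1, hc0⟩ := hA
    intro ω hω
    rw [hEdef] at hω
    have hAj : j ∉ A := fun h => (Finset.mem_erase.mp (hAsub h)).1 rfl
    rw [hTSdef]
    exact (bp_key (fun i => X i ω) φ hφ01 hmono hempty j A hAj hω.1 hω.2).mpr ⟨hc1, hc0⟩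
  -- null set of ties with j
  set N : Set Ω := ⋃ i, ⋃ (_ : i ≠ j), {ω | X i ω = X j ω} with hNdef
  have hNnull : (ℙ : Measure Ω) N = 0 := by
    rw [hNdef]
    refine measure_iUnion_null fun i => ?_
    rcases eq_or_ne i j with rfl | h
    · simp
    · exact measure_mono_null (Set.iUnion_subset fun _ => subset_rfl) (hties i j h)
  -- TS \ G ⊆ N
  have hTSsub : TS \ G ⊆ N := by
    intro ω hω
    obtain ⟨hωT, hωG⟩ := hω
    by_contra hωN
    rw [hNdef] at hωN
    simp only [Set.mem_iUnion, Set.mem_setOf_eq, not_exists] at hωN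
    set Aω : Finset (Fin n) := (Finset.univ.erase j).filter (fun i => X j ω < X i ω) with hAω
    have hAωsub : Aω ⊆ Finset.univ.erase j := Finset.filter_subset _ _
    have hAωj : j ∉ Aω := fun h => (Finset.mem_erase.mp (hAωsub h)).1 rfl
    have hc1 : ∀ i, i ∉ Aω → i ≠ j → X i ω < X j ω := by
      intro i hi hij
      have hnlt : ¬ X j ω < X i ω := by
        intro h
        exact hi (by rw [hAω]; exact Finset.mem_filter.mpr ⟨Finset.mem_erase.mpr ⟨hij, Finset.mem_univ i⟩, h⟩)
      have hne : X i ω ≠ X j ω := hωN i hij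
      exact lt_of_le_of_ne (not_lt.mp hnlt) hne
    have hc2 : ∀ i ∈ Aω, X j ω < X i ω := by
      intro i hi
      rw [hAω] at hi
      exact (Finset.mem_filter.mp hi).2
    rw [hTSdef] at hωT
    have hkey := (bp_key (fun i => X i ω) φ hφ01 hmono hempty j Aω hAωj hc1 hc2).mp hωT
    apply hωG
    rw [hGdef]
    have hmem : Aω ∈ P1 := by
      rw [hP1def, Finset.mem_filter, Finset.mem_powerset]
      exact ⟨hAωsub, hkey⟩
    have hωE : ω ∈ E Aω := by rw [hEdef]; exact ⟨hc1, hc2⟩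
    exact Set.mem_biUnion hmem hωE
  -- measure of TS
  have haeeq : TS =ᵐ[(ℙ : Measure Ω)] G := by
    rw [MeasureTheory.ae_eq_set]
    constructor
    · exact measure_mono_null hTSsub hNnull
    · rw [Set.diff_eq_empty.mpr hGsub]; exact measure_empty
  have hTSmeas : (ℙ : Measure Ω) TS = ∑ A ∈ P1, (ℙ : Measure Ω) (E A) := by
    rw [measure_congr haeeq, hGdef]
    exact measure_biUnion_finset
      (hdisj.subset (by rw [hP1def]; exact Finset.coe_subset.mpr (Finset.filter_subset _ _)))
      (fun A _ => hEmeas A)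
  have hTSreal : ((ℙ : Measure Ω) TS).toReal = ∑ A ∈ P1, ((ℙ : Measure Ω) (E A)).toReal := by
    rw [hTSmeas]
    exact ENNReal.toReal_sum (fun A _ => measure_ne_top _ _)
  -- first identity
  have goal1 : ((ℙ : Measure Ω) TS).toReal
      = ∑ A ∈ (Finset.univ.erase j).powerset,
          ((ℙ : Measure Ω) (E A)).toReal * ((φ (insert j A) : ℝ) - (φ A : ℝ)) := by
    rw [hTSreal, hP1def, Finset.sum_filter]
    refine Finset.sum_congr rfl fun A _ => ?_
    have hle := hmono (Finset.subset_insert j A)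
    rcases h01 (insert j A) with h | h <;> rcases h01 A with h' | h'
    · simp [h, h']
    · exfalso; omega
    · simp [h, h']
    · simp [h, h']
  refine ⟨by simp only [hEapp]; exact goal1, ?_⟩
  -- second identity
  have hrw2 : (∑ A ∈ (Finset.univ : Finset (Fin n)).powerset,
          (-1 : ℝ) ^ (({j} \ A : Finset (Fin n)).card)
            * ((ℙ : Measure Ω) (E (A.erase j))).toReal * (φ A : ℝ))
      = ∑ A ∈ (Finset.univ.erase j).powerset,
          ((ℙ : Measure Ω) (E A)).toReal * ((φ (insert j A) : ℝ) - (φ A : ℝ)) := by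
    rw [← Finset.sum_filter_add_sum_filter_not (Finset.univ : Finset (Fin n)).powerset
      (fun A => j ∈ A)]
    have hnotmem : (Finset.univ : Finset (Fin n)).powerset.filter (fun A => ¬ j ∈ A)
        = (Finset.univ.erase j).powerset := by
      ext A
      simp [Finset.mem_filter, Finset.mem_powerset, Finset.subset_erase, Finset.subset_univ]
    have hsum1 : (∑ A ∈ (Finset.univ : Finset (Fin n)).powerset.filter (fun A => j ∈ A),
          (-1 : ℝ) ^ (({j} \ A : Finset (Fin n)).card)
            * ((ℙ : Measure Ω) (E (A.erase j))).toReal * (φ A : ℝ))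
        = ∑ B ∈ (Finset.univ.erase j).powerset,
            ((ℙ : Measure Ω) (E B)).toReal * (φ (insert j B) : ℝ) := by
      refine Finset.sum_nbij' (fun A => A.erase j) (fun B => insert j B) ?_ ?_ ?_ ?_ ?_
      · intro A hA
        rw [Finset.mem_filter] at hA
        rw [Finset.mem_powerset]
        exact Finset.erase_subset_erase j (Finset.subset_univ A)
      · intro B hB
        rw [Finset.mem_powerset] at hB
        rw [Finset.mem_filter]
        exact ⟨Finset.mem_powerset.mpr (Finset.subset_univ _), Finset.mem_insert_self j B⟩
      · intro A hA
        rw [Finset.mem_filter] at hA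
        exact Finset.insert_erase hA.2
      · intro B hB
        rw [Finset.mem_powerset] at hB
        have hjB : j ∉ B := fun h => (Finset.mem_erase.mp (hB h)).1 rfl
        show (insert j B).erase j = B
        exact Finset.erase_insert hjB
      · intro A hA
        rw [Finset.mem_filter] at hA
        have h0 : ({j} \ A : Finset (Fin n)) = ∅ := by
          rw [Finset.sdiff_eq_empty_iff_subset]
          exact Finset.singleton_subset_iff.mpr hA.2
        simp only [h0, Finset.card_empty, pow_zero, one_mul, Finset.insert_erase hA.2]
    have hsum2 : (∑ A ∈ (Finset.univ : Finset (Fin n)).powerset.filter (fun A => ¬ j ∈ A),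
          (-1 : ℝ) ^ (({j} \ A : Finset (Fin n)).card)
            * ((ℙ : Measure Ω) (E (A.erase j))).toReal * (φ A : ℝ))
        = ∑ B ∈ (Finset.univ.erase j).powerset,
            (-(((ℙ : Measure Ω) (E B)).toReal * (φ B : ℝ))) := by
      rw [hnotmem]
      refine Finset.sum_congr rfl fun B hB => ?_
      rw [Finset.mem_powerset] at hB
      have hjB : j ∉ B := fun h => (Finset.mem_erase.mp (hB h)).1 rfl
      have : ({j} \ B : Finset (Fin n)) = {j} := by
        rw [Finset.sdiff_eq_self_iff_disjoint]
        exact Finset.disjoint_singleton_left.mpr hjB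
      rw [this, Finset.erase_eq_of_notMem hjB]
      simp
    rw [hsum1, hsum2, ← Finset.sum_add_distrib]
    refine Finset.sum_congr rfl fun B _ => ?_
    ring
  simp only [hEapp]
  rw [goal1]
  exact hrw2.symm
end

section
/- (Iyer's formula, generalized) For every semicoherent structure function φ and every j ∈ [n], ℙ(T = X_j) = Σ_{A ⊆ [n]\{j}} r_j(A)·m_φ(A∪{j}). -/
open MeasureTheory ProbabilityTheory Finset


lemma sum_powerset_insert' {α M : Type*} [DecidableEq α] [AddCommMonoid M]
    {a : α} {s : Finset α} (ha : a ∉ s) (f : Finset α → M) :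
    ∑ t ∈ (insert a s).powerset, f t
      = ∑ t ∈ s.powerset, f t + ∑ t ∈ s.powerset, f (insert a t) := by
  rw [powerset_insert, sum_union, sum_image]
  · intro t ht u hu h
    have hat : a ∉ t := fun h' => ha (mem_powerset.1 ht h')
    have hau : a ∉ u := fun h' => ha (mem_powerset.1 hu h')
    have h2 := congrArg (fun t => Finset.erase t a) h
    simpa [erase_insert hat, erase_insert hau] using h2
  · rw [disjoint_right]
    intro t ht ht'
    obtain ⟨u, hu, rfl⟩ := mem_image.1 ht
    exact ha (mem_powerset.1 ht' (mem_insert_self a u))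

lemma mobius_aux {α : Type*} [DecidableEq α] (C : Finset α) :
    ∀ f : Finset α → ℝ,
    ∑ A ∈ C.powerset, ∑ B ∈ A.powerset, (-1 : ℝ) ^ (A.card - B.card) * f B = f C := by
  induction C using Finset.induction_on with
  | empty => intro f; simp
  | insert _ _ ha ih =>
    rename_i a s
    intro f
    rw [sum_powerset_insert' ha]
    have key : ∀ A ∈ s.powerset,
        (∑ B ∈ (insert a A).powerset, (-1:ℝ) ^ ((insert a A).card - B.card) * f B)
        = -(∑ B ∈ A.powerset, (-1:ℝ) ^ (A.card - B.card) * f B)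
          + ∑ B ∈ A.powerset, (-1:ℝ) ^ (A.card - B.card) * f (insert a B) := by
      intro A hA
      have haA : a ∉ A := fun h => ha ((mem_powerset.1 hA) h)
      rw [sum_powerset_insert' haA, card_insert_of_notMem haA]
      have h1 : ∑ B ∈ A.powerset, (-1:ℝ) ^ (A.card + 1 - B.card) * f B
          = -(∑ B ∈ A.powerset, (-1:ℝ) ^ (A.card - B.card) * f B) := by
        rw [← Finset.sum_neg_distrib]
        refine Finset.sum_congr rfl fun B hB => ?_
        have hBA : B.card ≤ A.card := card_le_card (mem_powerset.1 hB)
        rw [Nat.succ_sub hBA, pow_succ]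
        ring
      have h2 : ∑ B ∈ A.powerset, (-1:ℝ) ^ (A.card + 1 - (insert a B).card) * f (insert a B)
          = ∑ B ∈ A.powerset, (-1:ℝ) ^ (A.card - B.card) * f (insert a B) := by
        refine Finset.sum_congr rfl fun B hB => ?_
        have haB : a ∉ B := fun h => haA ((mem_powerset.1 hB) h)
        rw [card_insert_of_notMem haB, Nat.succ_sub_succ]
      rw [h1, h2]
    rw [Finset.sum_congr rfl key, Finset.sum_add_distrib, Finset.sum_neg_distrib,
      ih f, ih (fun B => f (insert a B))]
    ring

lemma mobius_insert {α : Type*} [DecidableEq α] (f : Finset α → ℝ) {j : α} {C : Finset α}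
    (hj : j ∉ C) :
    ∑ A ∈ C.powerset, (∑ B ∈ (insert j A).powerset,
        (-1:ℝ) ^ ((insert j A).card - B.card) * f B)
      = f (insert j C) - f C := by
  have h := mobius_aux (insert j C) f
  rw [sum_powerset_insert' hj, mobius_aux C f] at h
  linarith

theorem barlow_proschan_stmt_7
    {Ω : Type*} [MeasureSpace Ω] [IsProbabilityMeasure (ℙ : Measure Ω)]
    {n : ℕ} (X : Fin n → Ω → ℝ) (hX : ∀ i, Measurable (X i))
    (hties : ∀ i j : Fin n, i ≠ j → (ℙ : Measure Ω) {ω | X i ω = X j ω} = 0)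
    (φ : Finset (Fin n) → ℕ) (hφ01 : ∀ A, φ A ≤ 1)
    (hmono : ∀ ⦃A B : Finset (Fin n)⦄, A ⊆ B → φ A ≤ φ B)
    (hempty : φ ∅ = 0) (hfull : φ Finset.univ = 1)
    (j : Fin n) :
    ((ℙ : Measure Ω) {ω |
        (⨆ (A : Finset (Fin n)) (_ : φ A = 1), ⨅ i ∈ A, (X i ω : EReal))
          = (X j ω : EReal)}).toReal
      = ∑ A ∈ (Finset.univ.erase j).powerset,
          ((ℙ : Measure Ω) {ω | ∀ i ∈ A, X j ω < X i ω}).toReal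
            * ∑ B ∈ (insert j A).powerset,
                (-1 : ℝ) ^ ((insert j A).card - B.card) * (φ B : ℝ) := by
  classical
  set μ : Measure Ω := ℙ with hμdef
  set P : Finset (Finset (Fin n)) := (Finset.univ.erase j).powerset with hPdef
  set S : Set Ω := {ω |
        (⨆ (A : Finset (Fin n)) (_ : φ A = 1), ⨅ i ∈ A, (X i ω : EReal))
          = (X j ω : EReal)} with hSdef
  set E : Finset (Fin n) → Set Ω := fun C =>
    {ω | (∀ i ∈ C, X j ω < X i ω) ∧
      ∀ i ∈ Finset.univ.erase j, i ∉ C → X i ω < X j ω} with hEdef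
  -- measurability of E C
  have hEmeas : ∀ C, MeasurableSet (E C) := by
    intro C
    have hEq : E C = (⋂ i ∈ (C : Finset (Fin n)), {ω | X j ω < X i ω}) ∩
        ⋂ i ∈ Finset.univ.erase j, ⋂ (_ : i ∉ C), {ω | X i ω < X j ω} := by
      ext ω
      simp only [hEdef, Set.mem_inter_iff, Set.mem_iInter, Set.mem_setOf_eq]
    rw [hEq]
    refine MeasurableSet.inter ?_ ?_
    · exact MeasurableSet.biInter (Set.to_countable _)
        fun i _ => measurableSet_lt (hX j) (hX i)
    · exact MeasurableSet.biInter (Set.to_countable _)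
        fun i _ => MeasurableSet.iInter fun _ => measurableSet_lt (hX i) (hX j)
  -- mutual subset lemma
  have hsub : ∀ C ∈ P, ∀ C' ∈ P, ∀ ω, ω ∈ E C → ω ∈ E C' → C ⊆ C' := by
    intro C hC C' hC' ω hω hω' i hiC
    by_contra hiC'
    have hiE : i ∈ Finset.univ.erase j := mem_powerset.1 hC hiC
    exact lt_asymm (hω.1 i hiC) (hω'.2 i hiE hiC')
  have hdisj : ∀ C ∈ P, ∀ C' ∈ P, C ≠ C' → Disjoint (E C) (E C') := by
    intro C hC C' hC' hne
    rw [Set.disjoint_left]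
    intro ω hω hω'
    exact hne (Finset.Subset.antisymm (hsub C hC C' hC' ω hω hω')
      (hsub C' hC' C hC ω hω' hω))
  -- union of the E's
  set U : Set Ω := ⋃ C ∈ P, E C with hUdef
  have hUmeas : MeasurableSet U := by
    exact MeasurableSet.biUnion (Set.to_countable _) fun C _ => hEmeas C
  -- complement of U is null
  have hties0 : μ (⋃ i ∈ Finset.univ.erase j, {ω | X i ω = X j ω}) = 0 := by
    refine le_antisymm ?_ zero_le
    refine le_trans (measure_biUnion_finset_le _ _) (le_of_eq ?_)
    exact Finset.sum_eq_zero fun i hi => hties i j (Finset.ne_of_mem_erase hi)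
  have hcover : ∀ s : Set Ω, μ (s \ U) = 0 := by
    intro s
    refine measure_mono_null ?_ hties0
    intro ω hω
    by_contra hnot
    simp only [Set.mem_iUnion, Set.mem_setOf_eq, not_exists] at hnot
    apply hω.2
    have hC0 : (Finset.univ.erase j).filter (fun i => X j ω < X i ω) ∈ P :=
      mem_powerset.2 (filter_subset _ _)
    refine Set.mem_biUnion hC0 ?_
    refine ⟨fun i hi => (Finset.mem_filter.1 hi).2, fun i hi hni => ?_⟩
    have h1 : ¬ X j ω < X i ω := fun h => hni (Finset.mem_filter.2 ⟨hi, h⟩)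
    have h2 : X i ω ≠ X j ω := hnot i hi
    exact lt_of_le_of_ne (le_of_not_gt h1) h2
  -- pointwise characterization
  have hpoint : ∀ C ∈ P, ∀ ω ∈ E C,
      (ω ∈ S ↔ (φ (insert j C) = 1 ∧ φ C = 0)) := by
    intro C hC ω hω
    obtain ⟨h1, h2⟩ := hω
    have hCsub : C ⊆ Finset.univ.erase j := mem_powerset.1 hC
    have h2' : ∀ i : Fin n, i ≠ j → i ∉ C → X i ω < X j ω := fun i hij hiC =>
      h2 i (Finset.mem_erase.2 ⟨hij, Finset.mem_univ i⟩) hiC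
    set T : EReal := ⨆ (A : Finset (Fin n)) (_ : φ A = 1), ⨅ i ∈ A, (X i ω : EReal)
      with hTdef
    have ha : φ (insert j C) = 1 → (X j ω : EReal) ≤ T := by
      intro h
      have hinf : (X j ω : EReal) ≤ ⨅ i ∈ insert j C, (X i ω : EReal) := by
        refine le_iInf₂ fun i hi => ?_
        rcases Finset.mem_insert.1 hi with h' | h'
        · rw [h']
        · exact_mod_cast (h1 i h').le
      exact le_trans hinf
        (le_iSup₂ (f := fun (A : Finset (Fin n)) (_ : φ A = 1) =>
          ⨅ i ∈ A, (X i ω : EReal)) (insert j C) h)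
    have hb : φ C = 0 → T ≤ (X j ω : EReal) := by
      intro h
      refine iSup₂_le fun A hA => ?_
      have hns : ¬ A ⊆ C := fun hsub' => by
        have := hmono hsub'; omega
      obtain ⟨i, hiA, hiC⟩ := Finset.not_subset.1 hns
      refine le_trans (iInf₂_le i hiA) ?_
      by_cases hij : i = j
      · rw [hij]
      · exact_mod_cast (h2' i hij hiC).le
    have hc : φ (insert j C) = 0 → T < (X j ω : EReal) := by
      intro h
      set D : Finset (Fin n) := Finset.univ \ insert j C with hDdef
      have hDne : D.Nonempty := by
        rw [hDdef, Finset.sdiff_nonempty]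
        intro hsub'
        have huniv : insert j C = Finset.univ :=
          Finset.Subset.antisymm (Finset.subset_univ _) hsub'
        rw [huniv, hfull] at h
        omega
      have hTle : T ≤ ⨆ i ∈ D, (X i ω : EReal) := by
        refine iSup₂_le fun A hA => ?_
        have hns : ¬ A ⊆ insert j C := fun hsub' => by
          have := hmono hsub'; omega
        obtain ⟨i, hiA, hiC⟩ := Finset.not_subset.1 hns
        have hiD : i ∈ D := Finset.mem_sdiff.2 ⟨Finset.mem_univ i, hiC⟩
        exact le_trans (iInf₂_le i hiA)
          (le_iSup₂ (f := fun (i : Fin n) (_ : i ∈ D) => (X i ω : EReal)) i hiD)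
      obtain ⟨i0, hi0, heq⟩ := Finset.exists_mem_eq_sup D hDne
        (fun i => (X i ω : EReal))
      rw [← Finset.sup_eq_iSup] at hTle
      refine lt_of_le_of_lt hTle ?_
      rw [heq]
      have hi0' := Finset.mem_sdiff.1 hi0
      have hij : i0 ≠ j := fun h' => hi0'.2 (h' ▸ Finset.mem_insert_self j C)
      have hiC : i0 ∉ C := fun h' => hi0'.2 (Finset.mem_insert_of_mem h')
      exact_mod_cast h2' i0 hij hiC
    have hd : φ C = 1 → (X j ω : EReal) < T := by
      intro h
      have hCne : C.Nonempty := by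
        rw [Finset.nonempty_iff_ne_empty]
        intro h'
        rw [h', hempty] at h
        omega
      obtain ⟨i0, hi0, heq⟩ := Finset.exists_mem_eq_inf C hCne
        (fun i => (X i ω : EReal))
      have hlt : (X j ω : EReal) < ⨅ i ∈ C, (X i ω : EReal) := by
        rw [← Finset.inf_eq_iInf, heq]
        exact_mod_cast h1 i0 hi0
      exact lt_of_lt_of_le hlt
        (le_iSup₂ (f := fun (A : Finset (Fin n)) (_ : φ A = 1) =>
          ⨅ i ∈ A, (X i ω : EReal)) C h)
    constructor
    · intro hT
      have hTX : T = (X j ω : EReal) := hT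
      have hφC : φ C = 0 := by
        by_contra h'
        have h1' : φ C = 1 := by have := hφ01 C; omega
        have := hd h1'
        rw [hTX] at this
        exact lt_irrefl _ this
      have hφjC : φ (insert j C) = 1 := by
        by_contra h'
        have h0 : φ (insert j C) = 0 := by have := hφ01 (insert j C); omega
        have := hc h0
        rw [hTX] at this
        exact lt_irrefl _ this
      exact ⟨hφjC, hφC⟩
    · rintro ⟨hg1, hg0⟩
      exact le_antisymm (hb hg0) (ha hg1)
  -- both sides equal the same sum
  have key : ∀ (s : Set Ω) (F : Finset (Fin n) → Set Ω),
      (∀ C ∈ P, s ∩ E C = F C) → (∀ C ∈ P, MeasurableSet (F C)) →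
      (∀ C ∈ P, F C ⊆ E C) → μ s = ∑ C ∈ P, μ (F C) := by
    intro s F hF hFm hFs
    have h1 : μ s = μ (s ∩ U) := by
      conv_lhs => rw [← measure_inter_add_diff s hUmeas]
      rw [hcover s, add_zero]
    have h2 : s ∩ U = ⋃ C ∈ P, F C := by
      rw [hUdef, Set.inter_iUnion₂]
      exact Set.iUnion₂_congr hF
    rw [h1, h2]
    refine measure_biUnion_finset ?_ fun C hC => hFm C hC
    intro C hC C' hC' hne
    exact Set.disjoint_of_subset (hFs C hC) (hFs C' hC')
      (hdisj C hC C' hC' hne)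
  -- LHS
  have hLHS : μ S = ∑ C ∈ P, μ (if φ (insert j C) = 1 ∧ φ C = 0 then E C else ∅) := by
    refine key S _ ?_ ?_ ?_
    · intro C hC
      by_cases hg : φ (insert j C) = 1 ∧ φ C = 0
      · rw [if_pos hg]
        ext ω
        exact ⟨fun h => h.2, fun h => ⟨(hpoint C hC ω h).2 hg, h⟩⟩
      · rw [if_neg hg]
        ext ω
        exact ⟨fun h => (hg ((hpoint C hC ω h.2).1 h.1)).elim, fun h => h.elim⟩
    · intro C hC
      split_ifs
      · exact hEmeas C
      · exact MeasurableSet.empty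
    · intro C hC
      split_ifs
      · exact le_refl _
      · exact Set.empty_subset _
  -- the events in the RHS
  have hRHS : ∀ A ∈ P, μ {ω | ∀ i ∈ A, X j ω < X i ω}
      = ∑ C ∈ P, μ (if A ⊆ C then E C else ∅) := by
    intro A hA
    refine key _ _ ?_ ?_ ?_
    · intro C hC
      by_cases hAC : A ⊆ C
      · rw [if_pos hAC]
        ext ω
        exact ⟨fun h => h.2, fun h => ⟨fun i hi => h.1 i (hAC hi), h⟩⟩
      · rw [if_neg hAC]
        ext ω
        refine ⟨fun h => ?_, fun h => h.elim⟩
        obtain ⟨i, hiA, hiC⟩ := Finset.not_subset.1 hAC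
        have hiE : i ∈ Finset.univ.erase j := mem_powerset.1 hA hiA
        exact (lt_asymm (h.1 i hiA) (h.2.2 i hiE hiC)).elim
    · intro C hC
      split_ifs
      · exact hEmeas C
      · exact MeasurableSet.empty
    · intro C hC
      split_ifs
      · exact le_refl _
      · exact Set.empty_subset _
  -- convert to real sums
  have htopS : ∀ (F : Finset (Fin n) → Set Ω) (s : Finset (Finset (Fin n))),
      (∑ C ∈ s, μ (F C)).toReal = ∑ C ∈ s, (μ (F C)).toReal := by
    intro F s
    exact ENNReal.toReal_sum fun C _ => measure_ne_top μ (F C)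
  calc (μ S).toReal
      = ∑ C ∈ P, (μ (if φ (insert j C) = 1 ∧ φ C = 0 then E C else ∅)).toReal := by
        rw [hLHS, htopS]
    _ = ∑ C ∈ P, (μ (E C)).toReal * ((φ (insert j C) : ℝ) - (φ C : ℝ)) := by
        refine Finset.sum_congr rfl fun C hC => ?_
        by_cases hg : φ (insert j C) = 1 ∧ φ C = 0
        · rw [if_pos hg, hg.1, hg.2]
          norm_num
        · rw [if_neg hg]
          have hmo : φ C ≤ φ (insert j C) := hmono (Finset.subset_insert j C)
          have h1 := hφ01 C
          have h2 := hφ01 (insert j C)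
          have heq : φ (insert j C) = φ C := by omega
          rw [heq]
          simp
    _ = ∑ A ∈ P, (μ {ω | ∀ i ∈ A, X j ω < X i ω}).toReal
          * ∑ B ∈ (insert j A).powerset,
              (-1 : ℝ) ^ ((insert j A).card - B.card) * (φ B : ℝ) := by
        have step : ∀ A ∈ P, (μ {ω | ∀ i ∈ A, X j ω < X i ω}).toReal
            = ∑ C ∈ P, (if A ⊆ C then (μ (E C)).toReal else 0) := by
          intro A hA
          rw [hRHS A hA, htopS]
          refine Finset.sum_congr rfl fun C hC => ?_
          split_ifs
          · rfl
          · simp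
        have hR : ∑ A ∈ P, (μ {ω | ∀ i ∈ A, X j ω < X i ω}).toReal
              * ∑ B ∈ (insert j A).powerset,
                  (-1 : ℝ) ^ ((insert j A).card - B.card) * (φ B : ℝ)
            = ∑ A ∈ P, (∑ C ∈ P, (if A ⊆ C then (μ (E C)).toReal else 0))
              * ∑ B ∈ (insert j A).powerset,
                  (-1 : ℝ) ^ ((insert j A).card - B.card) * (φ B : ℝ) :=
          Finset.sum_congr rfl fun A hA => by rw [step A hA]
        rw [hR]
        symm
        simp only [Finset.sum_mul, ite_mul, zero_mul]
        rw [Finset.sum_comm]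
        symm
        refine Finset.sum_congr rfl fun C hC => ?_
        rw [← Finset.sum_filter]
        have hfil : P.filter (fun A => A ⊆ C) = C.powerset := by
          ext A
          simp only [Finset.mem_filter, Finset.mem_powerset, hPdef]
          exact ⟨fun h => h.2, fun h => ⟨h.trans (mem_powerset.1 hC), h⟩⟩
        rw [hfil, ← Finset.mul_sum]
        congr 1
        have hjC : j ∉ C := fun h =>
          Finset.notMem_erase j Finset.univ (mem_powerset.1 hC h)
        exact (mobius_insert (fun B => (φ B : ℝ)) hjC).symm
end

section
/- For every semicoherent structure function φ and every k ∈ [n], the k-th coordinate of the signature satisfies p_k = ℙ(T = X_{k:n}) = Σ_{A ⊆ [n]} m_φ(A)·ℙ(X_{k:n} = min_{i∈A} X_i). -/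
open MeasureTheory ProbabilityTheory Finset

/-- The `k`-th order statistic (`k`-th smallest value) of `X 1 ω, …, X n ω`,
valued in `EReal` with the convention that the `0`-th order statistic is `−∞`. -/
noncomputable def orderStatE {Ω : Type*} {n : ℕ} (X : Fin n → Ω → ℝ) (k : ℕ) (ω : Ω) : EReal :=
  sInf {t : EReal | k ≤ (Finset.univ.filter fun i => (X i ω : EReal) ≤ t).card}

section Aux

variable {n : ℕ}

/-- Pure (non-random) version of the order statistic. -/
noncomputable def osE (y : Fin n → ℝ) (k : ℕ) : EReal :=
  sInf {t : EReal | k ≤ (Finset.univ.filter fun i => (y i : EReal) ≤ t).card}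

lemma orderStatE_eq_osE {Ω : Type*} (X : Fin n → Ω → ℝ) (k : ℕ) (ω : Ω) :
    orderStatE X k ω = osE (fun i => X i ω) k := rfl

lemma osE_eq (y : Fin n → ℝ) (k : ℕ) :
    osE y k = ⨅ (T : Finset (Fin n)) (_ : T.card = k), ⨆ i ∈ T, (y i : EReal) := by
  apply le_antisymm
  · refine le_iInf₂ fun T hT => ?_
    refine sInf_le ?_
    have hsub : T ⊆ Finset.univ.filter fun i => (y i : EReal) ≤ ⨆ j ∈ T, (y j : EReal) := by
      intro i hi
      exact mem_filter.mpr ⟨mem_univ _, le_iSup₂ (f := fun j (_ : j ∈ T) => (y j : EReal)) i hi⟩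
    simpa [Set.mem_setOf_eq, ← hT] using card_le_card hsub
  · refine le_sInf fun t ht => ?_
    obtain ⟨T, hTsub, hTcard⟩ := Finset.exists_subset_card_eq ht
    refine le_trans (iInf₂_le T hTcard) ?_
    exact iSup₂_le fun i hi => (mem_filter.mp (hTsub hi)).2

/-- The infimum over a nonempty finite set is attained. -/
lemma inf_attained (y : Fin n → ℝ) (A : Finset (Fin n)) (hA : A.Nonempty) :
    ∃ j ∈ A, (⨅ i ∈ A, (y i : EReal)) = (y j : EReal) := by
  obtain ⟨j, hjA, hj⟩ := A.exists_min_image y hA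
  exact ⟨j, hjA, le_antisymm (iInf₂_le j hjA)
    (le_iInf₂ fun i hi => EReal.coe_le_coe_iff.mpr (hj i hi))⟩

lemma osE_attained (y : Fin n → ℝ) (k : ℕ) (hk1 : 1 ≤ k) (hkn : k ≤ n) :
    ∃ i₀ : Fin n, (y i₀ : EReal) = osE y k := by
  rw [osE_eq]
  have hTex : ∃ T : Finset (Fin n), T.card = k := by
    obtain ⟨T, _, hT⟩ := Finset.exists_subset_card_eq
      (s := (Finset.univ : Finset (Fin n))) (by simpa using hkn)
    exact ⟨T, hT⟩
  -- the finset of all T with card k, nonempty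
  classical
  set 𝒯 : Finset (Finset (Fin n)) := Finset.univ.filter fun T => T.card = k with h𝒯
  have h𝒯ne : 𝒯.Nonempty := by
    obtain ⟨T, hT⟩ := hTex
    exact ⟨T, by simp [h𝒯, hT]⟩
  -- rewrite the iInf as inf over 𝒯 of values each atttained
  have hval : ∀ T ∈ 𝒯, ∃ j : Fin n, (⨆ i ∈ T, (y i : EReal)) = (y j : EReal) := by
    intro T hT
    have hTne : T.Nonempty := by
      rw [← Finset.card_pos]
      have : T.card = k := by simpa [h𝒯] using hT
      omega
    obtain ⟨j, hjT, hj⟩ := T.exists_max_image y hTne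
    exact ⟨j, le_antisymm (iSup₂_le fun i hi => EReal.coe_le_coe_iff.mpr (hj i hi))
      (le_iSup₂ (f := fun i (_ : i ∈ T) => (y i : EReal)) j hjT)⟩
  choose g hg using hval
  -- now the iInf equals min over 𝒯.attach of y of g
  obtain ⟨T₀, hT₀, hmin⟩ := 𝒯.attach.exists_min_image (fun T => y (g T.1 T.2))
    (h𝒯ne.attach)
  refine ⟨g T₀.1 T₀.2, le_antisymm ?_ ?_⟩
  · refine le_iInf₂ fun T hTk => ?_
    have hT𝒯 : T ∈ 𝒯 := by simp [h𝒯, hTk]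
    rw [hg T hT𝒯]
    exact EReal.coe_le_coe_iff.mpr (hmin ⟨T, hT𝒯⟩ (mem_attach _ _))
  · have hT₀k : T₀.1.card = k := by have := T₀.2; simpa [h𝒯] using this
    refine le_trans (iInf₂_le T₀.1 hT₀k) ?_
    rw [hg T₀.1 T₀.2]

end Aux

section Mobius

variable {n : ℕ}

lemma neg_one_pow_sum_real {α : Type*} [DecidableEq α] (x : Finset α) :
    (∑ m ∈ x.powerset, (-1 : ℝ) ^ m.card) = if x = ∅ then 1 else 0 := by
  have h := Finset.sum_powerset_neg_one_pow_card (x := x)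
  calc (∑ m ∈ x.powerset, (-1 : ℝ) ^ m.card)
      = ((∑ m ∈ x.powerset, (-1 : ℤ) ^ m.card : ℤ) : ℝ) := by push_cast; rfl
    _ = _ := by rw [h]; split_ifs <;> simp

lemma mobius_sum (φ : Finset (Fin n) → ℕ) (W : Finset (Fin n)) :
    ∑ A ∈ W.powerset, ∑ B ∈ A.powerset, (-1 : ℝ) ^ (A.card - B.card) * (φ B : ℝ)
      = (φ W : ℝ) := by
  classical
  rw [Finset.sum_comm' (s' := fun B => W.powerset.filter fun A => B ⊆ A) (t' := W.powerset)
    (by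
      intro A B
      simp only [mem_powerset, mem_filter]
      constructor
      · rintro ⟨h1, h2⟩; exact ⟨⟨h1, h2⟩, h2.trans h1⟩
      · rintro ⟨⟨h1, h2⟩, _⟩; exact ⟨h1, h2⟩)]
  have hinner : ∀ B ∈ W.powerset,
      (∑ A ∈ W.powerset.filter fun A => B ⊆ A, (-1 : ℝ) ^ (A.card - B.card) * (φ B : ℝ))
        = (if B = W then 1 else 0) * (φ B : ℝ) := by
    intro B hB
    have hBW : B ⊆ W := mem_powerset.mp hB
    have hre : (∑ A ∈ W.powerset.filter fun A => B ⊆ A, (-1 : ℝ) ^ (A.card - B.card))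
        = ∑ C ∈ (W \ B).powerset, (-1 : ℝ) ^ C.card := by
      refine Finset.sum_bij' (fun A _ => A \ B) (fun C _ => B ∪ C) ?_ ?_ ?_ ?_ ?_
      · intro A hA
        simp only [mem_filter, mem_powerset] at hA ⊢
        exact sdiff_subset_sdiff hA.1 subset_rfl
      · intro C hC
        simp only [mem_powerset] at hC
        simp only [mem_filter, mem_powerset]
        exact ⟨union_subset hBW (hC.trans (sdiff_subset)), subset_union_left⟩
      · intro A hA
        simp only [mem_filter, mem_powerset] at hA
        exact union_sdiff_of_subset hA.2
      · intro C hC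
        simp only [mem_powerset] at hC
        have hdisj : Disjoint B C :=
          Finset.disjoint_of_subset_right hC (Finset.disjoint_sdiff)
        exact union_sdiff_cancel_left hdisj
      · intro A hA
        simp only [mem_filter, mem_powerset] at hA
        rw [card_sdiff_of_subset hA.2]
    rw [← Finset.sum_mul, hre, neg_one_pow_sum_real]
    congr 1
    have : W \ B = ∅ ↔ B = W := by
      rw [sdiff_eq_empty_iff_subset]
      exact ⟨fun h => le_antisymm hBW h, fun h => h ▸ subset_rfl⟩
    simp [this]
  rw [Finset.sum_congr rfl hinner]
  have : ∀ B ∈ W.powerset, (if B = W then 1 else 0) * (φ B : ℝ)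
      = (if B = W then (φ B : ℝ) else 0) := by
    intro B _; split_ifs <;> simp
  rw [Finset.sum_congr rfl this, Finset.sum_ite_eq' W.powerset W (fun B => (φ B : ℝ))]
  simp

end Mobius

section Key

lemma key_pointwise (y : Fin n → ℝ) (hy : Function.Injective y)
    (φ : Finset (Fin n) → ℕ) (hφ01 : ∀ A, φ A ≤ 1)
    (hmono : ∀ ⦃A B : Finset (Fin n)⦄, A ⊆ B → φ A ≤ φ B)
    (hempty : φ ∅ = 0) (hfull : φ Finset.univ = 1)
    (k : ℕ) (hk1 : 1 ≤ k) (hkn : k ≤ n) :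
    (if (⨆ (A : Finset (Fin n)) (_ : φ A = 1), ⨅ i ∈ A, (y i : EReal)) = osE y k
        then (1 : ℝ) else 0)
      = ∑ A ∈ (Finset.univ : Finset (Fin n)).powerset,
          (∑ B ∈ A.powerset, (-1 : ℝ) ^ (A.card - B.card) * (φ B : ℝ))
            * (if osE y k = ⨅ i ∈ A, (y i : EReal) then (1 : ℝ) else 0) := by
  classical
  obtain ⟨i₀, hi₀⟩ := osE_attained y k hk1 hkn
  set u : EReal := osE y k with hu
  set U : Finset (Fin n) := Finset.univ.filter fun i => u ≤ (y i : EReal) with hUdef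
  set V : Finset (Fin n) := Finset.univ.filter fun i => u < (y i : EReal) with hVdef
  -- (i)
  have hiff : ∀ A : Finset (Fin n),
      (u = ⨅ i ∈ A, (y i : EReal)) ↔ (i₀ ∈ A ∧ A ⊆ U) := by
    intro A
    constructor
    · intro h
      rcases A.eq_empty_or_nonempty with hAe | hAne
      · exfalso
        rw [hAe] at h
        simp only [Finset.notMem_empty, iInf_false, iInf_top] at h
        exact EReal.coe_ne_top (y i₀) (hi₀.trans h)
      · obtain ⟨j, hjA, hjeq⟩ := inf_attained y A hAne
        have hji : j = i₀ := by
          apply hy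
          apply EReal.coe_injective
          rw [← hjeq, ← h, ← hi₀]
        constructor
        · exact hji ▸ hjA
        · intro i hi
          refine mem_filter.mpr ⟨mem_univ _, ?_⟩
          rw [h]
          exact iInf₂_le i hi
    · rintro ⟨h1, h2⟩
      apply le_antisymm
      · exact le_iInf₂ fun i hi => (mem_filter.mp (h2 hi)).2
      · exact le_of_le_of_eq (iInf₂_le i₀ h1) hi₀ |>.trans_eq rfl
  have hi₀U : i₀ ∈ U := mem_filter.mpr ⟨mem_univ _, hi₀.ge⟩
  have hVU : V = U.erase i₀ := by
    ext i
    simp only [hVdef, hUdef, mem_filter, mem_univ, true_and, mem_erase]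
    constructor
    · intro h
      refine ⟨fun hii => ?_, le_of_lt h⟩
      rw [hii, hi₀] at h
      exact lt_irrefl _ h
    · rintro ⟨hne, hle⟩
      refine lt_of_le_of_ne hle fun he => hne ?_
      exact (hy (EReal.coe_injective (hi₀.trans he))).symm
  -- RHS evaluation
  have hRHS : ∑ A ∈ (Finset.univ : Finset (Fin n)).powerset,
          (∑ B ∈ A.powerset, (-1 : ℝ) ^ (A.card - B.card) * (φ B : ℝ))
            * (if u = ⨅ i ∈ A, (y i : EReal) then (1 : ℝ) else 0)
      = (φ U : ℝ) - (φ V : ℝ) := by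
    have h1 : ∀ A ∈ (Finset.univ : Finset (Fin n)).powerset,
        (∑ B ∈ A.powerset, (-1 : ℝ) ^ (A.card - B.card) * (φ B : ℝ))
          * (if u = ⨅ i ∈ A, (y i : EReal) then (1 : ℝ) else 0)
        = (if u = ⨅ i ∈ A, (y i : EReal) then
            (∑ B ∈ A.powerset, (-1 : ℝ) ^ (A.card - B.card) * (φ B : ℝ)) else 0) := by
      intro A _; split_ifs <;> simp
    rw [Finset.sum_congr rfl h1, ← Finset.sum_filter]
    have h2 : (Finset.univ : Finset (Fin n)).powerset.filter
          (fun A => u = ⨅ i ∈ A, (y i : EReal))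
        = U.powerset.filter (fun A => i₀ ∈ A) := by
      ext A
      simp only [mem_filter, mem_powerset, subset_univ, true_and, hiff A]
      tauto
    rw [h2]
    have h3 := Finset.sum_filter_add_sum_filter_not U.powerset (fun A => i₀ ∈ A)
      (fun A => ∑ B ∈ A.powerset, (-1 : ℝ) ^ (A.card - B.card) * (φ B : ℝ))
    have h4 : U.powerset.filter (fun A => ¬ i₀ ∈ A) = (U.erase i₀).powerset := by
      ext A
      simp only [mem_filter, mem_powerset, Finset.subset_erase]
      try tauto
    rw [h4] at h3
    rw [mobius_sum φ U, mobius_sum φ (U.erase i₀)] at h3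
    rw [← hVU] at h3
    linarith [h3]
  rw [hRHS]
  -- LHS
  set T : EReal := ⨆ (A : Finset (Fin n)) (_ : φ A = 1), ⨅ i ∈ A, (y i : EReal) with hTdef
  have hVsubU : V ⊆ U := by rw [hVU]; exact erase_subset _ _
  have hii : T = u ↔ (φ U = 1 ∧ φ V = 0) := by
    constructor
    · intro hTu
      have hV0 : φ V = 0 := by
        by_contra h
        have hV1 : φ V = 1 := by have := hφ01 V; omega
        have hVne : V.Nonempty := by
          rw [nonempty_iff_ne_empty]
          intro he
          rw [he, hempty] at hV1
          omega
        obtain ⟨j, hjV, hjeq⟩ := inf_attained y V hVne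
        have h2 : u < (y j : EReal) := (mem_filter.mp hjV).2
        have h3 : (⨅ i ∈ V, (y i : EReal)) ≤ T :=
          le_iSup₂ (f := fun A (_ : φ A = 1) => ⨅ i ∈ A, (y i : EReal)) V hV1
        rw [hjeq, hTu] at h3
        exact absurd h2 (not_lt.mpr h3)
      have hU1 : φ U = 1 := by
        by_contra h
        have hU0 : φ U = 0 := by have := hφ01 U; omega
        -- every A with φ A = 1 meets the complement of U
        set W : Finset (Fin n) := Finset.univ.filter fun i => (y i : EReal) < u with hWdef
        have hmeet : ∀ A : Finset (Fin n), φ A = 1 → ∃ i ∈ A, i ∈ W := by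
          intro A hA
          have : ¬ A ⊆ U := fun hsub => by have := hmono hsub; omega
          obtain ⟨i, hiA, hiU⟩ := Finset.not_subset.mp this
          refine ⟨i, hiA, mem_filter.mpr ⟨mem_univ _, ?_⟩⟩
          have : ¬ u ≤ (y i : EReal) := fun hle =>
            hiU (mem_filter.mpr ⟨mem_univ _, hle⟩)
          exact not_le.mp this
        have hWne : W.Nonempty := by
          obtain ⟨i, _, hiW⟩ := hmeet Finset.univ hfull
          exact ⟨i, hiW⟩
        obtain ⟨j, hjW, hjmax⟩ := W.exists_max_image y hWne
        have hTle : T ≤ (y j : EReal) := by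
          refine iSup₂_le fun A hA => ?_
          obtain ⟨i, hiA, hiW⟩ := hmeet A hA
          exact le_trans (iInf₂_le i hiA) (EReal.coe_le_coe_iff.mpr (hjmax i hiW))
        have : u < u := lt_of_le_of_lt (hTu ▸ hTle) ((mem_filter.mp hjW).2)
        exact lt_irrefl _ this
      exact ⟨hU1, hV0⟩
    · rintro ⟨hU1, hV0⟩
      apply le_antisymm
      · refine iSup₂_le fun A hA => ?_
        have : ¬ A ⊆ V := fun hsub => by have := hmono hsub; omega
        obtain ⟨i, hiA, hiV⟩ := Finset.not_subset.mp this
        have hle : (y i : EReal) ≤ u := by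
          by_contra h
          exact hiV (mem_filter.mpr ⟨mem_univ _, not_le.mp h⟩)
        exact le_trans (iInf₂_le i hiA) hle
      · have h1 : u = ⨅ i ∈ U, (y i : EReal) := (hiff U).mpr ⟨hi₀U, subset_rfl⟩
        rw [h1]
        exact le_iSup₂ (f := fun A (_ : φ A = 1) => ⨅ i ∈ A, (y i : EReal)) U hU1
  have hle : φ V ≤ φ U := hmono hVsubU
  by_cases hU : φ U = 1
  · by_cases hV : φ V = 0
    · rw [if_pos (hii.mpr ⟨hU, hV⟩), hU, hV]; norm_num
    · have hV1 : φ V = 1 := by have := hφ01 V; omega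
      rw [if_neg (fun h => by have := (hii.mp h).2; omega), hU, hV1]; norm_num
  · have hU0 : φ U = 0 := by have := hφ01 U; omega
    have hV0 : φ V = 0 := by omega
    rw [if_neg (fun h => by have := (hii.mp h).1; omega), hU0, hV0]; norm_num
end Key

theorem barlow_proschan_stmt_8
    {Ω : Type*} [MeasureSpace Ω] [IsProbabilityMeasure (ℙ : Measure Ω)]
    {n : ℕ} (X : Fin n → Ω → ℝ) (hX : ∀ i, Measurable (X i))
    (hties : ∀ i j : Fin n, i ≠ j → (ℙ : Measure Ω) {ω | X i ω = X j ω} = 0)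
    (φ : Finset (Fin n) → ℕ) (hφ01 : ∀ A, φ A ≤ 1)
    (hmono : ∀ ⦃A B : Finset (Fin n)⦄, A ⊆ B → φ A ≤ φ B)
    (hempty : φ ∅ = 0) (hfull : φ Finset.univ = 1)
    (k : ℕ) (hk1 : 1 ≤ k) (hkn : k ≤ n) :
    ((ℙ : Measure Ω) {ω |
        (⨆ (A : Finset (Fin n)) (_ : φ A = 1), ⨅ i ∈ A, (X i ω : EReal))
          = orderStatE X k ω}).toReal
      = ∑ A ∈ (Finset.univ : Finset (Fin n)).powerset,
          (∑ B ∈ A.powerset, (-1 : ℝ) ^ (A.card - B.card) * (φ B : ℝ))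
            * ((ℙ : Measure Ω) {ω |
                orderStatE X k ω = ⨅ i ∈ A, (X i ω : EReal)}).toReal := by
  classical
  -- measurability
  have hXm : ∀ i, Measurable fun ω => (X i ω : EReal) := fun i =>
    measurable_coe_real_ereal.comp (hX i)
  have hinfA : ∀ A : Finset (Fin n), Measurable fun ω => ⨅ i ∈ A, (X i ω : EReal) :=
    fun A => Measurable.iInf fun i => Measurable.iInf fun _ => hXm i
  have hTm : Measurable fun ω =>
      ⨆ (A : Finset (Fin n)) (_ : φ A = 1), ⨅ i ∈ A, (X i ω : EReal) :=
    Measurable.iSup fun A => Measurable.iSup fun _ => hinfA A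
  have hOSm : Measurable fun ω => orderStatE X k ω := by
    have h : (fun ω => orderStatE X k ω)
        = fun ω => ⨅ (T : Finset (Fin n)) (_ : T.card = k), ⨆ i ∈ T, (X i ω : EReal) := by
      funext ω
      exact osE_eq (fun i => X i ω) k
    rw [h]
    exact Measurable.iInf fun T => Measurable.iInf fun _ =>
      Measurable.iSup fun i => Measurable.iSup fun _ => hXm i
  have meas_eq : ∀ (f g : Ω → EReal), Measurable f → Measurable g →
      MeasurableSet {ω | f ω = g ω} := by
    intro f g hf hg
    have : {ω | f ω = g ω} = {ω | f ω ≤ g ω} ∩ {ω | g ω ≤ f ω} := by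
      ext ω; simp [le_antisymm_iff]
    rw [this]
    exact (measurableSet_le hf hg).inter (measurableSet_le hg hf)
  set E : Set Ω := {ω |
      (⨆ (A : Finset (Fin n)) (_ : φ A = 1), ⨅ i ∈ A, (X i ω : EReal))
        = orderStatE X k ω} with hEdef
  have hE : MeasurableSet E := meas_eq _ _ hTm hOSm
  set F : Finset (Fin n) → Set Ω := fun A =>
    {ω | orderStatE X k ω = ⨅ i ∈ A, (X i ω : EReal)} with hFdef
  have hF : ∀ A, MeasurableSet (F A) := fun A => meas_eq _ _ hOSm (hinfA A)
  -- null set of ties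
  set N : Set Ω := ⋃ (i : Fin n) (j : Fin n) (_ : i ≠ j), {ω | X i ω = X j ω} with hNdef
  have hN : (ℙ : Measure Ω) N = 0 :=
    measure_iUnion_null fun i => measure_iUnion_null fun j =>
      measure_iUnion_null fun hij => hties i j hij
  have hae : ∀ᵐ ω ∂(ℙ : Measure Ω), Function.Injective fun i => X i ω := by
    have h1 : ∀ᵐ ω ∂(ℙ : Measure Ω), ω ∉ N := (measure_eq_zero_iff_ae_notMem).mp hN
    filter_upwards [h1] with ω hω
    intro i j hij
    by_contra hne
    exact hω (Set.mem_iUnion.mpr ⟨i, Set.mem_iUnion.mpr ⟨j, Set.mem_iUnion.mpr ⟨hne, hij⟩⟩⟩)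
  -- indicator functions
  have hfg : (fun ω => Set.indicator E (fun _ => (1 : ℝ)) ω)
      =ᵐ[(ℙ : Measure Ω)] (fun ω => ∑ A ∈ (Finset.univ : Finset (Fin n)).powerset,
          (∑ B ∈ A.powerset, (-1 : ℝ) ^ (A.card - B.card) * (φ B : ℝ))
            * Set.indicator (F A) (fun _ => (1 : ℝ)) ω) := by
    filter_upwards [hae] with ω hω
    have hkey := key_pointwise (fun i => X i ω) hω φ hφ01 hmono hempty hfull k hk1 hkn
    have hos : osE (fun i => X i ω) k = orderStatE X k ω := rfl
    rw [hos] at hkey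
    simp only [Set.indicator_apply, hEdef, hFdef, Set.mem_setOf_eq]
    exact hkey
  have hint : ∀ A : Finset (Fin n),
      Integrable (fun ω => Set.indicator (F A) (fun _ => (1 : ℝ)) ω) (ℙ : Measure Ω) :=
    fun A => (integrable_const (1 : ℝ)).indicator (hF A)
  calc ((ℙ : Measure Ω) E).toReal
      = ∫ ω, Set.indicator E (fun _ => (1 : ℝ)) ω ∂(ℙ : Measure Ω) := by
        rw [← measureReal_def, ← integral_indicator_one hE]; rfl
    _ = ∫ ω, (∑ A ∈ (Finset.univ : Finset (Fin n)).powerset,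
          (∑ B ∈ A.powerset, (-1 : ℝ) ^ (A.card - B.card) * (φ B : ℝ))
            * Set.indicator (F A) (fun _ => (1 : ℝ)) ω) ∂(ℙ : Measure Ω) :=
        integral_congr_ae hfg
    _ = ∑ A ∈ (Finset.univ : Finset (Fin n)).powerset,
          ∫ ω, (∑ B ∈ A.powerset, (-1 : ℝ) ^ (A.card - B.card) * (φ B : ℝ))
            * Set.indicator (F A) (fun _ => (1 : ℝ)) ω ∂(ℙ : Measure Ω) := by
        exact integral_finset_sum _ fun A _ => ((hint A).const_mul _)
    _ = ∑ A ∈ (Finset.univ : Finset (Fin n)).powerset,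
          (∑ B ∈ A.powerset, (-1 : ℝ) ^ (A.card - B.card) * (φ B : ℝ))
            * ((ℙ : Measure Ω) (F A)).toReal := by
        refine Finset.sum_congr rfl fun A _ => ?_
        rw [integral_const_mul, ← measureReal_def, ← integral_indicator_one (hF A)]
        rfl
end

section
/- For every k ∈ [n] and every nonempty A ⊆ [n], one has ℙ(X_{k:n} = min_{i∈A} X_i) = Σ_{B ⊇ A, |B| = n−k+1} q(B) − Σ_{B ⊇ A, |B| = n−k} q(B). -/
open MeasureTheory ProbabilityTheory Finset

lemma exists_rank {n : ℕ} (f : Fin n → ℝ) (hf : Function.Injective f) :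
    ∀ k, 1 ≤ k → k ≤ n → ∃ i, (univ.filter fun j => f j ≤ f i).card = k := by
  intro k
  induction k with
  | zero => intro h _; omega
  | succ k ih =>
    intro _ hkn
    rcases Nat.eq_zero_or_pos k with rfl | hk
    · have hn : 0 < n := hkn
      obtain ⟨i, -, hi⟩ := univ.exists_min_image f ⟨⟨0, hn⟩, mem_univ _⟩
      refine ⟨i, ?_⟩
      have h : (univ.filter fun j => f j ≤ f i) = {i} := by
        ext j
        simp only [mem_filter, mem_univ, true_and, mem_singleton]
        constructor
        · intro h; exact hf (le_antisymm h (hi j (mem_univ j)))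
        · rintro rfl; exact le_refl _
      rw [h, card_singleton]
    · obtain ⟨i, hi⟩ := ih hk (by omega)
      have hy : ∃ y, f i < f y := by
        by_contra h
        push_neg at h
        have heq : (univ.filter fun j => f j ≤ f i) = univ :=
          filter_true_of_mem fun x _ => h x
        rw [heq, card_univ, Fintype.card_fin] at hi
        omega
      obtain ⟨y, hy⟩ := hy
      obtain ⟨m, hm, hmin⟩ := (univ.filter fun j => f i < f j).exists_min_image f
        ⟨y, mem_filter.2 ⟨mem_univ _, hy⟩⟩
      have him : f i < f m := (mem_filter.1 hm).2
      refine ⟨m, ?_⟩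
      have h : (univ.filter fun j => f j ≤ f m) = insert m (univ.filter fun j => f j ≤ f i) := by
        ext j
        simp only [mem_filter, mem_univ, true_and, mem_insert]
        constructor
        · intro h
          rcases le_or_gt (f j) (f i) with h' | h'
          · exact Or.inr h'
          · exact Or.inl (hf (le_antisymm h (hmin j (mem_filter.2 ⟨mem_univ _, h'⟩))))
        · rintro (rfl | h)
          · exact le_refl _
          · exact h.trans him.le
      rw [h, card_insert_of_notMem (by
        simp only [mem_filter, mem_univ, true_and, not_le]; exact him), hi]

lemma orderStatE_eq {Ω : Type*} {n : ℕ} (X : Fin n → Ω → ℝ) (k : ℕ) (ω : Ω) (i₀ : Fin n)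
    (hinj : Function.Injective fun i => X i ω) (hk1 : 1 ≤ k)
    (hcard : (univ.filter fun j => X j ω ≤ X i₀ ω).card = k) :
    orderStatE X k ω = (X i₀ ω : EReal) := by
  unfold orderStatE
  apply le_antisymm
  · apply sInf_le
    show k ≤ _
    have h : (univ.filter fun i => (X i ω : EReal) ≤ (X i₀ ω : EReal))
        = univ.filter fun j => X j ω ≤ X i₀ ω := by
      apply filter_congr
      intro j _
      simp [EReal.coe_le_coe_iff]
    rw [h, hcard]
  · apply le_sInf
    intro t ht
    by_contra hlt
    push_neg at hlt
    have hins : (univ.filter fun j => X j ω ≤ X i₀ ω)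
        = insert i₀ (univ.filter fun j => X j ω < X i₀ ω) := by
      ext j
      simp only [mem_filter, mem_univ, true_and, mem_insert]
      constructor
      · intro h
        rcases eq_or_lt_of_le h with h | h
        · exact Or.inl (hinj h)
        · exact Or.inr h
      · rintro (rfl | h)
        · exact le_refl _
        · exact h.le
    rw [hins, card_insert_of_notMem (by simp)] at hcard
    have hsub : (univ.filter fun i => (X i ω : EReal) ≤ t)
        ⊆ univ.filter fun j => X j ω < X i₀ ω := by
      intro j hj
      simp only [mem_filter, mem_univ, true_and] at hj ⊢
      exact_mod_cast lt_of_le_of_lt hj hlt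
    have h2 := ht
    simp only [Set.mem_setOf_eq] at h2
    have h3 := card_le_card hsub
    omega

lemma key_fwd {n : ℕ} (f : Fin n → ℝ) (hf : Function.Injective f) (k : ℕ)
    (hk1 : 1 ≤ k) (hkn : k ≤ n) (A : Finset (Fin n)) (i_A : Fin n)
    (hiA : i_A ∈ A) (hmin : ∀ a ∈ A, f i_A ≤ f a)
    (hrk : (univ.filter fun j => f j ≤ f i_A).card = k) :
    (∃ B : Finset (Fin n), A ⊆ B ∧ B.card = n - k + 1 ∧ ∀ i ∉ B, ∀ l ∈ B, f i < f l) ∧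
      ¬ ∃ B : Finset (Fin n), A ⊆ B ∧ B.card = n - k ∧ ∀ i ∉ B, ∀ l ∈ B, f i < f l := by
  set B : Finset (Fin n) := univ.filter fun i => f i_A ≤ f i with hBdef
  have hAB : A ⊆ B := fun a ha => mem_filter.2 ⟨mem_univ _, hmin a ha⟩
  have hlt_card : (univ.filter fun j => f j < f i_A).card = k - 1 := by
    have hins : (univ.filter fun j => f j ≤ f i_A)
        = insert i_A (univ.filter fun j => f j < f i_A) := by
      ext j
      simp only [mem_filter, mem_univ, true_and, mem_insert]
      constructor
      · intro h
        rcases eq_or_lt_of_le h with h | h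
        · exact Or.inl (hf h)
        · exact Or.inr h
      · rintro (rfl | h)
        · exact le_refl _
        · exact h.le
    rw [hins, card_insert_of_notMem (by simp)] at hrk
    omega
  have hBcard : B.card = n - k + 1 := by
    have hcompl : B = univ \ (univ.filter fun j => f j < f i_A) := by
      ext j
      simp only [hBdef, mem_filter, mem_univ, true_and, mem_sdiff, not_lt]
    rw [hcompl, card_sdiff_of_subset (filter_subset _ _), card_univ, Fintype.card_fin, hlt_card]
    omega
  have hEB : ∀ i ∉ B, ∀ l ∈ B, f i < f l := by
    intro i hi l hl
    simp only [hBdef, mem_filter, mem_univ, true_and, not_le] at hi hl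
    exact lt_of_lt_of_le hi hl
  refine ⟨⟨B, hAB, hBcard, hEB⟩, ?_⟩
  rintro ⟨B₀, hAB₀, hc₀, hE₀⟩
  have hBB₀ : B ⊆ B₀ := by
    intro j hj
    by_contra hjn
    have h1 := hE₀ j hjn i_A (hAB₀ hiA)
    have h2 : f i_A ≤ f j := (mem_filter.1 hj).2
    exact absurd h1 (not_lt.2 h2)
  have := card_le_card hBB₀
  omega

lemma key_bwd {n : ℕ} (f : Fin n → ℝ) (hf : Function.Injective f) (k : ℕ)
    (hk1 : 1 ≤ k) (hkn : k ≤ n) (A : Finset (Fin n)) (i_A : Fin n)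
    (hiA : i_A ∈ A) (hmin : ∀ a ∈ A, f i_A ≤ f a)
    (B₁ : Finset (Fin n)) (hAB₁ : A ⊆ B₁) (hc₁ : B₁.card = n - k + 1)
    (hE₁ : ∀ i ∉ B₁, ∀ l ∈ B₁, f i < f l)
    (hno : ¬ ∃ B : Finset (Fin n), A ⊆ B ∧ B.card = n - k ∧ ∀ i ∉ B, ∀ l ∈ B, f i < f l) :
    (univ.filter fun j => f j ≤ f i_A).card = k := by
  have hiAB₁ : i_A ∈ B₁ := hAB₁ hiA
  -- i_A is the min of f on B₁
  have hminB₁ : ∀ b ∈ B₁, f i_A ≤ f b := by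
    by_contra h
    push_neg at h
    obtain ⟨b, hbB, hb⟩ := h
    obtain ⟨b', hb'B, hb'min⟩ := B₁.exists_min_image f ⟨i_A, hiAB₁⟩
    have hb'lt : f b' < f i_A := lt_of_le_of_lt (hb'min b hbB) hb
    have hb'A : b' ∉ A := fun hmem => absurd hb'lt (not_lt.2 (hmin b' hmem))
    refine hno ⟨B₁.erase b', ?_, ?_, ?_⟩
    · intro a ha
      exact mem_erase.2 ⟨fun he => hb'A (he ▸ ha), hAB₁ ha⟩
    · rw [card_erase_of_mem hb'B, hc₁]
      omega
    · intro i hi l hl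
      have hlB₁ : l ∈ B₁ := mem_of_mem_erase hl
      have hlb' : l ≠ b' := ne_of_mem_erase hl
      by_cases hiB₁ : i ∈ B₁
      · have hib' : i = b' := by
          by_contra hne
          exact hi (mem_erase.2 ⟨hne, hiB₁⟩)
        subst hib'
        exact lt_of_le_of_ne (hb'min l hlB₁) fun he => hlb' (hf he.symm)
      · exact hE₁ i hiB₁ l hlB₁
  have hset : (univ.filter fun j => f j ≤ f i_A) = insert i_A (univ \ B₁) := by
    ext j
    simp only [mem_filter, mem_univ, true_and, mem_insert, mem_sdiff]
    constructor
    · intro h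
      by_cases hj : j ∈ B₁
      · exact Or.inl (hf (le_antisymm h (hminB₁ j hj)))
      · exact Or.inr hj
    · rintro (rfl | hj)
      · exact le_refl _
      · exact (hE₁ j hj i_A hiAB₁).le
  rw [hset, card_insert_of_notMem (by simp [hiAB₁]),
    card_sdiff_of_subset (subset_univ _), card_univ, Fintype.card_fin, hc₁]
  omega

lemma key0 {n : ℕ} (f : Fin n → ℝ) (hf : Function.Injective f) (k : ℕ)
    (hk1 : 1 ≤ k) (hkn : k ≤ n) (A : Finset (Fin n))
    (B : Finset (Fin n)) (hAB : A ⊆ B) (hcard : B.card = n - k)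
    (hE : ∀ i ∉ B, ∀ l ∈ B, f i < f l) :
    ∃ B' : Finset (Fin n), A ⊆ B' ∧ B'.card = n - k + 1 ∧ ∀ i ∉ B', ∀ l ∈ B', f i < f l := by
  have hcompl : (Bᶜ : Finset (Fin n)).Nonempty := by
    rw [← card_pos, card_compl, Fintype.card_fin, hcard]
    omega
  obtain ⟨m, hm, hmax⟩ := (Bᶜ : Finset (Fin n)).exists_max_image f hcompl
  have hmB : m ∉ B := mem_compl.1 hm
  refine ⟨insert m B, hAB.trans (subset_insert _ _), ?_, ?_⟩
  · rw [card_insert_of_notMem hmB, hcard]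
  · intro i hi l hl
    have hiB : i ∉ B := fun h => hi (mem_insert_of_mem h)
    have him : i ≠ m := fun h => hi (h ▸ mem_insert_self _ _)
    rcases mem_insert.1 hl with rfl | hlB
    · exact lt_of_le_of_ne (hmax i (mem_compl.2 hiB)) fun he => him (hf he)
    · exact hE i hiB l hlB

theorem barlow_proschan_stmt_9
    {Ω : Type*} [MeasureSpace Ω] [IsProbabilityMeasure (ℙ : Measure Ω)]
    {n : ℕ} (X : Fin n → Ω → ℝ) (hX : ∀ i, Measurable (X i))
    (hties : ∀ i j : Fin n, i ≠ j → (ℙ : Measure Ω) {ω | X i ω = X j ω} = 0)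
    (k : ℕ) (hk1 : 1 ≤ k) (hkn : k ≤ n)
    (A : Finset (Fin n)) (hA : A.Nonempty) :
    ((ℙ : Measure Ω) {ω | orderStatE X k ω = ⨅ i ∈ A, (X i ω : EReal)}).toReal
      = ∑ B ∈ (Finset.univ : Finset (Fin n)).powerset.filter
            (fun B => A ⊆ B ∧ B.card = n - k + 1),
          ((ℙ : Measure Ω) {ω | ∀ i, i ∉ B → ∀ l ∈ B, X i ω < X l ω}).toReal
      - ∑ B ∈ (Finset.univ : Finset (Fin n)).powerset.filter
            (fun B => A ⊆ B ∧ B.card = n - k),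
          ((ℙ : Measure Ω) {ω | ∀ i, i ∉ B → ∀ l ∈ B, X i ω < X l ω}).toReal := by
  classical
  set E : Finset (Fin n) → Set Ω := fun B => {ω | ∀ i, i ∉ B → ∀ l ∈ B, X i ω < X l ω}
    with hEdef
  set s₁ : Finset (Finset (Fin n)) :=
    (Finset.univ : Finset (Fin n)).powerset.filter (fun B => A ⊆ B ∧ B.card = n - k + 1)
    with hs₁
  set s₀ : Finset (Finset (Fin n)) :=
    (Finset.univ : Finset (Fin n)).powerset.filter (fun B => A ⊆ B ∧ B.card = n - k)
    with hs₀
  -- measurability of E B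
  have hEmeas : ∀ B : Finset (Fin n), MeasurableSet (E B) := by
    intro B
    have h : E B = ⋂ (i : Fin n), ⋂ (l : Fin n), ⋂ (_ : i ∉ B ∧ l ∈ B), {ω | X i ω < X l ω} := by
      ext ω
      simp only [hEdef, Set.mem_iInter, Set.mem_setOf_eq]
      constructor
      · rintro h i l ⟨hi, hl⟩; exact h i hi l hl
      · intro h i hi l hl; exact h i l ⟨hi, hl⟩
    rw [h]
    exact MeasurableSet.iInter fun i => MeasurableSet.iInter fun l =>
      MeasurableSet.iInter fun _ => measurableSet_lt (hX i) (hX l)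
  -- pairwise disjointness for equal cardinality
  have hdisjgen : ∀ B B' : Finset (Fin n), B.card = B'.card → B ≠ B' →
      Disjoint (E B) (E B') := by
    intro B B' hc hne
    rw [Set.disjoint_left]
    intro ω hB hB'
    have h1 : ∃ i, i ∈ B ∧ i ∉ B' := by
      by_contra h
      push_neg at h
      exact hne (Finset.eq_of_subset_of_card_le (fun x hx => h x hx) hc.ge)
    have h2 : ∃ l, l ∈ B' ∧ l ∉ B := by
      by_contra h
      push_neg at h
      exact hne (Finset.eq_of_subset_of_card_le (fun x hx => h x hx) hc.le).symm
    obtain ⟨i, hiB, hiB'⟩ := h1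
    obtain ⟨l, hlB', hlB⟩ := h2
    have ha := hB l hlB i hiB
    have hb := hB' i hiB' l hlB'
    exact absurd hb (not_lt.2 ha.le)
  -- a.e. injectivity
  have hN : (ℙ : Measure Ω)
      (⋃ (i : Fin n), ⋃ (j : Fin n), ⋃ (_ : i ≠ j), {ω | X i ω = X j ω}) = 0 :=
    measure_iUnion_null fun i => measure_iUnion_null fun j =>
      measure_iUnion_null fun hne => hties i j hne
  have hinj_ae : ∀ᵐ ω ∂(ℙ : Measure Ω), Function.Injective fun i => X i ω := by
    rw [MeasureTheory.ae_iff]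
    refine measure_mono_null (fun ω hω => ?_) hN
    rw [Set.mem_setOf_eq, Function.not_injective_iff] at hω
    obtain ⟨i, j, hij, hne⟩ := hω
    exact Set.mem_iUnion.2 ⟨i, Set.mem_iUnion.2 ⟨j, Set.mem_iUnion.2 ⟨hne, hij⟩⟩⟩
  set U₁ : Set Ω := ⋃ B ∈ s₁, E B with hU₁
  set U₀ : Set Ω := ⋃ B ∈ s₀, E B with hU₀
  have hU₁mem : ∀ ω, ω ∈ U₁ ↔ ∃ B : Finset (Fin n),
      A ⊆ B ∧ B.card = n - k + 1 ∧ ∀ i ∉ B, ∀ l ∈ B, X i ω < X l ω := by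
    intro ω
    simp only [hU₁, hs₁, Set.mem_iUnion, mem_filter, mem_powerset, hEdef, Set.mem_setOf_eq]
    constructor
    · rintro ⟨B, ⟨-, hA, hc⟩, hE⟩; exact ⟨B, hA, hc, hE⟩
    · rintro ⟨B, hA, hc, hE⟩; exact ⟨B, ⟨subset_univ _, hA, hc⟩, hE⟩
  have hU₀mem : ∀ ω, ω ∈ U₀ ↔ ∃ B : Finset (Fin n),
      A ⊆ B ∧ B.card = n - k ∧ ∀ i ∉ B, ∀ l ∈ B, X i ω < X l ω := by
    intro ω
    simp only [hU₀, hs₀, Set.mem_iUnion, mem_filter, mem_powerset, hEdef, Set.mem_setOf_eq]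
    constructor
    · rintro ⟨B, ⟨-, hA, hc⟩, hE⟩; exact ⟨B, hA, hc, hE⟩
    · rintro ⟨B, hA, hc, hE⟩; exact ⟨B, ⟨subset_univ _, hA, hc⟩, hE⟩
  -- the main event is a.e. equal to U₁ \ U₀
  have hSeq : ({ω | orderStatE X k ω = ⨅ i ∈ A, (X i ω : EReal)} : Set Ω) =ᵐ[ℙ] (U₁ \ U₀ : Set Ω) := by
    rw [Filter.eventuallyEq_set]
    filter_upwards [hinj_ae] with ω hω
    obtain ⟨i_A, hiAm, hiAmin⟩ := A.exists_min_image (fun i => X i ω) hA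
    have hinf : (⨅ i ∈ A, (X i ω : EReal)) = (X i_A ω : EReal) :=
      le_antisymm (iInf₂_le _ hiAm)
        (le_iInf₂ fun i hi => EReal.coe_le_coe_iff.2 (hiAmin i hi))
    show (orderStatE X k ω = ⨅ i ∈ A, (X i ω : EReal)) ↔ ω ∈ U₁ \ U₀
    rw [Set.mem_diff, hU₁mem, hU₀mem]
    constructor
    · intro hS
      obtain ⟨i₀, hi₀⟩ := exists_rank (fun i => X i ω) hω k hk1 hkn
      have heval := orderStatE_eq X k ω i₀ hω hk1 hi₀
      have heq : X i₀ ω = X i_A ω := by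
        have h : (X i₀ ω : EReal) = (X i_A ω : EReal) := by rw [← heval, hS, hinf]
        exact_mod_cast h
      have hii : i₀ = i_A := hω heq
      rw [hii] at hi₀
      exact key_fwd (fun i => X i ω) hω k hk1 hkn A i_A hiAm hiAmin hi₀
    · rintro ⟨⟨B₁, hAB₁, hc₁, hE₁⟩, hno⟩
      have hrk := key_bwd (fun i => X i ω) hω k hk1 hkn A i_A hiAm hiAmin
        B₁ hAB₁ hc₁ hE₁ hno
      rw [hinf]
      exact orderStatE_eq X k ω i_A hω hk1 hrk
  -- U₀ is a.e. contained in U₁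
  have hU₀ae : (U₁ ∩ U₀ : Set Ω) =ᵐ[ℙ] U₀ := by
    rw [Filter.eventuallyEq_set]
    filter_upwards [hinj_ae] with ω hω
    rw [Set.mem_inter_iff]
    constructor
    · exact fun h => h.2
    · intro h
      refine ⟨?_, h⟩
      obtain ⟨B, hAB, hc, hE⟩ := (hU₀mem ω).1 h
      exact (hU₁mem ω).2 (key0 (fun i => X i ω) hω k hk1 hkn A B hAB hc hE)
  have hU₁meas : MeasurableSet U₁ := MeasurableSet.biUnion s₁.countable_toSet
    fun B _ => hEmeas B
  have hU₀meas : MeasurableSet U₀ := MeasurableSet.biUnion s₀.countable_toSet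
    fun B _ => hEmeas B
  have hmeq : (ℙ : Measure Ω) {ω | orderStatE X k ω = ⨅ i ∈ A, (X i ω : EReal)}
      = ℙ U₁ - ℙ U₀ := by
    rw [measure_congr hSeq]
    have hd : U₁ \ U₀ = U₁ \ (U₁ ∩ U₀) := by
      rw [Set.diff_self_inter]
    rw [hd, measure_diff Set.inter_subset_left
      (hU₁meas.inter hU₀meas).nullMeasurableSet (measure_ne_top _ _),
      measure_congr hU₀ae]
  have hsum₁ : (ℙ : Measure Ω) U₁ = ∑ B ∈ s₁, ℙ (E B) := by
    rw [hU₁]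
    exact measure_biUnion_finset
      (fun B hB B' hB' hne => hdisjgen B B' (by
        rw [hs₁] at hB hB'
        rw [(mem_filter.1 hB).2.2, (mem_filter.1 hB').2.2]) hne)
      (fun B _ => hEmeas B)
  have hsum₀ : (ℙ : Measure Ω) U₀ = ∑ B ∈ s₀, ℙ (E B) := by
    rw [hU₀]
    exact measure_biUnion_finset
      (fun B hB B' hB' hne => hdisjgen B B' (by
        rw [hs₀] at hB hB'
        rw [(mem_filter.1 hB).2.2, (mem_filter.1 hB').2.2]) hne)
      (fun B _ => hEmeas B)
  have hle : (ℙ : Measure Ω) U₀ ≤ ℙ U₁ := by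
    rw [← measure_congr hU₀ae]
    exact measure_mono Set.inter_subset_left
  rw [hmeq, ENNReal.toReal_sub_of_le hle (measure_ne_top _ _), hsum₁, hsum₀,
    ENNReal.toReal_sum (fun B _ => measure_ne_top _ _),
    ENNReal.toReal_sum (fun B _ => measure_ne_top _ _)]
end

section
/- For every semicoherent structure function φ and every k ∈ {0,…,n}, the tail signature satisfies ℙ(T > X_{k:n}) = Σ_{A ⊆ [n], |A| = n−k} q(A)·φ(A) = Σ_{A ⊆ [n]} m_φ(A)·ℙ(X_{k:n} < min_{i∈A} X_i). -/
open MeasureTheory ProbabilityTheory Finset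

section Aux

variable {Ω : Type*} {n : ℕ}

private lemma lt_biInf_iff' {B : Finset (Fin n)} {f : Fin n → EReal} {t : EReal} (ht : t < ⊤) :
    t < ⨅ i ∈ B, f i ↔ ∀ i ∈ B, t < f i := by
  rw [← Finset.inf_eq_iInf]
  exact Finset.lt_inf_iff ht

private lemma key_iff (X : Fin n → Ω → ℝ) {k : ℕ} (hkn : k ≤ n) {A : Finset (Fin n)}
    (hcard : A.card = n - k)
    {ω : Ω} (hS : ∀ i ∉ A, ∀ l ∈ A, X i ω < X l ω) (B : Finset (Fin n)) :
    orderStatE X k ω < ⨅ i ∈ B, (X i ω : EReal) ↔ B ⊆ A := by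
  classical
  have hcompl : (Finset.univ \ A).card = k := by
    rw [Finset.card_sdiff_of_subset (Finset.subset_univ A), Finset.card_univ, Fintype.card_fin, hcard]
    omega
  unfold orderStatE
  rw [sInf_lt_iff]
  constructor
  · rintro ⟨t, ht, htlt⟩ i hiB
    by_contra hiA
    have hk0 : k ≠ 0 := by
      intro h
      apply hiA
      have : A = Finset.univ := Finset.eq_univ_of_card A (by rw [hcard, h]; simp [Fintype.card_fin])
      simp [this]
    have hti : t < (X i ω : EReal) := lt_of_lt_of_le htlt (iInf₂_le i hiB)
    have hsub : (Finset.univ.filter fun j => (X j ω : EReal) ≤ t) ⊆ (Finset.univ \ A).erase i := by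
      intro j hj
      rw [Finset.mem_filter] at hj
      have hjt : (X j ω : EReal) ≤ t := hj.2
      have hji : X j ω < X i ω := by
        have := lt_of_le_of_lt hjt hti
        exact_mod_cast this
      refine Finset.mem_erase.2 ⟨?_, Finset.mem_sdiff.2 ⟨Finset.mem_univ j, ?_⟩⟩
      · rintro rfl; exact lt_irrefl _ hji
      · intro hjA
        exact absurd (hS i hiA j hjA) (by linarith)
    have hcardle := Finset.card_le_card hsub
    rw [Finset.card_erase_of_mem (Finset.mem_sdiff.2 ⟨Finset.mem_univ i, hiA⟩), hcompl] at hcardle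
    have ht' : k ≤ (Finset.univ.filter fun j => (X j ω : EReal) ≤ t).card := ht
    omega
  · intro hBA
    by_cases hk : k = 0
    · refine ⟨⊥, by simp [hk, Set.mem_setOf_eq], ?_⟩
      exact (lt_biInf_iff' (by simp)).2 fun i _ => EReal.bot_lt_coe _
    · have hne : (Finset.univ \ A).Nonempty := by
        rw [← Finset.card_pos, hcompl]; omega
      set t0 : ℝ := ((Finset.univ \ A).image fun j => X j ω).max' (hne.image _) with ht0
      obtain ⟨j0, hj0mem, hj0⟩ := Finset.mem_image.1 (((Finset.univ \ A).image fun j => X j ω).max'_mem (hne.image _))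
      refine ⟨(t0 : EReal), ?_, ?_⟩
      · show k ≤ (Finset.univ.filter fun j => (X j ω : EReal) ≤ (t0 : EReal)).card
        have : Finset.univ \ A ⊆ Finset.univ.filter fun j => (X j ω : EReal) ≤ (t0 : EReal) := by
          intro j hj
          refine Finset.mem_filter.2 ⟨Finset.mem_univ j, ?_⟩
          have := Finset.le_max' _ _ (Finset.mem_image_of_mem (fun j => X j ω) hj)
          exact_mod_cast this
        calc k = (Finset.univ \ A).card := hcompl.symm
          _ ≤ _ := Finset.card_le_card this
      · refine (lt_biInf_iff' (by simp)).2 fun i hi => ?_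
        have hj0A : j0 ∉ A := (Finset.mem_sdiff.1 hj0mem).2
        have := hS j0 hj0A i (hBA hi)
        rw [ht0, ← hj0]
        exact_mod_cast this

end Aux
section Aux2

variable {Ω : Type*} {n : ℕ}

private lemma T_iff (X : Fin n → Ω → ℝ) {k : ℕ} (hkn : k ≤ n) (φ : Finset (Fin n) → ℕ)
    (hφ01 : ∀ A, φ A ≤ 1) (hmono : ∀ ⦃A B : Finset (Fin n)⦄, A ⊆ B → φ A ≤ φ B)
    {A : Finset (Fin n)} (hcard : A.card = n - k)
    {ω : Ω} (hS : ∀ i ∉ A, ∀ l ∈ A, X i ω < X l ω) :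
    (orderStatE X k ω < ⨆ (B : Finset (Fin n)) (_ : φ B = 1), ⨅ i ∈ B, (X i ω : EReal))
      ↔ φ A = 1 := by
  rw [lt_iSup_iff]
  constructor
  · rintro ⟨B, hB⟩
    rw [lt_iSup_iff] at hB
    obtain ⟨hB1, hlt⟩ := hB
    have hBA := (key_iff X hkn hcard hS B).1 hlt
    have := hmono hBA
    have := hφ01 A
    omega
  · intro hA
    refine ⟨A, ?_⟩
    rw [lt_iSup_iff]
    exact ⟨hA, (key_iff X hkn hcard hS A).2 subset_rfl⟩

private lemma null_compl [MeasureSpace Ω] (X : Fin n → Ω → ℝ)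
    (hties : ∀ i j : Fin n, i ≠ j → (ℙ : Measure Ω) {ω | X i ω = X j ω} = 0) :
    (ℙ : Measure Ω) {ω | ¬ Function.Injective fun i => X i ω} = 0 := by
  classical
  have hsub : {ω | ¬ Function.Injective fun i => X i ω} ⊆
      ⋃ (i : Fin n), ⋃ (j : Fin n),
        (if i ≠ j then {ω | X i ω = X j ω} else ∅) := by
    intro ω hω
    obtain ⟨a, b, hab, hne⟩ := Function.not_injective_iff.1 hω
    refine Set.mem_iUnion.2 ⟨a, Set.mem_iUnion.2 ⟨b, ?_⟩⟩
    rw [if_pos hne]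
    exact hab
  refine measure_mono_null hsub ?_
  refine measure_iUnion_null fun i => measure_iUnion_null fun j => ?_
  split_ifs with h
  · exact hties i j h
  · simp

private lemma exists_top (X : Fin n → Ω → ℝ) {k : ℕ} (hkn : k ≤ n) {ω : Ω}
    (hinj : Function.Injective fun i => X i ω) :
    ∃ A : Finset (Fin n), A.card = n - k ∧ ∀ i ∉ A, ∀ l ∈ A, X i ω < X l ω := by
  classical
  set f : Fin n → ℝ := fun i => X i ω with hf
  set r : Fin n → ℕ := fun i => (Finset.univ.filter fun j => f j ≤ f i).card with hr
  have hmono : ∀ {i l}, f i ≤ f l → r i ≤ r l := by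
    intro i l h
    exact Finset.card_le_card (fun j hj => by
      rw [Finset.mem_filter] at hj ⊢
      exact ⟨hj.1, le_trans hj.2 h⟩)
  have hstrict : ∀ {i l}, f i < f l → r i < r l := by
    intro i l h
    apply Finset.card_lt_card
    constructor
    · intro j hj
      rw [Finset.mem_filter] at hj ⊢
      exact ⟨hj.1, le_trans hj.2 h.le⟩
    · intro hsub
      have := hsub (Finset.mem_filter.2 ⟨Finset.mem_univ l, le_rfl⟩)
      rw [Finset.mem_filter] at this
      exact absurd this.2 (not_le.2 h)
  have hrev : ∀ {i l}, r i < r l → f i < f l := by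
    intro i l h
    by_contra h'
    exact absurd (hmono (not_lt.1 h')) (by omega)
  have himg : Finset.univ.image r = Finset.Icc 1 n := by
    apply Finset.eq_of_subset_of_card_le
    · intro m hm
      obtain ⟨i, _, rfl⟩ := Finset.mem_image.1 hm
      refine Finset.mem_Icc.2 ⟨?_, ?_⟩
      · exact Finset.card_pos.2 ⟨i, Finset.mem_filter.2 ⟨Finset.mem_univ i, le_rfl⟩⟩
      · calc r i ≤ (Finset.univ : Finset (Fin n)).card := Finset.card_le_card (Finset.filter_subset _ _)
          _ = n := by simp
    · have hrinj : Function.Injective r := by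
        intro i j hij
        by_contra hne
        have hfij : f i ≠ f j := fun h => hne (hinj h)
        rcases lt_or_gt_of_ne hfij with h | h
        · exact absurd hij (Nat.ne_of_lt (hstrict h))
        · exact absurd hij.symm (Nat.ne_of_lt (hstrict h))
      rw [Finset.card_image_of_injective _ hrinj]
      simp [Nat.card_Icc]
  refine ⟨Finset.univ.filter fun i => k < r i, ?_, ?_⟩
  · have hrinj : Function.Injective r := by
      intro i j hij
      by_contra hne
      have hfij : f i ≠ f j := fun h => hne (hinj h)
      rcases lt_or_gt_of_ne hfij with h | h
      · exact absurd hij (Nat.ne_of_lt (hstrict h))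
      · exact absurd hij.symm (Nat.ne_of_lt (hstrict h))
    have h1 : ((Finset.univ.filter fun i => k < r i).image r).card
        = (Finset.univ.filter fun i => k < r i).card :=
      Finset.card_image_of_injective _ hrinj
    have h2 : (Finset.univ.filter fun i => k < r i).image r
        = (Finset.univ.image r).filter fun m => k < m := by
      rw [Finset.filter_image]
    have h3 : (Finset.Icc 1 n).filter (fun m => k < m) = Finset.Icc (k+1) n := by
      ext m
      simp only [Finset.mem_filter, Finset.mem_Icc]
      omega
    rw [← h1, h2, himg, h3, Nat.card_Icc]
    omega
  · intro i hi l hl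
    rw [Finset.mem_filter] at hl
    simp only [Finset.mem_filter, Finset.mem_univ, true_and, not_lt] at hi
    exact hrev (lt_of_le_of_lt hi hl.2)

end Aux2
section Aux3

variable {Ω : Type*} {n : ℕ}

private lemma measure_eq_sum [MeasureSpace Ω]
    {ι : Type*} [DecidableEq ι] (𝒞 : Finset ι) (S : ι → Set Ω)
    (hm : ∀ A ∈ 𝒞, MeasurableSet (S A))
    (hd : (↑𝒞 : Set ι).PairwiseDisjoint S)
    (hnull : (ℙ : Measure Ω) (⋃ A ∈ 𝒞, S A)ᶜ = 0)
    (E : Set Ω) (P : ι → Prop) [DecidablePred P]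
    (hE : ∀ A ∈ 𝒞, ∀ ω ∈ S A, (ω ∈ E ↔ P A)) :
    (ℙ : Measure Ω) E = ∑ A ∈ 𝒞, if P A then (ℙ : Measure Ω) (S A) else 0 := by
  classical
  set W : Set Ω := ⋃ A ∈ 𝒞.filter P, S A with hW
  have hEW : E =ᵐ[(ℙ : Measure Ω)] W := by
    rw [Filter.eventuallyEq_set, MeasureTheory.ae_iff]
    refine measure_mono_null ?_ hnull
    intro ω hω
    simp only [Set.mem_setOf_eq] at hω
    simp only [Set.mem_compl_iff, Set.mem_iUnion, not_exists]
    intro A hA hωA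
    apply hω
    have hEP := hE A hA ω hωA
    constructor
    · intro hωE
      exact Set.mem_iUnion.2 ⟨A, Set.mem_iUnion.2 ⟨Finset.mem_filter.2 ⟨hA, hEP.1 hωE⟩, hωA⟩⟩
    · intro hωW
      obtain ⟨B, hB⟩ := Set.mem_iUnion.1 hωW
      obtain ⟨hBf, hωB⟩ := Set.mem_iUnion.1 hB
      rw [Finset.mem_filter] at hBf
      have hAB : A = B := by
        by_contra hne
        exact (hd (Finset.mem_coe.2 hA) (Finset.mem_coe.2 hBf.1) hne).le_bot ⟨hωA, hωB⟩
      exact hEP.2 (hAB ▸ hBf.2)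
  rw [measure_congr hEW, hW,
    measure_biUnion_finset (hd.subset (by exact_mod_cast Finset.filter_subset P 𝒞))
      (fun A hA => hm A (Finset.mem_of_mem_filter A hA)),
    Finset.sum_filter]

private lemma alt_sum {α : Type*} [DecidableEq α] (s : Finset α) :
    ∑ D ∈ s.powerset, (-1 : ℝ) ^ D.card = if s = ∅ then 1 else 0 := by
  have h := Finset.sum_powerset_neg_one_pow_card (x := s)
  have : ((∑ m ∈ s.powerset, (-1 : ℤ) ^ m.card : ℤ) : ℝ)
      = ∑ D ∈ s.powerset, (-1 : ℝ) ^ D.card := by push_cast; ring_nf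
  rw [← this, h]
  split_ifs <;> simp

private lemma mobius (φ : Finset (Fin n) → ℕ) (C : Finset (Fin n)) :
    ∑ A ∈ C.powerset, ∑ B ∈ A.powerset, (-1 : ℝ) ^ (A.card - B.card) * (φ B : ℝ) = φ C := by
  classical
  have h1 : ∀ A ∈ C.powerset, ∑ B ∈ A.powerset, (-1 : ℝ) ^ (A.card - B.card) * (φ B : ℝ)
      = ∑ B ∈ C.powerset, if B ⊆ A then (-1 : ℝ) ^ (A.card - B.card) * (φ B : ℝ) else 0 := by
    intro A hA
    rw [Finset.mem_powerset] at hA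
    rw [← Finset.sum_filter]
    apply Finset.sum_congr _ (fun _ _ => rfl)
    ext B
    simp only [Finset.mem_filter, Finset.mem_powerset]
    exact ⟨fun h => ⟨h.trans hA, h⟩, fun h => h.2⟩
  rw [Finset.sum_congr rfl h1, Finset.sum_comm]
  have h2 : ∀ B ∈ C.powerset,
      (∑ A ∈ C.powerset, if B ⊆ A then (-1 : ℝ) ^ (A.card - B.card) * (φ B : ℝ) else 0)
      = (if B = C then (1:ℝ) else 0) * (φ B : ℝ) := by
    intro B hB
    rw [Finset.mem_powerset] at hB
    rw [← Finset.sum_filter, ← Finset.sum_mul]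
    congr 1
    have key : ∑ A ∈ C.powerset.filter (fun A => B ⊆ A), (-1 : ℝ) ^ (A.card - B.card)
        = ∑ D ∈ (C \ B).powerset, (-1 : ℝ) ^ D.card := by
      refine Finset.sum_nbij' (fun A => A \ B) (fun D => D ∪ B) ?_ ?_ ?_ ?_ ?_
      · intro A hA
        rw [Finset.mem_filter, Finset.mem_powerset] at hA
        exact Finset.mem_powerset.2 (Finset.sdiff_subset_sdiff hA.1 Finset.Subset.rfl)
      · intro D hD
        rw [Finset.mem_powerset] at hD
        rw [Finset.mem_filter, Finset.mem_powerset]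
        exact ⟨Finset.union_subset (hD.trans (Finset.sdiff_subset)) hB, Finset.subset_union_right⟩
      · intro A hA
        rw [Finset.mem_filter] at hA
        exact Finset.sdiff_union_of_subset hA.2
      · intro D hD
        rw [Finset.mem_powerset] at hD
        have hdisj : Disjoint D B := Finset.disjoint_of_subset_left hD Finset.sdiff_disjoint
        show (D ∪ B) \ B = D
        rw [Finset.union_sdiff_distrib, Finset.sdiff_self, Finset.union_empty,
          Finset.sdiff_eq_self_of_disjoint hdisj]
      · intro A hA
        rw [Finset.mem_filter] at hA
        rw [Finset.card_sdiff_of_subset hA.2]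
    rw [key, alt_sum]
    congr 1
    simp only [Finset.sdiff_eq_empty_iff_subset, eq_iff_iff]
    exact ⟨fun h => le_antisymm hB h, fun h => h ▸ Finset.Subset.rfl⟩
  rw [Finset.sum_congr rfl h2]
  have : ∀ B ∈ C.powerset, (if B = C then (1:ℝ) else 0) * (φ B : ℝ)
      = if B = C then (φ B : ℝ) else 0 := by
    intro B _; split_ifs <;> simp
  rw [Finset.sum_congr rfl this, Finset.sum_ite_eq' C.powerset C (fun B => (φ B : ℝ)),
    if_pos (Finset.mem_powerset_self C)]

end Aux3
theorem barlow_proschan_stmt_10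
    {Ω : Type*} [MeasureSpace Ω] [IsProbabilityMeasure (ℙ : Measure Ω)]
    {n : ℕ} (X : Fin n → Ω → ℝ) (hX : ∀ i, Measurable (X i))
    (hties : ∀ i j : Fin n, i ≠ j → (ℙ : Measure Ω) {ω | X i ω = X j ω} = 0)
    (φ : Finset (Fin n) → ℕ) (hφ01 : ∀ A, φ A ≤ 1)
    (hmono : ∀ ⦃A B : Finset (Fin n)⦄, A ⊆ B → φ A ≤ φ B)
    (hempty : φ ∅ = 0) (hfull : φ Finset.univ = 1)
    (k : ℕ) (hkn : k ≤ n) :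
    ((ℙ : Measure Ω) {ω | orderStatE X k ω <
        ⨆ (A : Finset (Fin n)) (_ : φ A = 1), ⨅ i ∈ A, (X i ω : EReal)}).toReal
      = ∑ A ∈ (Finset.univ : Finset (Fin n)).powerset.filter (fun A => A.card = n - k),
          ((ℙ : Measure Ω) {ω | ∀ i, i ∉ A → ∀ l ∈ A, X i ω < X l ω}).toReal * (φ A : ℝ)
    ∧ ((ℙ : Measure Ω) {ω | orderStatE X k ω <
        ⨆ (A : Finset (Fin n)) (_ : φ A = 1), ⨅ i ∈ A, (X i ω : EReal)}).toReal
      = ∑ A ∈ (Finset.univ : Finset (Fin n)).powerset,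
          (∑ B ∈ A.powerset, (-1 : ℝ) ^ (A.card - B.card) * (φ B : ℝ))
            * ((ℙ : Measure Ω) {ω |
                orderStatE X k ω < ⨅ i ∈ A, (X i ω : EReal)}).toReal := by
  classical
  have hmeas : ∀ A : Finset (Fin n),
      MeasurableSet {ω : Ω | ∀ i, i ∉ A → ∀ l ∈ A, X i ω < X l ω} := by
    intro A
    have : {ω : Ω | ∀ i, i ∉ A → ∀ l ∈ A, X i ω < X l ω}
        = ⋂ i, ⋂ (_ : i ∉ A), ⋂ l, ⋂ (_ : l ∈ A), {ω : Ω | X i ω < X l ω} := by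
      ext ω; simp [Set.mem_iInter]
    rw [this]
    exact MeasurableSet.iInter fun i => MeasurableSet.iInter fun _ =>
      MeasurableSet.iInter fun l => MeasurableSet.iInter fun _ =>
        measurableSet_lt (hX i) (hX l)
  set 𝒞 : Finset (Finset (Fin n)) :=
    (Finset.univ : Finset (Fin n)).powerset.filter (fun A => A.card = n - k) with h𝒞
  have hmem𝒞 : ∀ {A : Finset (Fin n)}, A ∈ 𝒞 ↔ A.card = n - k := by
    intro A; simp [h𝒞]
  have hdisj : (↑𝒞 : Set (Finset (Fin n))).PairwiseDisjoint
      (fun A => {ω : Ω | ∀ i, i ∉ A → ∀ l ∈ A, X i ω < X l ω}) := by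
    intro A hA B hB hAB
    rw [Finset.mem_coe, hmem𝒞] at hA hB
    rw [Function.onFun, Set.disjoint_left]
    intro ω hωA hωB
    have hcard : A.card = B.card := by rw [hA, hB]
    obtain ⟨i, hiA, hiB⟩ : ∃ i, i ∈ A ∧ i ∉ B := by
      by_contra h
      push_neg at h
      exact hAB (Finset.eq_of_subset_of_card_le h (le_of_eq hcard.symm))
    obtain ⟨j, hjB, hjA⟩ : ∃ j, j ∈ B ∧ j ∉ A := by
      by_contra h
      push_neg at h
      exact hAB (Finset.eq_of_subset_of_card_le h (le_of_eq hcard)).symm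
    have h1 := hωA j hjA i hiA
    have h2 := hωB i hiB j hjB
    linarith
  have hcover : (ℙ : Measure Ω)
      (⋃ A ∈ 𝒞, {ω : Ω | ∀ i, i ∉ A → ∀ l ∈ A, X i ω < X l ω})ᶜ = 0 := by
    refine measure_mono_null ?_ (null_compl X hties)
    intro ω hω
    simp only [Set.mem_compl_iff, Set.mem_iUnion, exists_prop, not_exists, not_and] at hω
    intro hinj
    obtain ⟨A, hcard, hprop⟩ := exists_top X hkn hinj
    exact hω A (hmem𝒞.2 hcard) (fun i hi l hl => hprop i hi l hl)
  have hE1 : (ℙ : Measure Ω) {ω | orderStatE X k ω <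
        ⨆ (A : Finset (Fin n)) (_ : φ A = 1), ⨅ i ∈ A, (X i ω : EReal)}
      = ∑ A ∈ 𝒞, if φ A = 1 then
          (ℙ : Measure Ω) {ω : Ω | ∀ i, i ∉ A → ∀ l ∈ A, X i ω < X l ω} else 0 := by
    refine measure_eq_sum 𝒞 _ (fun A _ => hmeas A) hdisj hcover _ (fun A => φ A = 1) ?_
    intro A hA ω hω
    exact T_iff X hkn φ hφ01 hmono (hmem𝒞.1 hA) hω
  have hE2 : ∀ B : Finset (Fin n),
      (ℙ : Measure Ω) {ω | orderStatE X k ω < ⨅ i ∈ B, (X i ω : EReal)}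
      = ∑ A ∈ 𝒞, if B ⊆ A then
          (ℙ : Measure Ω) {ω : Ω | ∀ i, i ∉ A → ∀ l ∈ A, X i ω < X l ω} else 0 := by
    intro B
    refine measure_eq_sum 𝒞 _ (fun A _ => hmeas A) hdisj hcover _ (fun A => B ⊆ A) ?_
    intro A hA ω hω
    exact key_iff X hkn (hmem𝒞.1 hA) hω B
  have hL : ((ℙ : Measure Ω) {ω | orderStatE X k ω <
        ⨆ (A : Finset (Fin n)) (_ : φ A = 1), ⨅ i ∈ A, (X i ω : EReal)}).toReal
      = ∑ A ∈ 𝒞, ((ℙ : Measure Ω) {ω : Ω | ∀ i, i ∉ A → ∀ l ∈ A, X i ω < X l ω}).toReal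
          * (φ A : ℝ) := by
    rw [hE1, ENNReal.toReal_sum (fun A _ => by
      split_ifs
      · exact measure_ne_top _ _
      · exact ENNReal.zero_ne_top)]
    refine Finset.sum_congr rfl fun A _ => ?_
    rcases Nat.le_one_iff_eq_zero_or_eq_one.1 (hφ01 A) with h | h
    · rw [if_neg (by omega), h]; simp
    · rw [if_pos h, h]; simp
  refine ⟨hL, ?_⟩
  rw [hL]
  symm
  have hR : ∀ A : Finset (Fin n),
      ((ℙ : Measure Ω) {ω | orderStatE X k ω < ⨅ i ∈ A, (X i ω : EReal)}).toReal
      = ∑ C ∈ 𝒞, if A ⊆ C then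
          ((ℙ : Measure Ω) {ω : Ω | ∀ i, i ∉ C → ∀ l ∈ C, X i ω < X l ω}).toReal else 0 := by
    intro A
    rw [hE2 A, ENNReal.toReal_sum (fun C _ => by
      split_ifs
      · exact measure_ne_top _ _
      · exact ENNReal.zero_ne_top)]
    refine Finset.sum_congr rfl fun C _ => ?_
    split_ifs <;> simp
  calc ∑ A ∈ (Finset.univ : Finset (Fin n)).powerset,
          (∑ B ∈ A.powerset, (-1 : ℝ) ^ (A.card - B.card) * (φ B : ℝ))
            * ((ℙ : Measure Ω) {ω |
                orderStatE X k ω < ⨅ i ∈ A, (X i ω : EReal)}).toReal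
      = ∑ A ∈ (Finset.univ : Finset (Fin n)).powerset, ∑ C ∈ 𝒞,
          (if A ⊆ C then (∑ B ∈ A.powerset, (-1 : ℝ) ^ (A.card - B.card) * (φ B : ℝ))
            * ((ℙ : Measure Ω) {ω : Ω | ∀ i, i ∉ C → ∀ l ∈ C, X i ω < X l ω}).toReal
            else 0) := by
        refine Finset.sum_congr rfl fun A _ => ?_
        rw [hR A, Finset.mul_sum]
        refine Finset.sum_congr rfl fun C _ => ?_
        split_ifs <;> simp
    _ = ∑ C ∈ 𝒞, ∑ A ∈ (Finset.univ : Finset (Fin n)).powerset,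
          (if A ⊆ C then (∑ B ∈ A.powerset, (-1 : ℝ) ^ (A.card - B.card) * (φ B : ℝ))
            * ((ℙ : Measure Ω) {ω : Ω | ∀ i, i ∉ C → ∀ l ∈ C, X i ω < X l ω}).toReal
            else 0) := Finset.sum_comm
    _ = ∑ C ∈ 𝒞, ((ℙ : Measure Ω) {ω : Ω | ∀ i, i ∉ C → ∀ l ∈ C, X i ω < X l ω}).toReal
          * (φ C : ℝ) := by
        refine Finset.sum_congr rfl fun C hC => ?_
        rw [← Finset.sum_filter]
        have hfilter : (Finset.univ : Finset (Fin n)).powerset.filter (fun A => A ⊆ C)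
            = C.powerset := by
          ext A
          simp only [Finset.mem_filter, Finset.mem_powerset]
          exact ⟨fun h => h.2, fun h => ⟨Finset.subset_univ A, h⟩⟩
        rw [hfilter, ← Finset.sum_mul, mobius φ C, mul_comm]
end

section
/- If the component lifetimes X_1,…,X_n are exchangeable (the joint law of (X_{σ(1)},…,X_{σ(n)}) equals that of (X_1,…,X_n) for every permutation σ of [n]) and have no ties, then for every semicoherent structure function φ and every j ∈ [n], ℙ(T = X_j) = b_j, where b_j is the Shapley–Shubik structural importance. -/
open MeasureTheory ProbabilityTheory Finset
open scoped ENNReal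

section BPAux
variable {Ω : Type*} [MeasureSpace Ω] {n : ℕ}


lemma swap_image_eq {α : Type*} [DecidableEq α] {a b : α} {s : Finset α}
    (ha : a ∈ s) (hb : b ∈ s) : s.image (Equiv.swap a b) = s := by
  apply Finset.eq_of_subset_of_card_le
  · intro y hy
    simp only [mem_image] at hy
    obtain ⟨x, hx, rfl⟩ := hy
    rcases eq_or_ne x a with rfl | hxa
    · rwa [Equiv.swap_apply_left]
    rcases eq_or_ne x b with rfl | hxb
    · rwa [Equiv.swap_apply_right]
    · rwa [Equiv.swap_apply_of_ne_of_ne hxa hxb]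
  · rw [Finset.card_image_of_injective _ (Equiv.injective _)]

lemma exists_perm {n : ℕ} {j j' : Fin n} {A B : Finset (Fin n)} (hjA : j ∉ A) (hjB : j' ∉ B)
    (hcard : A.card = B.card) : ∃ σ : Equiv.Perm (Fin n), σ j = j' ∧ A.image σ = B := by
  have hc : (insert j A).card = (insert j' B).card := by
    rw [card_insert_of_notMem hjA, card_insert_of_notMem hjB, hcard]
  set e : {x // x ∈ insert j A} ≃ {x // x ∈ insert j' B} := Finset.equivOfCardEq hc
  set σ0 : Equiv.Perm (Fin n) := e.extendSubtype
  have hmem : ∀ x ∈ insert j A, σ0 x ∈ insert j' B := fun x hx => e.extendSubtype_mem x hx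
  have himg0 : (insert j A).image σ0 = insert j' B := by
    apply Finset.eq_of_subset_of_card_le
    · intro y hy
      simp only [mem_image] at hy
      obtain ⟨x, hx, rfl⟩ := hy
      exact hmem x hx
    · rw [Finset.card_image_of_injective _ (Equiv.injective _)]
      exact hc.ge
  have hσ0j : σ0 j ∈ insert j' B := hmem j (mem_insert_self _ _)
  refine ⟨σ0.trans (Equiv.swap (σ0 j) j'), ?_, ?_⟩
  · simp [Equiv.swap_apply_left]
  · have himg : (insert j A).image (σ0.trans (Equiv.swap (σ0 j) j')) = insert j' B := by
      have h1 : (insert j A).image (σ0.trans (Equiv.swap (σ0 j) j'))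
          = ((insert j A).image σ0).image (Equiv.swap (σ0 j) j') := by
        ext y
        simp only [Finset.mem_image, Equiv.trans_apply]
        constructor
        · rintro ⟨x, hx, rfl⟩; exact ⟨σ0 x, ⟨x, hx, rfl⟩, rfl⟩
        · rintro ⟨z, ⟨x, hx, rfl⟩, rfl⟩; exact ⟨x, hx, rfl⟩
      rw [h1, himg0, swap_image_eq hσ0j (mem_insert_self _ _)]
    rw [Finset.image_insert] at himg
    have hσj : (σ0.trans (Equiv.swap (σ0 j) j')) j = j' := by simp [Equiv.swap_apply_left]
    rw [hσj] at himg
    have hj'img : j' ∉ A.image (σ0.trans (Equiv.swap (σ0 j) j')) := by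
      simp only [mem_image]
      rintro ⟨x, hx, hxe⟩
      have : x = j := Equiv.injective _ (hxe.trans hσj.symm)
      exact hjA (this ▸ hx)
    rw [← Finset.erase_insert hj'img, himg, Finset.erase_insert hjB]

lemma rank_subset_erase {n : ℕ} (x : Fin n → ℝ) (i : Fin n) :
    (univ.filter (fun l => x i < x l)) ⊆ univ.erase i := by
  intro l hl
  simp only [mem_filter] at hl
  simp only [mem_erase, mem_univ, and_true]
  rintro rfl
  exact lt_irrefl _ hl.2

lemma rank_lt {n : ℕ} (x : Fin n → ℝ) (i : Fin n) :
    (univ.filter (fun l => x i < x l)).card < n := by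
  calc (univ.filter (fun l => x i < x l)).card ≤ (univ.erase i).card :=
        Finset.card_le_card (rank_subset_erase x i)
    _ < n := by
        rw [Finset.card_erase_of_mem (mem_univ i), Finset.card_univ, Fintype.card_fin]
        have := i.pos
        omega

lemma rank_injective {n : ℕ} {x : Fin n → ℝ} (hx : Function.Injective x) :
    Function.Injective (fun i => (univ.filter fun l => x i < x l).card) := by
  have key : ∀ i i' : Fin n, x i < x i' →
      (univ.filter fun l => x i' < x l).card < (univ.filter fun l => x i < x l).card := by
    intro i i' h
    apply Finset.card_lt_card
    constructor
    · intro l hl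
      simp only [mem_filter, mem_univ, true_and] at hl ⊢
      exact h.trans hl
    · intro hsub
      have : i' ∈ univ.filter fun l => x i < x l := by simp [h]
      have := hsub this
      simp only [mem_filter] at this
      exact lt_irrefl _ this.2
  intro i i' h
  by_contra hne
  rcases lt_or_gt_of_ne (fun he => hne (hx he)) with hlt | hlt
  · exact absurd h.symm (Nat.ne_of_lt (key i i' hlt))
  · exact absurd h (Nat.ne_of_lt (key i' i hlt))

lemma rank_surj {n : ℕ} {x : Fin n → ℝ} (hx : Function.Injective x) {k : ℕ} (hk : k < n) :
    ∃ i, (univ.filter fun l => x i < x l).card = k := by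
  set ρ : Fin n → Fin n := fun i => ⟨(univ.filter fun l => x i < x l).card, rank_lt x i⟩
  have hρinj : Function.Injective ρ := by
    intro a b hab
    exact rank_injective hx (congrArg Fin.val hab)
  have hsurj := Finite.surjective_of_injective hρinj
  obtain ⟨i, hi⟩ := hsurj ⟨k, hk⟩
  exact ⟨i, congrArg Fin.val hi⟩

lemma lifetime_eq_iff {n : ℕ} (φ : Finset (Fin n) → ℕ) (hφ01 : ∀ A, φ A ≤ 1)
    (hmono : ∀ ⦃A B : Finset (Fin n)⦄, A ⊆ B → φ A ≤ φ B)
    (hempty : φ ∅ = 0) (hfull : φ Finset.univ = 1)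
    (x : Fin n → ℝ) (hx : Function.Injective x) (j : Fin n) :
    ((⨆ (A : Finset (Fin n)) (_ : φ A = 1), ⨅ i ∈ A, (x i : EReal)) = (x j : EReal))
      ↔ (φ (insert j (univ.filter fun i => x j < x i)) = 1
          ∧ φ (univ.filter fun i => x j < x i) = 0) := by
  set Aω := univ.filter fun i => x j < x i with hAω
  constructor
  · intro hT
    have h01 : ∀ A, φ A = 0 ∨ φ A = 1 := fun A => by have := hφ01 A; omega
    constructor
    · by_contra hne
      have hs0 : φ (insert j Aω) = 0 := (h01 _).resolve_right hne
      -- every path set A has an element outside insert j Aω, with x i < x j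
      have hout : ∀ A : Finset (Fin n), φ A = 1 → ∃ i ∈ A, x i < x j := by
        intro A hA
        have hns : ¬ A ⊆ insert j Aω := fun hsub => by
          have := hmono hsub; omega
        obtain ⟨i, hiA, hins⟩ := Finset.not_subset.mp hns
        refine ⟨i, hiA, ?_⟩
        simp only [Finset.mem_insert, hAω, mem_filter, mem_univ, true_and, not_or] at hins
        have hne' : x i ≠ x j := fun he => hins.1 (hx he)
        exact lt_of_le_of_ne (not_lt.mp hins.2) hne'
      obtain ⟨i0, _, hi0⟩ := hout univ (by exact hfull)
      set N := univ.filter fun i => x i < x j with hN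
      have hi0N : i0 ∈ N := by simp [hN, hi0]
      set M := N.image x with hM
      have hMne : M.Nonempty := ⟨x i0, Finset.mem_image_of_mem x hi0N⟩
      set m := M.max' hMne with hm
      have hmlt : m < x j := by
        rw [hm]
        apply (Finset.max'_lt_iff M hMne).mpr
        intro y hy
        obtain ⟨i, hiN, rfl⟩ := Finset.mem_image.mp hy
        simpa [hN] using (Finset.mem_filter.mp hiN).2
      have hTle : (⨆ (A : Finset (Fin n)) (_ : φ A = 1), ⨅ i ∈ A, (x i : EReal)) ≤ (m : EReal) := by
        apply iSup₂_le
        intro A hA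
        obtain ⟨i, hiA, hilt⟩ := hout A hA
        refine le_trans (iInf₂_le i hiA) ?_
        exact_mod_cast Finset.le_max' M (x i) (Finset.mem_image_of_mem x (by simp [hN, hilt]))
      rw [hT] at hTle
      exact absurd hTle (not_le.mpr (by exact_mod_cast hmlt))
    · by_contra hne
      have hs1 : φ Aω = 1 := (h01 _).resolve_left hne
      have hAne : Aω.Nonempty := by
        rcases Finset.eq_empty_or_nonempty Aω with he | h
        · rw [he] at hs1; omega
        · exact h
      set M := Aω.image x with hM
      have hMne : M.Nonempty := hAne.image x
      set m := M.min' hMne with hm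
      have hjm : (x j : EReal) < m := by
        have : x j < m := by
          rw [hm]
          apply (Finset.lt_min'_iff M hMne).mpr
          intro y hy
          obtain ⟨i, hiN, rfl⟩ := Finset.mem_image.mp hy
          simpa [hAω] using (Finset.mem_filter.mp hiN).2
        exact_mod_cast this
      have hTge : (m : EReal) ≤ ⨆ (A : Finset (Fin n)) (_ : φ A = 1), ⨅ i ∈ A, (x i : EReal) := by
        refine le_trans ?_ (le_iSup₂ (f := fun A (_ : φ A = 1) => ⨅ i ∈ A, (x i : EReal)) Aω hs1)
        apply le_iInf₂
        intro i hi
        exact_mod_cast Finset.min'_le M (x i) (Finset.mem_image_of_mem x hi)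
      rw [hT] at hTge
      exact absurd (lt_of_lt_of_le hjm hTge) (lt_irrefl _)
  · rintro ⟨h1, h0⟩
    apply le_antisymm
    · apply iSup₂_le
      intro A hA
      have hns : ¬ A ⊆ Aω := fun hsub => by have := hmono hsub; omega
      obtain ⟨i, hiA, hins⟩ := Finset.not_subset.mp hns
      have hile : x i ≤ x j := by
        simp only [hAω, mem_filter, mem_univ, true_and, not_lt] at hins
        exact hins
      exact le_trans (iInf₂_le i hiA) (by exact_mod_cast hile)
    · refine le_trans ?_ (le_iSup₂ (f := fun A (_ : φ A = 1) => ⨅ i ∈ A, (x i : EReal))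
        (insert j Aω) h1)
      apply le_iInf₂
      intro i hi
      rcases Finset.mem_insert.mp hi with rfl | hiA
      · exact le_refl _
      · have : x j < x i := by simpa [hAω] using (Finset.mem_filter.mp hiA).2
        exact_mod_cast this.le

lemma measurableSet_Sset (j : Fin n) (A : Finset (Fin n)) :
    MeasurableSet {x : Fin n → ℝ | univ.filter (fun i => x j < x i) = A} := by
  have : {x : Fin n → ℝ | univ.filter (fun i => x j < x i) = A}
      = ⋂ i : Fin n, {x : Fin n → ℝ | (x j < x i) ↔ i ∈ A} := by
    ext x
    simp only [Set.mem_setOf_eq, Set.mem_iInter, Finset.ext_iff, mem_filter, mem_univ, true_and]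
  rw [this]
  apply MeasurableSet.iInter
  intro i
  by_cases hi : i ∈ A
  · have : {x : Fin n → ℝ | (x j < x i) ↔ i ∈ A} = {x : Fin n → ℝ | x j < x i} := by
      ext x; simp [hi]
    rw [this]
    exact measurableSet_lt (measurable_pi_apply j) (measurable_pi_apply i)
  · have : {x : Fin n → ℝ | (x j < x i) ↔ i ∈ A} = {x : Fin n → ℝ | x j < x i}ᶜ := by
      ext x; simp [hi]
    rw [this]
    exact (measurableSet_lt (measurable_pi_apply j) (measurable_pi_apply i)).compl

lemma p_perm (X : Fin n → Ω → ℝ) (hX : ∀ i, Measurable (X i))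
    (hexch : ∀ σ : Equiv.Perm (Fin n),
      Measure.map (fun ω i => X (σ i) ω) (ℙ : Measure Ω)
        = Measure.map (fun ω i => X i ω) (ℙ : Measure Ω))
    (σ : Equiv.Perm (Fin n)) (j : Fin n) (A : Finset (Fin n)) :
    (ℙ : Measure Ω) {ω | univ.filter (fun i => X j ω < X i ω) = A}
      = (ℙ : Measure Ω) {ω | univ.filter (fun i => X (σ j) ω < X i ω) = A.image σ} := by
  have hΨ : Measurable (fun ω i => X i ω) := measurable_pi_lambda _ hX
  have hΦ : Measurable (fun ω i => X (σ i) ω) := measurable_pi_lambda _ (fun i => hX (σ i))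
  have h1 : {ω | univ.filter (fun i => X j ω < X i ω) = A}
      = (fun ω i => X i ω) ⁻¹' {x : Fin n → ℝ | univ.filter (fun i => x j < x i) = A} := rfl
  have h2 : (fun ω i => X (σ i) ω) ⁻¹' {x : Fin n → ℝ | univ.filter (fun i => x j < x i) = A}
      = {ω | univ.filter (fun i => X (σ j) ω < X i ω) = A.image σ} := by
    ext ω
    simp only [Set.mem_preimage, Set.mem_setOf_eq]
    have key : univ.filter (fun i => X (σ j) ω < X i ω)
        = (univ.filter (fun i => X (σ j) ω < X (σ i) ω)).image σ := by
      have := Finset.filter_image (f := ⇑σ) (s := univ)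
        (p := fun k => X (σ j) ω < X k ω)
      rw [Finset.image_univ_equiv] at this
      exact this
    constructor
    · intro h; rw [key, h]
    · intro h
      rw [key] at h
      exact (Finset.image_injective σ.injective) h
  rw [h1, ← Measure.map_apply hΨ (measurableSet_Sset j A), ← hexch σ,
    Measure.map_apply hΦ (measurableSet_Sset j A), h2]

lemma injective_compl_null {Ω : Type*} [MeasureSpace Ω] {n : ℕ} (X : Fin n → Ω → ℝ)
    (hX : ∀ i, Measurable (X i))
    (hties : ∀ i j : Fin n, i ≠ j → (ℙ : Measure Ω) {ω | X i ω = X j ω} = 0) :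
    (ℙ : Measure Ω) {ω | Function.Injective fun i => X i ω}ᶜ = 0 := by
  have hsub : {ω | Function.Injective fun i => X i ω}ᶜ ⊆ ⋃ (i : Fin n), ⋃ (i' : Fin n),
      {ω | X i ω = X i' ω ∧ i ≠ i'} := by
    intro ω hω
    simp only [Set.mem_compl_iff, Set.mem_setOf_eq, Function.Injective] at hω
    push_neg at hω
    obtain ⟨i, i', he, hne⟩ := hω
    simp only [Set.mem_iUnion, Set.mem_setOf_eq]
    exact ⟨i, i', he, hne⟩
  refine measure_mono_null hsub ?_
  apply measure_iUnion_null; intro i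
  apply measure_iUnion_null; intro i'
  by_cases hii : i = i'
  · subst hii
    have : {ω | X i ω = X i ω ∧ i ≠ i} = ∅ := by ext ω; simp
    rw [this]; exact measure_empty
  · exact measure_mono_null (fun ω h => h.1) (hties i i' hii)

lemma p_value [IsProbabilityMeasure (ℙ : Measure Ω)] (X : Fin n → Ω → ℝ)
    (hX : ∀ i, Measurable (X i))
    (hexch : ∀ σ : Equiv.Perm (Fin n),
      Measure.map (fun ω i => X (σ i) ω) (ℙ : Measure Ω)
        = Measure.map (fun ω i => X i ω) (ℙ : Measure Ω))
    (hties : ∀ i j : Fin n, i ≠ j → (ℙ : Measure Ω) {ω | X i ω = X j ω} = 0)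
    (j : Fin n) (A : Finset (Fin n)) (hA : A ⊆ univ.erase j) :
    (ℙ : Measure Ω) {ω | univ.filter (fun i => X j ω < X i ω) = A}
      = ((n : ℝ≥0∞) * ((n - 1).choose A.card : ℕ))⁻¹ := by
  have hΨ : Measurable (fun ω i => X i ω) := measurable_pi_lambda _ hX
  set k := A.card with hk
  have hkn1 : k ≤ n - 1 := by
    have := Finset.card_le_card hA
    rwa [Finset.card_erase_of_mem (mem_univ j), Finset.card_univ, Fintype.card_fin] at this
  have hn0 : 0 < n := j.pos
  have hkn : k < n := lt_of_le_of_lt hkn1 (by omega)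
  set E : Fin n → Finset (Fin n) → Set Ω :=
    fun j' B => {ω | univ.filter (fun i => X j' ω < X i ω) = B} with hE
  have measE : ∀ j' B, MeasurableSet (E j' B) := fun j' B =>
    hΨ (measurableSet_Sset j' B)
  set v := (ℙ : Measure Ω) (E j A) with hv
  have hjA : j ∉ A := fun h => (Finset.mem_erase.mp (hA h)).1 rfl
  -- all events with the same cardinality have the same probability
  have hpeq : ∀ (j' : Fin n) (B : Finset (Fin n)), j' ∉ B → B.card = k →
      (ℙ : Measure Ω) (E j' B) = v := by
    intro j' B hj'B hBk
    obtain ⟨σ, hσj, hσA⟩ := exists_perm hjA hj'B (hk ▸ hBk.symm)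
    rw [hv, hE]
    simp only
    rw [p_perm X hX hexch σ j A, hσj, hσA]
  -- the union event: component j' has rank k
  set G : Fin n → Set Ω := fun j' => ⋃ B ∈ (univ.erase j').powersetCard k, E j' B with hG
  have measG : ∀ j', MeasurableSet (G j') := fun j' =>
    MeasurableSet.biUnion (Finset.countable_toSet _) (fun B _ => measE j' B)
  have hGmem : ∀ (ω : Ω) (j' : Fin n),
      ω ∈ G j' ↔ (univ.filter fun i => X j' ω < X i ω).card = k := by
    intro ω j'
    simp only [hG, Set.mem_iUnion, exists_prop, Finset.mem_powersetCard]
    constructor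
    · rintro ⟨B, ⟨-, hBk⟩, hωB⟩
      rw [hωB]; exact hBk
    · intro hcard
      exact ⟨_, ⟨rank_subset_erase (fun i => X i ω) j', hcard⟩, rfl⟩
  have hGval : ∀ j', (ℙ : Measure Ω) (G j') = ((n - 1).choose k : ℝ≥0∞) * v := by
    intro j'
    rw [hG]
    simp only
    rw [measure_biUnion_finset ?_ (fun B _ => measE j' B)]
    · rw [Finset.sum_congr rfl (fun B hB => ?_), Finset.sum_const,
        Finset.card_powersetCard, Finset.card_erase_of_mem (mem_univ j'),
        Finset.card_univ, Fintype.card_fin, nsmul_eq_mul]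
      rw [Finset.mem_powersetCard] at hB
      exact hpeq j' B (fun h => (Finset.mem_erase.mp (hB.1 h)).1 rfl) hB.2
    · intro B1 h1 B2 h2 hne
      simp only [Set.disjoint_left]
      intro ω hω1 hω2
      exact hne (by rw [hE] at hω1 hω2; exact hω1.symm.trans hω2)
  -- the a.s. set of no ties
  set D : Set Ω := {ω | Function.Injective fun i => X i ω} with hD
  have measD : MeasurableSet D := by
    have : D = ⋂ (i : Fin n), ⋂ (i' : Fin n), {ω | X i ω = X i' ω → i = i'} := by
      ext ω
      simp only [hD, Set.mem_setOf_eq, Set.mem_iInter, Function.Injective]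
    rw [this]
    apply MeasurableSet.iInter; intro i
    apply MeasurableSet.iInter; intro i'
    by_cases hii : i = i'
    · subst hii
      have : {ω | X i ω = X i ω → i = i} = Set.univ := by ext ω; simp
      rw [this]; exact MeasurableSet.univ
    · have : {ω | X i ω = X i' ω → i = i'} = {ω | X i ω = X i' ω}ᶜ := by
        ext ω; simp [hii]
      rw [this]
      exact (measurableSet_eq_fun (hX i) (hX i')).compl
  have hDc : (ℙ : Measure Ω) Dᶜ = 0 := by
    have hsub : Dᶜ ⊆ ⋃ (i : Fin n), ⋃ (i' : Fin n),
        {ω | X i ω = X i' ω ∧ i ≠ i'} := by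
      intro ω hω
      simp only [hD, Set.mem_compl_iff, Set.mem_setOf_eq, Function.Injective] at hω
      push_neg at hω
      obtain ⟨i, i', he, hne⟩ := hω
      simp only [Set.mem_iUnion, Set.mem_setOf_eq]
      exact ⟨i, i', he, hne⟩
    refine measure_mono_null hsub ?_
    apply measure_iUnion_null; intro i
    apply measure_iUnion_null; intro i'
    by_cases hii : i = i'
    · subst hii
      have : {ω | X i ω = X i ω ∧ i ≠ i} = ∅ := by ext ω; simp
      rw [this]; exact measure_empty
    · exact measure_mono_null (fun ω h => h.1) (hties i i' hii)
  have hPD : (ℙ : Measure Ω) D = 1 := by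
    have h1 : (1 : ℝ≥0∞) = (ℙ : Measure Ω) Set.univ := (measure_univ).symm
    apply le_antisymm (le_trans (measure_mono (Set.subset_univ D)) (le_of_eq measure_univ))
    calc (1:ℝ≥0∞) = (ℙ : Measure Ω) Set.univ := h1
      _ ≤ (ℙ : Measure Ω) D + (ℙ : Measure Ω) Dᶜ := by
          refine le_trans (measure_mono (by rw [Set.union_compl_self])) (measure_union_le D Dᶜ)
      _ = (ℙ : Measure Ω) D := by rw [hDc, add_zero]
  -- sum over j' of P(G j') = 1
  have hGD : ∀ j', (ℙ : Measure Ω) (G j') = (ℙ : Measure Ω) (G j' ∩ D) := by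
    intro j'
    apply le_antisymm
    · calc (ℙ : Measure Ω) (G j') ≤ (ℙ : Measure Ω) ((G j' ∩ D) ∪ Dᶜ) := by
            apply measure_mono
            intro ω hω
            by_cases hωD : ω ∈ D
            · exact Or.inl ⟨hω, hωD⟩
            · exact Or.inr hωD
        _ ≤ (ℙ : Measure Ω) (G j' ∩ D) + (ℙ : Measure Ω) Dᶜ := measure_union_le _ _
        _ = (ℙ : Measure Ω) (G j' ∩ D) := by rw [hDc, add_zero]
    · exact measure_mono Set.inter_subset_left
  have hsum1 : ∑ j' : Fin n, (ℙ : Measure Ω) (G j' ∩ D) = 1 := by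
    rw [← measure_biUnion_finset ?_ (fun j' _ => (measG j').inter measD)]
    · have : ⋃ j' ∈ (univ : Finset (Fin n)), G j' ∩ D = D := by
        apply Set.Subset.antisymm
        · intro ω hω
          simp only [Set.mem_iUnion] at hω
          obtain ⟨j', -, -, hωD⟩ := hω
          exact hωD
        · intro ω hωD
          obtain ⟨i, hi⟩ := rank_surj (x := fun i => X i ω) hωD hkn
          simp only [Set.mem_iUnion]
          exact ⟨i, mem_univ i, (hGmem ω i).mpr hi, hωD⟩
      rw [this, hPD]
    · intro j1 h1 j2 h2 hne
      simp only [Set.disjoint_left]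
      intro ω hω1 hω2
      apply hne
      exact rank_injective hω1.2 (((hGmem ω j1).mp hω1.1).trans ((hGmem ω j2).mp hω2.1).symm)
  have hfinal : (n : ℝ≥0∞) * ((n - 1).choose k : ℝ≥0∞) * v = 1 := by
    calc (n : ℝ≥0∞) * ((n - 1).choose k : ℝ≥0∞) * v
        = ∑ _j' : Fin n, ((n - 1).choose k : ℝ≥0∞) * v := by
          rw [Finset.sum_const, Finset.card_univ, Fintype.card_fin, nsmul_eq_mul, mul_assoc]
      _ = ∑ j' : Fin n, (ℙ : Measure Ω) (G j' ∩ D) := by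
          refine Finset.sum_congr rfl (fun j' _ => ?_)
          rw [← hGD j', hGval j']
      _ = 1 := hsum1
  have hNne : ((n : ℝ≥0∞) * ((n - 1).choose k : ℝ≥0∞)) ≠ 0 := by
    apply mul_ne_zero
    · exact Nat.cast_ne_zero.mpr hn0.ne'
    · exact Nat.cast_ne_zero.mpr (Nat.choose_pos hkn1).ne'
  have hNnetop : ((n : ℝ≥0∞) * ((n - 1).choose k : ℝ≥0∞)) ≠ ⊤ := by
    exact ENNReal.mul_ne_top (ENNReal.natCast_ne_top n) (ENNReal.natCast_ne_top _)
  calc v = (((n : ℝ≥0∞) * ((n - 1).choose k : ℝ≥0∞))⁻¹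
        * ((n : ℝ≥0∞) * ((n - 1).choose k : ℝ≥0∞))) * v := by
        rw [ENNReal.inv_mul_cancel hNne hNnetop, one_mul]
    _ = ((n : ℝ≥0∞) * ((n - 1).choose k : ℝ≥0∞))⁻¹ := by
        rw [mul_assoc, hfinal, mul_one]

end BPAux

theorem barlow_proschan_stmt_11
    {Ω : Type*} [MeasureSpace Ω] [IsProbabilityMeasure (ℙ : Measure Ω)]
    {n : ℕ} (X : Fin n → Ω → ℝ) (hX : ∀ i, Measurable (X i))
    (hexch : ∀ σ : Equiv.Perm (Fin n),
      Measure.map (fun ω i => X (σ i) ω) (ℙ : Measure Ω)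
        = Measure.map (fun ω i => X i ω) (ℙ : Measure Ω))
    (hties : ∀ i j : Fin n, i ≠ j → (ℙ : Measure Ω) {ω | X i ω = X j ω} = 0)
    (φ : Finset (Fin n) → ℕ) (hφ01 : ∀ A, φ A ≤ 1)
    (hmono : ∀ ⦃A B : Finset (Fin n)⦄, A ⊆ B → φ A ≤ φ B)
    (hempty : φ ∅ = 0) (hfull : φ Finset.univ = 1)
    (j : Fin n) :
    ((ℙ : Measure Ω) {ω |
        (⨆ (A : Finset (Fin n)) (_ : φ A = 1), ⨅ i ∈ A, (X i ω : EReal))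
          = (X j ω : EReal)}).toReal
      = ∑ A ∈ (Finset.univ.erase j).powerset,
          ((φ (insert j A) : ℝ) - (φ A : ℝ)) / (n * (n - 1).choose A.card) := by
  classical
  have hΨ : Measurable (fun ω i => X i ω) := measurable_pi_lambda _ hX
  set E : Finset (Fin n) → Set Ω :=
    fun B => {ω | univ.filter (fun i => X j ω < X i ω) = B} with hE
  have measE : ∀ B, MeasurableSet (E B) := fun B => hΨ (measurableSet_Sset j B)
  set Piv : Finset (Finset (Fin n)) :=
    (univ.erase j).powerset.filter (fun A => φ (insert j A) = 1 ∧ φ A = 0) with hPiv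
  -- a.e. equality of the events
  have haeD : ∀ᵐ ω ∂(ℙ : Measure Ω), Function.Injective fun i => X i ω := by
    rw [MeasureTheory.ae_iff]
    have : {ω | ¬ Function.Injective fun i => X i ω}
        = {ω | Function.Injective fun i => X i ω}ᶜ := rfl
    rw [this]
    exact injective_compl_null X hX hties
  have hae : {ω | (⨆ (A : Finset (Fin n)) (_ : φ A = 1), ⨅ i ∈ A, (X i ω : EReal))
          = (X j ω : EReal)} =ᵐ[(ℙ : Measure Ω)] ⋃ A ∈ Piv, E A := by
    rw [Filter.eventuallyEq_set]
    filter_upwards [haeD] with ω hinj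
    rw [lifetime_eq_iff φ hφ01 hmono hempty hfull _ hinj j]
    constructor
    · rintro ⟨h1, h0⟩
      simp only [Set.mem_iUnion, exists_prop]
      refine ⟨univ.filter fun i => X j ω < X i ω, ?_, rfl⟩
      rw [hPiv, Finset.mem_filter, Finset.mem_powerset]
      exact ⟨rank_subset_erase (fun i => X i ω) j, h1, h0⟩
    · intro hω
      simp only [Set.mem_iUnion, exists_prop] at hω
      obtain ⟨B, hBPiv, hωB⟩ := hω
      rw [hPiv, Finset.mem_filter] at hBPiv
      rw [hE] at hωB
      simp only [Set.mem_setOf_eq] at hωB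
      rw [hωB]
      exact hBPiv.2
  rw [measure_congr hae]
  have hdisj : (↑Piv : Set (Finset (Fin n))).Pairwise (Function.onFun Disjoint E) := by
    intro B1 h1 B2 h2 hne
    simp only [Function.onFun, Set.disjoint_left]
    intro ω hω1 hω2
    exact hne (hω1.symm.trans hω2)
  rw [measure_biUnion_finset hdisj (fun B _ => measE B)]
  have hval : ∀ B ∈ Piv, (ℙ : Measure Ω) (E B)
      = ((n : ℝ≥0∞) * ((n - 1).choose B.card : ℕ))⁻¹ := by
    intro B hB
    rw [hPiv, Finset.mem_filter, Finset.mem_powerset] at hB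
    exact p_value X hX hexch hties j B hB.1
  rw [Finset.sum_congr rfl hval]
  have hn0 : 0 < n := j.pos
  have hcardle : ∀ B ∈ Piv, B.card ≤ n - 1 := by
    intro B hB
    rw [hPiv, Finset.mem_filter, Finset.mem_powerset] at hB
    have := Finset.card_le_card hB.1
    rwa [Finset.card_erase_of_mem (mem_univ j), Finset.card_univ, Fintype.card_fin] at this
  have hNnetop : ∀ B ∈ Piv,
      ((n : ℝ≥0∞) * ((n - 1).choose B.card : ℕ))⁻¹ ≠ ⊤ := by
    intro B hB
    rw [Ne, ENNReal.inv_eq_top]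
    exact mul_ne_zero (Nat.cast_ne_zero.mpr hn0.ne')
      (Nat.cast_ne_zero.mpr (Nat.choose_pos (hcardle B hB)).ne')
  rw [ENNReal.toReal_sum hNnetop]
  have h01 : ∀ A, φ A = 0 ∨ φ A = 1 := fun A => by have := hφ01 A; omega
  rw [hPiv, Finset.sum_filter]
  apply Finset.sum_congr rfl
  intro A hA
  by_cases hc : φ (insert j A) = 1 ∧ φ A = 0
  · rw [if_pos hc, hc.1, hc.2, ENNReal.toReal_inv, ENNReal.toReal_mul]
    simp [ENNReal.toReal_natCast, one_div]
  · rw [if_neg hc]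
    have heq : φ (insert j A) = φ A := by
      have hm := hmono (Finset.subset_insert j A)
      rcases h01 (insert j A) with h1 | h1 <;> rcases h01 A with h2 | h2 <;> omega
    rw [heq, sub_self, zero_div]
end

section
/- Let X_1,…,X_n be component lifetimes whose joint distribution has no ties. Then ℙ(T_φ = X_j) = b_j(φ) holds for every j ∈ [n] and every semicoherent structure function φ on n components if and only if q_j(A) = 1/(n·C(n−1,|A|)) for every j ∈ [n] and every A ⊆ [n]\{j}. -/
open MeasureTheory ProbabilityTheory Finset

section BPaux

set_option linter.unusedSectionVars false

variable {Ω : Type*} [MeasureSpace Ω] [IsProbabilityMeasure (ℙ : Measure Ω)]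
  {n : ℕ}

/-- The rank event: all components outside `A ∪ {j}` fail before `j`, all in `A` after. -/
def BPev (X : Fin n → Ω → ℝ) (j : Fin n) (A : Finset (Fin n)) : Set Ω :=
  {ω | (∀ i, i ∉ A → i ≠ j → X i ω < X j ω) ∧ ∀ i ∈ A, X j ω < X i ω}

lemma BPev_meas (X : Fin n → Ω → ℝ) (hX : ∀ i, Measurable (X i)) (j : Fin n)
    (A : Finset (Fin n)) : MeasurableSet (BPev X j A) := by
  have : BPev X j A =
      (⋂ i, ⋂ (_ : i ∉ A), ⋂ (_ : i ≠ j), {ω | X i ω < X j ω}) ∩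
        (⋂ i, ⋂ (_ : i ∈ A), {ω | X j ω < X i ω}) := by
    ext ω; simp [BPev, Set.mem_iInter]
  rw [this]
  exact (MeasurableSet.iInter fun i => .iInter fun _ => .iInter fun _ =>
      measurableSet_lt (hX i) (hX j)).inter
    (MeasurableSet.iInter fun i => .iInter fun _ => measurableSet_lt (hX j) (hX i))

lemma BPev_unique {X : Fin n → Ω → ℝ} {j : Fin n} {A B : Finset (Fin n)}
    (hjA : j ∉ A) (hjB : j ∉ B) {ω : Ω} (hA : ω ∈ BPev X j A) (hB : ω ∈ BPev X j B) :
    A = B := by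
  ext i
  by_cases hij : i = j
  · subst hij; simp [hjA, hjB]
  constructor
  · intro hi
    by_contra hiB
    exact lt_irrefl _ ((hA.2 i hi).trans (hB.1 i hiB hij))
  · intro hi
    by_contra hiA
    exact lt_irrefl _ ((hB.2 i hi).trans (hA.1 i hiA hij))

lemma BPpoint (X : Fin n → Ω → ℝ) (φ : Finset (Fin n) → ℕ) (hle : ∀ A, φ A ≤ 1)
    (hmono : ∀ ⦃A B : Finset (Fin n)⦄, A ⊆ B → φ A ≤ φ B)
    (h0 : φ ∅ = 0) (h1 : φ Finset.univ = 1) {j : Fin n} {B : Finset (Fin n)}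
    (hjB : j ∉ B) {ω : Ω} (hω : ω ∈ BPev X j B) :
    ((⨆ (A : Finset (Fin n)) (_ : φ A = 1), ⨅ i ∈ A, (X i ω : EReal)) = (X j ω : EReal))
      ↔ (φ (insert j B) = 1 ∧ φ B = 0) := by
  obtain ⟨hlow, hhigh⟩ := hω
  constructor
  · intro hT
    have hB0 : φ B = 0 := by
      by_contra hc
      have hB1 : φ B = 1 := le_antisymm (hle B) (Nat.one_le_iff_ne_zero.mpr hc)
      have hBne : B.Nonempty := by
        rcases B.eq_empty_or_nonempty with h | h
        · rw [h, h0] at hB1; exact absurd hB1 zero_ne_one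
        · exact h
      obtain ⟨i0, hi0, hmin⟩ := B.exists_min_image (fun i => X i ω) hBne
      have hlb : (X i0 ω : EReal) ≤ ⨅ i ∈ B, (X i ω : EReal) :=
        le_iInf₂ fun i hi => EReal.coe_le_coe_iff.mpr (hmin i hi)
      have hTlb : (X i0 ω : EReal) ≤
          ⨆ (A : Finset (Fin n)) (_ : φ A = 1), ⨅ i ∈ A, (X i ω : EReal) :=
        hlb.trans (le_iSup₂ (f := fun (A : Finset (Fin n)) (_ : φ A = 1) =>
          ⨅ i ∈ A, (X i ω : EReal)) B hB1)
      rw [hT] at hTlb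
      exact absurd (EReal.coe_le_coe_iff.mp hTlb) (not_le.mpr (hhigh i0 hi0))
    refine ⟨?_, hB0⟩
    by_contra hc
    have hB1 : φ (insert j B) = 0 := Nat.eq_zero_of_not_pos fun hp =>
      hc (le_antisymm (hle _) hp)
    set K : Finset (Fin n) := Finset.univ \ insert j B with hK
    have hKne : K.Nonempty := by
      rw [hK, Finset.sdiff_nonempty]
      intro hsub
      have := hmono hsub
      rw [h1, hB1] at this
      exact absurd this (by norm_num)
    obtain ⟨i1, hi1, hmax⟩ := K.exists_max_image (fun i => X i ω) hKne
    have hi1' : i1 ∉ B ∧ i1 ≠ j := by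
      rw [hK] at hi1
      simp only [Finset.mem_sdiff, Finset.mem_insert, Finset.mem_univ, true_and] at hi1
      tauto
    have hub : (⨆ (A : Finset (Fin n)) (_ : φ A = 1), ⨅ i ∈ A, (X i ω : EReal))
        ≤ (X i1 ω : EReal) := by
      refine iSup₂_le fun A hA => ?_
      have hnsub : ¬ A ⊆ insert j B := by
        intro hsub
        have := hmono hsub
        rw [hA, hB1] at this; exact absurd this (by norm_num)
      obtain ⟨i, hiA, hiK⟩ := Finset.not_subset.mp hnsub
      have hiK' : i ∈ K := by rw [hK]; simp [hiK]
      exact (iInf₂_le i hiA).trans (EReal.coe_le_coe_iff.mpr (hmax i hiK'))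
    rw [hT] at hub
    exact absurd (EReal.coe_le_coe_iff.mp hub)
      (not_le.mpr (hlow i1 hi1'.1 hi1'.2))
  · rintro ⟨hB1, hB0⟩
    apply le_antisymm
    · refine iSup₂_le fun A hA => ?_
      have hnsub : ¬ A ⊆ B := by
        intro hsub
        have := hmono hsub
        rw [hA, hB0] at this; exact absurd this (by norm_num)
      obtain ⟨i, hiA, hiB⟩ := Finset.not_subset.mp hnsub
      by_cases hij : i = j
      · subst hij; exact iInf₂_le i hiA
      · exact (iInf₂_le i hiA).trans (EReal.coe_le_coe_iff.mpr (hlow i hiB hij).le)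
    · have hlb : (X j ω : EReal) ≤ ⨅ i ∈ insert j B, (X i ω : EReal) := by
        refine le_iInf₂ fun i hi => ?_
        rcases Finset.mem_insert.mp hi with h | h
        · subst h; exact le_refl _
        · exact EReal.coe_le_coe_iff.mpr (hhigh i h).le
      exact hlb.trans (le_iSup₂ (f := fun (A : Finset (Fin n)) (_ : φ A = 1) =>
        ⨅ i ∈ A, (X i ω : EReal)) (insert j B) hB1)


lemma BPformula (X : Fin n → Ω → ℝ) (hX : ∀ i, Measurable (X i))
    (hties : ∀ i j : Fin n, i ≠ j → (ℙ : Measure Ω) {ω | X i ω = X j ω} = 0)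
    (φ : Finset (Fin n) → ℕ) (hle : ∀ A, φ A ≤ 1)
    (hmono : ∀ ⦃A B : Finset (Fin n)⦄, A ⊆ B → φ A ≤ φ B)
    (h0 : φ ∅ = 0) (h1 : φ Finset.univ = 1) (j : Fin n) :
    ((ℙ : Measure Ω) {ω |
        (⨆ (A : Finset (Fin n)) (_ : φ A = 1), ⨅ i ∈ A, (X i ω : EReal))
          = (X j ω : EReal)}).toReal
      = ∑ A ∈ (Finset.univ.erase j).powerset,
          ((φ (insert j A) : ℝ) - (φ A : ℝ)) * ((ℙ : Measure Ω) (BPev X j A)).toReal := by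
  classical
  set S : Finset (Fin n) := Finset.univ.erase j with hS
  set F : Finset (Finset (Fin n)) :=
    S.powerset.filter (fun A => φ (insert j A) = 1 ∧ φ A = 0) with hF
  have hjS : ∀ {A : Finset (Fin n)}, A ∈ S.powerset → j ∉ A := by
    intro A hA hjA
    exact absurd (Finset.mem_powerset.mp hA hjA) (by simp [hS])
  have hN : (ℙ : Measure Ω) (⋃ i ∈ (S : Set (Fin n)), {ω | X i ω = X j ω}) = 0 := by
    refine (measure_biUnion_null_iff S.countable_toSet).mpr fun i hi => ?_
    refine hties i j ?_
    simpa [hS] using hi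
  have hmem : ∀ ω, ω ∉ (⋃ i ∈ (S : Set (Fin n)), {ω | X i ω = X j ω}) →
      (ω ∈ {ω | (⨆ (A : Finset (Fin n)) (_ : φ A = 1), ⨅ i ∈ A, (X i ω : EReal))
          = (X j ω : EReal)} ↔ ω ∈ ⋃ A ∈ (F : Set (Finset (Fin n))), BPev X j A) := by
    intro ω hω
    have hne : ∀ i : Fin n, i ≠ j → X i ω ≠ X j ω := by
      intro i hij heq
      exact hω (Set.mem_biUnion (by simp [hS, hij]) heq)
    set B : Finset (Fin n) := S.filter (fun i => X j ω < X i ω) with hB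
    have hjB : j ∉ B := by simp [hB, hS]
    have hωB : ω ∈ BPev X j B := by
      constructor
      · intro i hiB hij
        have hiS : i ∈ S := by simp [hS, hij]
        have : ¬ X j ω < X i ω := fun h => hiB (by simp [hB, hiS, h])
        exact lt_of_le_of_ne (not_lt.mp this) (hne i hij)
      · intro i hi
        exact (Finset.mem_filter.mp hi).2
    have hBpow : B ∈ S.powerset := Finset.mem_powerset.mpr (Finset.filter_subset _ _)
    simp only [Set.mem_setOf_eq]
    rw [BPpoint X φ hle hmono h0 h1 hjB hωB]
    constructor
    · intro hcond
      exact Set.mem_biUnion (Finset.mem_coe.mpr (Finset.mem_filter.mpr ⟨hBpow, hcond⟩)) hωB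
    · intro hmem'
      obtain ⟨A, hAF, hωA⟩ := Set.mem_iUnion₂.mp hmem'
      have hAF' := Finset.mem_filter.mp hAF
      have : A = B := BPev_unique (hjS hAF'.1) hjB hωA hωB
      rw [← this]
      exact hAF'.2
  have hdisj : (F : Set (Finset (Fin n))).PairwiseDisjoint (BPev X j) := by
    intro A hA B hB hne
    have hA' := hjS (Finset.mem_filter.mp (Finset.mem_coe.mp hA)).1
    have hB' := hjS (Finset.mem_filter.mp (Finset.mem_coe.mp hB)).1
    exact Set.disjoint_left.mpr fun {ω} hωA hωB => hne (BPev_unique hA' hB' hωA hωB)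
  have hae : {ω | (⨆ (A : Finset (Fin n)) (_ : φ A = 1), ⨅ i ∈ A, (X i ω : EReal))
      = (X j ω : EReal)} =ᵐ[(ℙ : Measure Ω)] ⋃ A ∈ (F : Set (Finset (Fin n))), BPev X j A := by
    rw [Filter.eventuallyEq_set]
    filter_upwards [measure_eq_zero_iff_ae_notMem.mp hN] with ω hω
    exact hmem ω hω
  have key : (ℙ : Measure Ω) {ω |
      (⨆ (A : Finset (Fin n)) (_ : φ A = 1), ⨅ i ∈ A, (X i ω : EReal))
        = (X j ω : EReal)} = ∑ A ∈ F, (ℙ : Measure Ω) (BPev X j A) := by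
    rw [measure_congr hae]
    exact measure_biUnion_finset hdisj (fun A _ => BPev_meas X hX j A)
  rw [key, ENNReal.toReal_sum (fun A _ => measure_ne_top _ _), hF, Finset.sum_filter]
  refine Finset.sum_congr rfl fun A hA => ?_
  split_ifs with h
  · rw [h.1, h.2]; norm_num
  · have h1' := hle A
    have h2' := hle (insert j A)
    have h3' := hmono (Finset.subset_insert j A)
    have : φ (insert j A) = φ A := by
      rcases Decidable.not_and_iff_or_not.mp h with h' | h' <;> omega
    rw [this, sub_self, zero_mul]


lemma BPinv {α : Type*} [DecidableEq α] (S : Finset α) (f : Finset α → ℝ)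
    (H : ∀ A ∈ S.powerset, ∑ C ∈ S.powerset.filter (fun C => A ⊆ C), f C = 0) :
    ∀ A ∈ S.powerset, f A = 0 := by
  suffices h : ∀ m : ℕ, ∀ A ∈ S.powerset, S.card - A.card = m → f A = 0 by
    exact fun A hA => h _ A hA rfl
  intro m
  induction m using Nat.strong_induction_on with
  | _ m ih =>
    intro A hA hm
    have hAfilt : A ∈ S.powerset.filter (fun C => A ⊆ C) :=
      Finset.mem_filter.mpr ⟨hA, Finset.Subset.refl A⟩
    have hsum := H A hA
    rw [← Finset.add_sum_erase _ _ hAfilt] at hsum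
    have hzero : ∀ C ∈ (S.powerset.filter (fun C => A ⊆ C)).erase A, f C = 0 := by
      intro C hC
      obtain ⟨hne, hC'⟩ := Finset.mem_erase.mp hC
      obtain ⟨hCpow, hAC⟩ := Finset.mem_filter.mp hC'
      have h1 : A.card < C.card := Finset.card_lt_card (hAC.ssubset_of_ne (Ne.symm hne))
      have h2 : C.card ≤ S.card := Finset.card_le_card (Finset.mem_powerset.mp hCpow)
      exact ih (S.card - C.card) (by omega) C hCpow rfl
    rw [Finset.sum_eq_zero hzero, add_zero] at hsum
    exact hsum

end BPaux

theorem barlow_proschan_stmt_12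
    {Ω : Type*} [MeasureSpace Ω] [IsProbabilityMeasure (ℙ : Measure Ω)]
    {n : ℕ} (X : Fin n → Ω → ℝ) (hX : ∀ i, Measurable (X i))
    (hties : ∀ i j : Fin n, i ≠ j → (ℙ : Measure Ω) {ω | X i ω = X j ω} = 0) :
    (∀ φ : Finset (Fin n) → ℕ, (∀ A, φ A ≤ 1) →
        (∀ ⦃A B : Finset (Fin n)⦄, A ⊆ B → φ A ≤ φ B) →
        φ ∅ = 0 → φ Finset.univ = 1 →
        ∀ j : Fin n,
          ((ℙ : Measure Ω) {ω |
              (⨆ (A : Finset (Fin n)) (_ : φ A = 1), ⨅ i ∈ A, (X i ω : EReal))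
                = (X j ω : EReal)}).toReal
            = ∑ A ∈ (Finset.univ.erase j).powerset,
                ((φ (insert j A) : ℝ) - (φ A : ℝ)) / (n * (n - 1).choose A.card))
    ↔ (∀ (j : Fin n) (A : Finset (Fin n)), j ∉ A →
        ((ℙ : Measure Ω) {ω | (∀ i, i ∉ A → i ≠ j → X i ω < X j ω) ∧
            ∀ i ∈ A, X j ω < X i ω}).toReal
          = 1 / (n * (n - 1).choose A.card)) := by
  classical
  constructor
  · intro hyp j A hjA
    have hApow : A ∈ (Finset.univ.erase j).powerset := by
      rw [Finset.mem_powerset, Finset.subset_erase]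
      exact ⟨Finset.subset_univ A, hjA⟩
    set S : Finset (Fin n) := Finset.univ.erase j with hS
    have H : ∀ B ∈ S.powerset,
        ∑ C ∈ S.powerset.filter (fun C => B ⊆ C),
          (((ℙ : Measure Ω) (BPev X j C)).toReal
            - 1 / ((n : ℝ) * ((n - 1).choose C.card : ℝ))) = 0 := by
      intro B hB
      have hjB : j ∉ B := fun h => (Finset.mem_erase.mp (Finset.mem_powerset.mp hB h)).1 rfl
      let φ : Finset (Fin n) → ℕ := fun C => if insert j B ⊆ C then 1 else 0
      have hle : ∀ C, φ C ≤ 1 := fun C => by by_cases h : insert j B ⊆ C <;> simp [φ, h]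
      have hmono : ∀ ⦃C D : Finset (Fin n)⦄, C ⊆ D → φ C ≤ φ D := by
        intro C D hCD
        by_cases h : insert j B ⊆ C
        · simp [φ, h, h.trans hCD]
        · simp [φ, h]
      have h0 : φ ∅ = 0 := by simp [φ, Finset.insert_subset_iff]
      have h1 : φ Finset.univ = 1 := by simp [φ]
      have e1 := hyp φ hle hmono h0 h1 j
      rw [BPformula X hX hties φ hle hmono h0 h1 j] at e1
      have hδ : ∀ C ∈ S.powerset,
          ((φ (insert j C) : ℝ) - (φ C : ℝ)) = if B ⊆ C then 1 else 0 := by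
        intro C hC
        have hjC : j ∉ C := fun h => (Finset.mem_erase.mp (Finset.mem_powerset.mp hC h)).1 rfl
        have hins : insert j B ⊆ insert j C ↔ B ⊆ C := by
          constructor
          · intro h x hx
            rcases Finset.mem_insert.mp (h (Finset.mem_insert_of_mem hx)) with h' | h'
            · exact absurd (h' ▸ hx) hjB
            · exact h'
          · exact fun h => Finset.insert_subset_insert _ h
        have hnot : ¬ insert j B ⊆ C := fun h => hjC (h (Finset.mem_insert_self j B))
        by_cases h : B ⊆ C
        · simp [φ, hins.mpr h, hnot, h]
        · have hnot2 : ¬ insert j B ⊆ insert j C := fun hh => h (hins.mp hh)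
          simp [φ, hnot2, hnot, h]
      rw [Finset.sum_sub_distrib, sub_eq_zero, Finset.sum_filter, Finset.sum_filter]
      calc ∑ C ∈ S.powerset, (if B ⊆ C then ((ℙ : Measure Ω) (BPev X j C)).toReal else 0)
          = ∑ C ∈ S.powerset,
              ((φ (insert j C) : ℝ) - (φ C : ℝ)) * ((ℙ : Measure Ω) (BPev X j C)).toReal := by
            refine Finset.sum_congr rfl fun C hC => ?_
            rw [hδ C hC]; split_ifs <;> simp
        _ = ∑ C ∈ S.powerset,
              ((φ (insert j C) : ℝ) - (φ C : ℝ)) / ((n : ℝ) * ((n - 1).choose C.card : ℝ)) := e1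
        _ = ∑ C ∈ S.powerset,
              (if B ⊆ C then 1 / ((n : ℝ) * ((n - 1).choose C.card : ℝ)) else 0) := by
            refine Finset.sum_congr rfl fun C hC => ?_
            rw [hδ C hC]; split_ifs <;> simp
    have hfin := BPinv S
      (fun C => ((ℙ : Measure Ω) (BPev X j C)).toReal
        - 1 / ((n : ℝ) * ((n - 1).choose C.card : ℝ))) H A hApow
    exact sub_eq_zero.mp hfin
  · intro hq φ hle hmono h0 h1 j
    rw [BPformula X hX hties φ hle hmono h0 h1 j]
    refine Finset.sum_congr rfl fun A hA => ?_
    have hjA : j ∉ A := fun h => (Finset.mem_erase.mp (Finset.mem_powerset.mp hA h)).1 rfl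
    rw [show ((ℙ : Measure Ω) (BPev X j A)).toReal
        = 1 / ((n : ℝ) * ((n - 1).choose A.card : ℝ)) from hq j A hjA, mul_one_div]
end

section
/- If the map (j, A) ↦ q_j(A) is symmetric, i.e. q_{σ(j)}(σ(A)) = q_j(A) for every j ∈ [n], every A ⊆ [n]\{j}, and every permutation σ of [n], then q_j(A) = 1/(n·C(n−1,|A|)) for every j ∈ [n] and every A ⊆ [n]\{j}. -/
open MeasureTheory ProbabilityTheory Finset

lemma exists_perm_aux' {n : ℕ} {j j' : Fin n} {A A' : Finset (Fin n)}
    (hj : j ∉ A) (hj' : j' ∉ A') (hc : A.card = A'.card) :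
    ∃ σ : Equiv.Perm (Fin n), σ j = j' ∧ A.image σ = A' := by
  classical
  have hST : (insert j A).card = (insert j' A').card := by
    rw [card_insert_of_notMem hj, card_insert_of_notMem hj', hc]
  let eA : {x // x ∈ A} ≃ {x // x ∈ A'} := Finset.equivOfCardEq hc
  let eS : {x // x ∈ insert j A} ≃ {x // x ∈ insert j' A'} :=
    (Finset.subtypeInsertEquivOption hj).trans
      (eA.optionCongr.trans (Finset.subtypeInsertEquivOption hj').symm)
  have hcomp : Fintype.card {x : Fin n // ¬ x ∈ insert j A}
      = Fintype.card {x : Fin n // ¬ x ∈ insert j' A'} := by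
    rw [Fintype.card_subtype_compl, Fintype.card_subtype_compl,
      Fintype.card_coe, Fintype.card_coe, hST]
  let eC : {x : Fin n // ¬ x ∈ insert j A} ≃ {x : Fin n // ¬ x ∈ insert j' A'} :=
    Fintype.equivOfCardEq hcomp
  let σ : Equiv.Perm (Fin n) := Equiv.subtypeCongr eS eC
  have hin : ∀ (x : Fin n) (hx : x ∈ insert j A), σ x = ↑(eS ⟨x, hx⟩) := by
    intro x hx
    simp only [σ, Equiv.subtypeCongr, Equiv.trans_apply,
      Equiv.sumCompl_symm_apply_of_pos hx, Equiv.sumCongr_apply, Sum.map_inl,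
      Equiv.sumCompl_apply_inl]
  have hσj : σ j = j' := by
    rw [hin j (mem_insert_self _ _)]
    have : eS ⟨j, mem_insert_self _ _⟩ = ⟨j', mem_insert_self _ _⟩ := by
      simp [eS, Finset.subtypeInsertEquivOption, Equiv.symm]
    rw [this]
  have himg : A.image σ = A' := by
    have hsub : A.image σ ⊆ A' := by
      intro y hy
      rcases Finset.mem_image.mp hy with ⟨a, ha, rfl⟩
      rw [hin a (mem_insert_of_mem ha)]
      have hne : (a : Fin n) ≠ j := fun h => hj (h ▸ ha)
      have : eS ⟨a, mem_insert_of_mem ha⟩ = ⟨↑(eA ⟨a, ha⟩), mem_insert_of_mem (eA ⟨a, ha⟩).2⟩ := by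
        simp [eS, Finset.subtypeInsertEquivOption, hne, Equiv.symm]
      rw [this]
      exact (eA ⟨a, ha⟩).2
    refine Finset.eq_of_subset_of_card_le hsub ?_
    rw [Finset.card_image_of_injective _ σ.injective, hc]
  exact ⟨σ, hσj, himg⟩

theorem barlow_proschan_stmt_13
    {Ω : Type*} [MeasureSpace Ω] [IsProbabilityMeasure (ℙ : Measure Ω)]
    {n : ℕ} (X : Fin n → Ω → ℝ) (hX : ∀ i, Measurable (X i))
    (hties : ∀ i j : Fin n, i ≠ j → (ℙ : Measure Ω) {ω | X i ω = X j ω} = 0)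
    (hsymm : ∀ (σ : Equiv.Perm (Fin n)) (j : Fin n) (A : Finset (Fin n)), j ∉ A →
      ((ℙ : Measure Ω) {ω | (∀ i, i ∉ A.image σ → i ≠ σ j → X i ω < X (σ j) ω) ∧
          ∀ i ∈ A.image σ, X (σ j) ω < X i ω}).toReal
        = ((ℙ : Measure Ω) {ω | (∀ i, i ∉ A → i ≠ j → X i ω < X j ω) ∧
            ∀ i ∈ A, X j ω < X i ω}).toReal) :
    ∀ (j : Fin n) (A : Finset (Fin n)), j ∉ A →
      ((ℙ : Measure Ω) {ω | (∀ i, i ∉ A → i ≠ j → X i ω < X j ω) ∧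
          ∀ i ∈ A, X j ω < X i ω}).toReal
        = 1 / (n * (n - 1).choose A.card) := by
  classical
  set E : Fin n → Finset (Fin n) → Set Ω := fun j A =>
    {ω | (∀ i, i ∉ A → i ≠ j → X i ω < X j ω) ∧ ∀ i ∈ A, X j ω < X i ω} with hE
  set P : Fin n → Finset (Fin n) → ℝ := fun j A => ((ℙ : Measure Ω) (E j A)).toReal with hP
  -- measurability
  have hEvMeas : ∀ j A, MeasurableSet (E j A) := by
    intro j A
    have : E j A = (⋂ i, ⋂ (_ : i ∉ A), ⋂ (_ : i ≠ j), {ω | X i ω < X j ω}) ∩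
        ⋂ i, ⋂ (_ : i ∈ A), {ω | X j ω < X i ω} := by
      ext ω; simp [hE, Set.mem_iInter]
    rw [this]
    exact (MeasurableSet.iInter fun i => MeasurableSet.iInter fun _ =>
        MeasurableSet.iInter fun _ => measurableSet_lt (hX i) (hX j)).inter
      (MeasurableSet.iInter fun i => MeasurableSet.iInter fun _ =>
        measurableSet_lt (hX j) (hX i))
  -- constancy on cardinality
  have hconst : ∀ j A j' A', j ∉ A → j' ∉ A' → A.card = A'.card → P j' A' = P j A := by
    intro j A j' A' hj hj' hc
    obtain ⟨σ, hσj, himg⟩ := exists_perm_aux' hj hj' hc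
    have := hsymm σ j A hj
    rw [hσj, himg] at this
    exact this
  -- the bad set
  set bad : Set Ω := ⋃ (i : Fin n), ⋃ (i' : Fin n), ⋃ (_ : i ≠ i'), {ω | X i ω = X i' ω}
    with hbaddef
  have hbad : (ℙ : Measure Ω) bad = 0 :=
    measure_iUnion_null fun i => measure_iUnion_null fun i' =>
      measure_iUnion_null fun h => hties i i' h
  have hnotbad : ∀ ω, ω ∉ bad → ∀ i i' : Fin n, i ≠ i' → X i ω ≠ X i' ω := by
    intro ω hω i i' hne heq
    exact hω (Set.mem_iUnion.2 ⟨i, Set.mem_iUnion.2 ⟨i', Set.mem_iUnion.2 ⟨hne, heq⟩⟩⟩)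
  -- top events
  set Top : Finset (Fin n) → Set Ω := fun B => {ω | ∀ i ∉ B, ∀ i' ∈ B, X i ω < X i' ω}
    with hTop
  have hsub1 : ∀ B j, j ∉ B → E j B ⊆ Top B := by
    intro B j hj ω hω i hi i' hi'
    rcases eq_or_ne i j with rfl | hne
    · exact hω.2 i' hi'
    · exact lt_trans (hω.1 i hi hne) (hω.2 i' hi')
  have hsub2 : ∀ B j, j ∈ B → E j (B.erase j) ⊆ Top B := by
    intro B j hj ω hω i hi i' hi'
    have hij : i ≠ j := fun h => hi (h ▸ hj)
    have h1 : X i ω < X j ω := hω.1 i (fun h => hi (mem_of_mem_erase h)) hij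
    rcases eq_or_ne i' j with rfl | hne
    · exact h1
    · exact lt_trans h1 (hω.2 i' (mem_erase.2 ⟨hne, hi'⟩))
  -- claim A
  have claimA : ∀ B : Finset (Fin n), B ≠ univ →
      (ℙ : Measure Ω) (Top B) = ∑ j ∈ Bᶜ, (ℙ : Measure Ω) (E j B) := by
    intro B hB
    have hBc : Bᶜ.Nonempty := by
      rw [← Finset.card_pos, Finset.card_compl]
      have : B.card < Fintype.card (Fin n) := by
        rcases lt_or_eq_of_le (Finset.card_le_univ B) with h | h
        · simpa using h
        · exact absurd (Finset.eq_univ_of_card _ (by simpa using h)) hB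
      omega
    have hcover : Top B ⊆ (⋃ j ∈ (↑(Bᶜ) : Set (Fin n)), E j B) ∪ bad := by
      intro ω hω
      by_cases hωb : ω ∈ bad
      · exact Or.inr hωb
      left
      obtain ⟨j, hjmem, hjmax⟩ := Finset.exists_max_image Bᶜ (fun i => X i ω) hBc
      have hjB : j ∉ B := Finset.mem_compl.1 hjmem
      refine Set.mem_biUnion (by simpa using hjmem) ⟨?_, fun i hi => hω j hjB i hi⟩
      intro i hi hne
      exact lt_of_le_of_ne (hjmax i (Finset.mem_compl.2 hi))
        (hnotbad ω hωb i j hne)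
    have hdisj : (↑(Bᶜ) : Set (Fin n)).PairwiseDisjoint (fun j => E j B) := by
      intro j hj j' hj' hne
      simp only [Function.onFun]
      rw [Set.disjoint_left]
      intro ω h1 h2
      have hj'B : j' ∉ B := Finset.mem_compl.1 (by simpa using hj')
      have hjB : j ∉ B := Finset.mem_compl.1 (by simpa using hj)
      have := h1.1 j' hj'B hne.symm
      have := h2.1 j hjB hne
      linarith
    have h1 : (ℙ : Measure Ω) (Top B) ≤ (ℙ : Measure Ω) (⋃ j ∈ (↑(Bᶜ) : Set (Fin n)), E j B) := by
      calc (ℙ : Measure Ω) (Top B) ≤ (ℙ : Measure Ω) ((⋃ j ∈ (↑(Bᶜ) : Set (Fin n)), E j B) ∪ bad) :=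
            measure_mono hcover
        _ ≤ (ℙ : Measure Ω) (⋃ j ∈ (↑(Bᶜ) : Set (Fin n)), E j B) + (ℙ : Measure Ω) bad :=
            measure_union_le _ _
        _ = _ := by rw [hbad, add_zero]
    have h2 : (ℙ : Measure Ω) (⋃ j ∈ (↑(Bᶜ) : Set (Fin n)), E j B) ≤ (ℙ : Measure Ω) (Top B) :=
      measure_mono (Set.iUnion₂_subset fun j hj => hsub1 B j (Finset.mem_compl.1 (by simpa using hj)))
    rw [← measure_biUnion_finset hdisj fun j _ => hEvMeas j B]
    exact le_antisymm h1 h2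
  -- claim B
  have claimB : ∀ B : Finset (Fin n), B.Nonempty →
      (ℙ : Measure Ω) (Top B) = ∑ j ∈ B, (ℙ : Measure Ω) (E j (B.erase j)) := by
    intro B hB
    have hcover : Top B ⊆ (⋃ j ∈ (↑B : Set (Fin n)), E j (B.erase j)) ∪ bad := by
      intro ω hω
      by_cases hωb : ω ∈ bad
      · exact Or.inr hωb
      left
      obtain ⟨j, hjmem, hjmin⟩ := Finset.exists_min_image B (fun i => X i ω) hB
      refine Set.mem_biUnion (by simpa using hjmem) ⟨?_, ?_⟩
      · intro i hi hne
        have hiB : i ∉ B := fun h => hi (Finset.mem_erase.2 ⟨hne, h⟩)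
        exact hω i hiB j hjmem
      · intro i hi
        have := hjmin i (Finset.mem_of_mem_erase hi)
        exact lt_of_le_of_ne this (hnotbad ω hωb j i (Finset.ne_of_mem_erase hi).symm)
    have hdisj : (↑B : Set (Fin n)).PairwiseDisjoint (fun j => E j (B.erase j)) := by
      intro j hj j' hj' hne
      simp only [Function.onFun]
      rw [Set.disjoint_left]
      intro ω h1 h2
      have hjB : j ∈ B := by simpa using hj
      have hj'B : j' ∈ B := by simpa using hj'
      have := h1.2 j' (Finset.mem_erase.2 ⟨hne.symm, hj'B⟩)
      have := h2.2 j (Finset.mem_erase.2 ⟨hne, hjB⟩)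
      linarith
    have h1 : (ℙ : Measure Ω) (Top B) ≤
        (ℙ : Measure Ω) (⋃ j ∈ (↑B : Set (Fin n)), E j (B.erase j)) := by
      calc (ℙ : Measure Ω) (Top B)
          ≤ (ℙ : Measure Ω) ((⋃ j ∈ (↑B : Set (Fin n)), E j (B.erase j)) ∪ bad) :=
            measure_mono hcover
        _ ≤ (ℙ : Measure Ω) (⋃ j ∈ (↑B : Set (Fin n)), E j (B.erase j)) + (ℙ : Measure Ω) bad :=
            measure_union_le _ _
        _ = _ := by rw [hbad, add_zero]
    have h2 : (ℙ : Measure Ω) (⋃ j ∈ (↑B : Set (Fin n)), E j (B.erase j)) ≤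
        (ℙ : Measure Ω) (Top B) :=
      measure_mono (Set.iUnion₂_subset fun j hj => hsub2 B j (by simpa using hj))
    rw [← measure_biUnion_finset hdisj fun j _ => hEvMeas j (B.erase j)]
    exact le_antisymm h1 h2
  -- real versions
  have hfin : ∀ s : Set Ω, (ℙ : Measure Ω) s ≠ ⊤ := fun s => measure_ne_top _ _
  have claimA' : ∀ B : Finset (Fin n), B ≠ univ →
      ((ℙ : Measure Ω) (Top B)).toReal = ∑ j ∈ Bᶜ, P j B := by
    intro B hB
    rw [claimA B hB, ENNReal.toReal_sum fun j _ => hfin _]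
  have claimB' : ∀ B : Finset (Fin n), B.Nonempty →
      ((ℙ : Measure Ω) (Top B)).toReal = ∑ j ∈ B, P j (B.erase j) := by
    intro B hB
    rw [claimB B hB, ENNReal.toReal_sum fun j _ => hfin _]
  have hTopUniv : ((ℙ : Measure Ω) (Top univ)).toReal = 1 := by
    have : Top univ = Set.univ := by
      ext ω; simp [hTop]
    rw [this, measure_univ, ENNReal.toReal_one]
  -- the key induction
  have key : ∀ m : ℕ, ∀ (j : Fin n) (A : Finset (Fin n)), j ∉ A → A.card = n - 1 - m →
      P j A = 1 / (n * (n - 1).choose A.card) := by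
    intro m
    induction m with
    | zero =>
      intro j A hjA hcard
      have hn : 1 ≤ n := by
        rcases Nat.eq_zero_or_pos n with h | h
        · exact absurd j.2 (by omega)
        · exact h
      simp only [Nat.sub_zero] at hcard
      -- from claimB at univ
      have huniv : (1 : ℝ) = ∑ j' ∈ (univ : Finset (Fin n)), P j' (univ.erase j') := by
        rw [← claimB' univ ⟨j, mem_univ j⟩, hTopUniv]
      have hall : ∀ j' ∈ (univ : Finset (Fin n)), P j' (univ.erase j') = P j A := by
        intro j' _
        exact hconst j A j' (univ.erase j') hjA (notMem_erase _ _)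
          (by rw [Finset.card_erase_of_mem (mem_univ j'), Finset.card_univ, Fintype.card_fin, hcard])
      rw [Finset.sum_congr rfl hall, Finset.sum_const, Finset.card_univ, Fintype.card_fin,
        nsmul_eq_mul] at huniv
      have hchoose : (n - 1).choose A.card = 1 := by rw [hcard, Nat.choose_self]
      rw [hchoose]
      have hn0 : (n : ℝ) ≠ 0 := Nat.cast_ne_zero.2 (by omega)
      field_simp at huniv ⊢
      push_cast at huniv ⊢
      linarith
    | succ m ih =>
      intro j A hjA hcard
      by_cases hm : n - 1 - m = n - 1 - (m + 1)
      · exact ih j A hjA (by omega)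
      have hmn : m + 1 ≤ n - 1 := by omega
      have hk : A.card + 1 = n - 1 - m := by omega
      have hk2 : A.card + 2 ≤ n := by omega
      set B := insert j A with hBdef
      have hBcard : B.card = A.card + 1 := Finset.card_insert_of_notMem hjA
      have hBne : B ≠ univ := by
        intro h
        have := Finset.card_univ (α := Fin n) ▸ h ▸ hBcard
        rw [Fintype.card_fin] at this
        omega
      have hBnonempty : B.Nonempty := ⟨j, mem_insert_self _ _⟩
      -- compute via claim A with IH
      have hA' : ∀ j' ∈ Bᶜ, P j' B = 1 / (n * (n - 1).choose (A.card + 1)) := by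
        intro j' hj'
        have := ih j' B (Finset.mem_compl.1 hj') (by omega)
        rwa [hBcard] at this
      have hTB1 : ((ℙ : Measure Ω) (Top B)).toReal
          = (n - (A.card + 1) : ℕ) * (1 / (n * (n - 1).choose (A.card + 1))) := by
        rw [claimA' B hBne, Finset.sum_congr rfl hA', Finset.sum_const, nsmul_eq_mul,
          Finset.card_compl, Fintype.card_fin, hBcard]
      -- compute via claim B
      have hB' : ∀ j' ∈ B, P j' (B.erase j') = P j A := by
        intro j' hj'
        exact hconst j A j' (B.erase j') hjA (notMem_erase _ _)
          (by rw [Finset.card_erase_of_mem hj', hBcard]; omega)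
      have hTB2 : ((ℙ : Measure Ω) (Top B)).toReal = (A.card + 1 : ℕ) * P j A := by
        rw [claimB' B hBnonempty, Finset.sum_congr rfl hB', Finset.sum_const, nsmul_eq_mul, hBcard]
      -- combine
      have heq : (A.card + 1 : ℕ) * P j A
          = (n - (A.card + 1) : ℕ) * (1 / (n * (n - 1).choose (A.card + 1))) := by
        rw [← hTB2, hTB1]
      have hidn : (A.card + 1) * (n - 1).choose (A.card + 1)
          = (n - (A.card + 1)) * (n - 1).choose A.card := by
        have h := Nat.choose_succ_right_eq (n - 1) A.card
        have h2 : n - 1 - A.card = n - (A.card + 1) := by omega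
        rw [h2] at h
        rw [Nat.mul_comm, h, Nat.mul_comm]
      have hc1 : ((n - 1).choose A.card : ℝ) ≠ 0 :=
        Nat.cast_ne_zero.2 (Nat.choose_pos (show A.card ≤ n - 1 by omega)).ne'
      have hc2 : ((n - 1).choose (A.card + 1) : ℝ) ≠ 0 :=
        Nat.cast_ne_zero.2 (Nat.choose_pos (show A.card + 1 ≤ n - 1 by omega)).ne'
      have hn0 : (n : ℝ) ≠ 0 := Nat.cast_ne_zero.2 (by omega)
      have ha1 : ((A.card : ℝ) + 1) ≠ 0 := by positivity
      set a : ℝ := (A.card : ℝ) with hadef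
      set C0 : ℝ := ((n - 1).choose A.card : ℝ) with hC0
      set C1 : ℝ := ((n - 1).choose (A.card + 1) : ℝ) with hC1
      set N : ℝ := (n : ℝ) with hN
      set D : ℝ := ((n - (A.card + 1) : ℕ) : ℝ) with hD
      have hidR : (a + 1) * C1 = D * C0 := by
        rw [hadef, hC0, hC1, hD]
        exact_mod_cast hidn
      have heq' : (a + 1) * P j A * (N * C1) = D := by
        have h := heq
        push_cast at h
        rw [h]
        field_simp
      rw [eq_div_iff (mul_ne_zero hn0 hc1)]
      have hcancel : ((a + 1) * C1) ≠ 0 := mul_ne_zero ha1 hc2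
      apply mul_right_cancel₀ hcancel
      calc P j A * (N * C0) * ((a + 1) * C1)
          = ((a + 1) * P j A * (N * C1)) * C0 := by ring
        _ = D * C0 := by rw [heq']
        _ = (a + 1) * C1 := hidR.symm
        _ = 1 * ((a + 1) * C1) := by ring
  intro j A hjA
  have hcardle : A.card ≤ n - 1 := by
    have h1 : A.card < n := by
      have := Finset.card_insert_of_notMem hjA
      have := Finset.card_le_univ (insert j A)
      simp only [Finset.card_univ, Fintype.card_fin] at this
      omega
    omega
  exact key (n - 1 - A.card) j A hjA (by omega)
end

section
/- Let n ≥ 2 and suppose q_i(A) > 0 for every i ∈ [n] and every A ⊆ [n]\{i}. Then for a semicoherent structure function φ, the normalized Shannon entropy of the Barlow–Proschan index (I_BP^(1),…,I_BP^(n)) equals 0 if and only if there exists j ∈ [n] such that φ(A) = 1 exactly when j ∈ A (i.e. exactly one component of the system is relevant). -/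
open MeasureTheory ProbabilityTheory Finset
open scoped ENNReal

noncomputable def TlifeBP {Ω : Type*} {n : ℕ} (φ : Finset (Fin n) → ℕ)
    (X : Fin n → Ω → ℝ) (ω : Ω) : EReal :=
  ⨆ (A : Finset (Fin n)) (_ : φ A = 1), ⨅ i ∈ A, (X i ω : EReal)

lemma TlifeBP_eq {Ω : Type*} {n : ℕ} (φ : Finset (Fin n) → ℕ)
    (X : Fin n → Ω → ℝ) (ω : Ω) :
    TlifeBP φ X ω = (Finset.univ.filter fun A => φ A = 1).sup
      (fun A => A.inf fun i => (X i ω : EReal)) := by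
  rw [Finset.sup_eq_iSup]
  simp only [TlifeBP, Finset.inf_eq_iInf, mem_filter, mem_univ, true_and]

lemma TlifeBP_attained {Ω : Type*} {n : ℕ} {φ : Finset (Fin n) → ℕ}
    (hempty : φ ∅ = 0) (hfull : φ Finset.univ = 1)
    (X : Fin n → Ω → ℝ) (ω : Ω) :
    ∃ j, TlifeBP φ X ω = (X j ω : EReal) := by
  rw [TlifeBP_eq]
  set s := Finset.univ.filter fun A => φ A = 1 with hs_def
  have hs : s.Nonempty := ⟨Finset.univ, by simp [hs_def, hfull]⟩
  obtain ⟨A, hA, hAeq⟩ := Finset.exists_mem_eq_sup s hs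
    (fun A => A.inf fun i => (X i ω : EReal))
  have hA1 : φ A = 1 := by simpa [hs_def] using hA
  have hAne : A.Nonempty := by
    rcases A.eq_empty_or_nonempty with h | h
    · rw [h, hempty] at hA1; simp at hA1
    · exact h
  obtain ⟨i, _, hieq⟩ := Finset.exists_mem_eq_inf A hAne fun i => (X i ω : EReal)
  exact ⟨i, by rw [hAeq, hieq]⟩

lemma TlifeBP_ne {Ω : Type*} {n : ℕ} {φ : Finset (Fin n) → ℕ}
    (hmono : ∀ ⦃A B : Finset (Fin n)⦄, A ⊆ B → φ A ≤ φ B)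
    (hempty : φ ∅ = 0) (X : Fin n → Ω → ℝ) {j : Fin n} {A : Finset (Fin n)}
    (hcase : φ A = 1 ∨ φ (insert j A) = 0) (ω : Ω)
    (hω : (∀ l, l ∉ A → l ≠ j → X l ω < X j ω) ∧ ∀ l ∈ A, X j ω < X l ω) :
    TlifeBP φ X ω ≠ (X j ω : EReal) := by
  rcases hcase with hA1 | hA0
  · -- T > X j since T ≥ inf over A > X j
    have hAne : A.Nonempty := by
      rcases A.eq_empty_or_nonempty with h | h
      · rw [h, hempty] at hA1; simp at hA1
      · exact h
    have hlt : (X j ω : EReal) < A.inf fun i => (X i ω : EReal) := by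
      rw [Finset.lt_inf_iff (EReal.coe_lt_top _)]
      intro l hl
      exact EReal.coe_lt_coe_iff.2 (hω.2 l hl)
    have hle : (A.inf fun i => (X i ω : EReal)) ≤ TlifeBP φ X ω := by
      rw [TlifeBP_eq]
      exact Finset.le_sup (Finset.mem_filter.2 ⟨Finset.mem_univ A, hA1⟩)
    exact (lt_of_lt_of_le hlt hle).ne'
  · -- T < X j
    have : TlifeBP φ X ω < (X j ω : EReal) := by
      rw [TlifeBP_eq, Finset.sup_lt_iff (EReal.bot_lt_coe _)]
      intro S hS
      have hS1 : φ S = 1 := by simpa using hS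
      have hnsub : ¬ S ⊆ insert j A := by
        intro hsub
        have := hmono hsub
        omega
      obtain ⟨l, hlS, hlni⟩ := Finset.not_subset.1 hnsub
      have hlj : l ≠ j := fun h => hlni (by simp [h])
      have hlA : l ∉ A := fun h => hlni (by simp [h])
      calc (S.inf fun i => (X i ω : EReal)) ≤ (X l ω : EReal) := Finset.inf_le hlS
        _ < (X j ω : EReal) := EReal.coe_lt_coe_iff.2 (hω.1 l hlA hlj)
    exact this.ne

theorem barlow_proschan_stmt_17
    {Ω : Type*} [MeasureSpace Ω] [IsProbabilityMeasure (ℙ : Measure Ω)]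
    {n : ℕ} (hn : 2 ≤ n) (X : Fin n → Ω → ℝ) (hX : ∀ i, Measurable (X i))
    (hties : ∀ i j : Fin n, i ≠ j → (ℙ : Measure Ω) {ω | X i ω = X j ω} = 0)
    (hqpos : ∀ (i : Fin n) (A : Finset (Fin n)), i ∉ A →
      0 < ((ℙ : Measure Ω) {ω | (∀ l, l ∉ A → l ≠ i → X l ω < X i ω) ∧
          ∀ l ∈ A, X i ω < X l ω}).toReal)
    (φ : Finset (Fin n) → ℕ) (hφ01 : ∀ A, φ A ≤ 1)
    (hmono : ∀ ⦃A B : Finset (Fin n)⦄, A ⊆ B → φ A ≤ φ B)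
    (hempty : φ ∅ = 0) (hfull : φ Finset.univ = 1) :
    (-(1 / Real.log n) * ∑ j : Fin n,
        ((ℙ : Measure Ω) {ω |
            (⨆ (A : Finset (Fin n)) (_ : φ A = 1), ⨅ i ∈ A, (X i ω : EReal))
              = (X j ω : EReal)}).toReal
          * Real.log (((ℙ : Measure Ω) {ω |
              (⨆ (A : Finset (Fin n)) (_ : φ A = 1), ⨅ i ∈ A, (X i ω : EReal))
                = (X j ω : EReal)}).toReal) = 0)
    ↔ ∃ j : Fin n, ∀ A : Finset (Fin n), (φ A = 1 ↔ j ∈ A) := by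
  have hset : ∀ j : Fin n, {ω | (⨆ (A : Finset (Fin n)) (_ : φ A = 1),
      ⨅ i ∈ A, (X i ω : EReal)) = (X j ω : EReal)}
      = {ω | TlifeBP φ X ω = (X j ω : EReal)} := fun j => rfl
  simp only [hset]
  set S : Fin n → Set Ω := fun j => {ω | TlifeBP φ X ω = (X j ω : EReal)} with hS_def
  set p : Fin n → ℝ := fun j => ((ℙ : Measure Ω) (S j)).toReal with hp_def
  have hpnn : ∀ j, 0 ≤ p j := fun j => ENNReal.toReal_nonneg
  have hple : ∀ j, p j ≤ 1 := by
    intro j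
    have h1 : (ℙ : Measure Ω) (S j) ≤ 1 := prob_le_one
    have := ENNReal.toReal_mono (by simp) h1
    simpa using this
  -- sum of probabilities at least 1
  have hUnion : (⋃ j, S j) = Set.univ := by
    ext ω
    simp only [Set.mem_iUnion, Set.mem_univ, iff_true]
    exact TlifeBP_attained hempty hfull X ω
  have hsum1 : 1 ≤ ∑ j, p j := by
    have h1 : (1 : ℝ≥0∞) ≤ ∑ j, (ℙ : Measure Ω) (S j) := by
      calc (1 : ℝ≥0∞) = (ℙ : Measure Ω) (⋃ j, S j) := by rw [hUnion, measure_univ]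
        _ ≤ ∑' j, (ℙ : Measure Ω) (S j) := measure_iUnion_le S
        _ = ∑ j, (ℙ : Measure Ω) (S j) := tsum_fintype _
    have hne : ∀ j ∈ Finset.univ, (ℙ : Measure Ω) (S j) ≠ ⊤ := fun j _ => measure_ne_top _ _
    have h2 := ENNReal.toReal_mono (ENNReal.sum_ne_top.2 hne) h1
    rw [ENNReal.toReal_one, ENNReal.toReal_sum hne] at h2
    exact h2
  -- key lemma: bad structure forces p j < 1
  have key : ∀ (j : Fin n) (A : Finset (Fin n)), j ∉ A →
      (φ A = 1 ∨ φ (insert j A) = 0) → p j < 1 := by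
    intro j A hjA hcase
    set E : Set Ω := {ω | (∀ l, l ∉ A → l ≠ j → X l ω < X j ω) ∧
        ∀ l ∈ A, X j ω < X l ω} with hE_def
    have hEmeas : MeasurableSet E := by
      have h1 : ∀ l m : Fin n, MeasurableSet {ω | X l ω < X m ω} :=
        fun l m => measurableSet_lt (hX l) (hX m)
      have : E = (⋂ l, ⋂ (_ : l ∉ A), ⋂ (_ : l ≠ j), {ω | X l ω < X j ω}) ∩
          (⋂ l, ⋂ (_ : l ∈ A), {ω | X j ω < X l ω}) := by
        ext ω; simp [hE_def, Set.mem_iInter]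
      rw [this]
      exact (MeasurableSet.iInter fun l => .iInter fun _ => .iInter fun _ => h1 l j).inter
        (MeasurableSet.iInter fun l => .iInter fun _ => h1 j l)
    have hdisj : Disjoint (S j) E := by
      rw [Set.disjoint_left]
      intro ω hωS hωE
      exact TlifeBP_ne hmono hempty X hcase ω hωE hωS
    have hsum : (ℙ : Measure Ω) (S j) + (ℙ : Measure Ω) E ≤ 1 := by
      rw [← measure_union hdisj hEmeas]
      exact prob_le_one
    have h2 := ENNReal.toReal_mono (by simp) hsum
    rw [ENNReal.toReal_add (measure_ne_top _ _) (measure_ne_top _ _),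
      ENNReal.toReal_one] at h2
    have hq := hqpos j A hjA
    have : ((ℙ : Measure Ω) E).toReal = ((ℙ : Measure Ω) {ω | (∀ l, l ∉ A → l ≠ j →
        X l ω < X j ω) ∧ ∀ l ∈ A, X j ω < X l ω}).toReal := rfl
    linarith [this ▸ hq]
  constructor
  · -- forward direction
    intro h
    have hlogn : Real.log n ≠ 0 := by
      have : (1 : ℝ) < n := by exact_mod_cast (by omega : 1 < n)
      exact (Real.log_pos this).ne'
    have hfac : -(1 / Real.log n) ≠ 0 := by
      simp [hlogn]
    have hsum0 : ∑ j, p j * Real.log (p j) = 0 := by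
      rcases mul_eq_zero.1 h with h' | h'
      · exact absurd h' hfac
      · exact h'
    have hterm : ∀ j ∈ Finset.univ, p j * Real.log (p j) ≤ 0 := by
      intro j _
      exact mul_nonpos_of_nonneg_of_nonpos (hpnn j)
        (Real.log_nonpos (hpnn j) (hple j))
    have hzero := (Finset.sum_eq_zero_iff_of_nonpos hterm).1 hsum0
    have hdich : ∀ j, p j = 0 ∨ p j = 1 := by
      intro j
      have := hzero j (Finset.mem_univ j)
      rcases mul_eq_zero.1 this with h' | h'
      · exact Or.inl h'
      · rcases Real.log_eq_zero.1 h' with h'' | h'' | h''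
        · exact Or.inl h''
        · exact Or.inr h''
        · exfalso; linarith [hpnn j]
    have hex : ∃ j, p j = 1 := by
      by_contra hc
      push_neg at hc
      have hall0 : ∀ j, p j = 0 := by
        intro j
        rcases hdich j with h' | h'
        · exact h'
        · exact absurd h' (hc j)
      have : (∑ j, p j) = 0 := Finset.sum_eq_zero fun j _ => hall0 j
      linarith
    obtain ⟨j, hj1⟩ := hex
    refine ⟨j, fun A => ⟨fun hA1 => ?_, fun hjA => ?_⟩⟩
    · by_contra hjA
      have := key j A hjA (Or.inl hA1)
      linarith
    · by_contra hA1
      have hA0 : φ A = 0 := by have := hφ01 A; omega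
      have hkey := key j (A.erase j) (Finset.notMem_erase j A)
        (Or.inr (by rwa [Finset.insert_erase hjA]))
      linarith
  · -- backward direction
    rintro ⟨j, hj⟩
    have hT : ∀ ω, TlifeBP φ X ω = (X j ω : EReal) := by
      intro ω
      apply le_antisymm
      · apply iSup₂_le
        intro A hA1
        exact iInf₂_le j ((hj A).1 hA1)
      · have h1 : φ {j} = 1 := (hj {j}).2 (Finset.mem_singleton_self j)
        refine le_iSup₂_of_le {j} h1 ?_
        rw [← Finset.inf_eq_iInf, Finset.inf_singleton]
    have hsum0 : ∑ i, p i * Real.log (p i) = 0 := by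
      apply Finset.sum_eq_zero
      intro i _
      by_cases hij : i = j
      · subst hij
        have : S i = Set.univ := by
          ext ω; simp only [hS_def, Set.mem_setOf_eq, Set.mem_univ, iff_true]
          exact hT ω
        have hp1 : p i = 1 := by rw [hp_def]; simp [this]
        rw [hp1, Real.log_one, mul_zero]
      · have hsub : S i ⊆ {ω | X j ω = X i ω} := by
          intro ω hω
          have h1 : (X j ω : EReal) = (X i ω : EReal) := by
            rw [← hT ω]; exact hω
          exact EReal.coe_eq_coe_iff.1 h1
        have hp0 : p i = 0 := by
          rw [hp_def]
          simp only
          rw [le_antisymm ((measure_mono hsub).trans_eq (hties j i (Ne.symm hij)))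
            (zero_le)]
          simp
        rw [hp0, zero_mul]
    rw [hsum0, mul_zero]
end
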